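/- arXiv:1712.00831 — 8 statements merged into one kernel-verified Lean document; each statement's English description precedes it below -/
import Mathlib

section
/- Let G be a graph on n vertices and let k ≥ 3 and r be integers. Suppose that for every partition of V(G) into k parts U_1, …, U_k, the number of cycles u_1, …, u_k, u_1 with u_i ∈ U_i for all i is at most r. Then the number of (unlabeled) copies of the k-cycle C_k in G is at most (1/2)·k^(k-1)·r. -/
open SimpleGraph
open Fin.CommRing

/-- Number of unlabeled copies of `H` in `G`, i.e. the number of subgraphs of `G`
whose coercion is isomorphic to `H`. -/
noncomputable def copyCount {α β : Type*} (H : SimpleGraph α) (G : SimpleGraph β) : ℕ :=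
  Nat.card {G' : G.Subgraph // Nonempty (H ≃g G'.coe)}

/-- `G` contains no cycle of length `m`. -/
def CycleFree {V : Type*} (G : SimpleGraph V) (m : ℕ) : Prop :=
  ∀ ⦃v : V⦄ (w : G.Walk v v), w.IsCycle → w.length ≠ m

/-- The number of `(U 0, …, U (k-1))`-cycles in `G`. -/
noncomputable def cCount {V : Type*} (G : SimpleGraph V) {k : ℕ} (U : Fin k → Set V) : ℕ :=
  Nat.card {u : Fin k → V // (∀ i, u i ∈ U i) ∧ ∀ i : Fin k, G.Adj (u i) (u ⟨(i.val + 1) % k, Nat.mod_lt _ i.pos⟩)}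

/-- The number of `(U 0, …, U (k-1))`-paths in `G`. -/
noncomputable def pCount {V : Type*} (G : SimpleGraph V) {k : ℕ} (U : Fin k → Set V) : ℕ :=
  Nat.card {u : Fin k → V // (∀ i, u i ∈ U i) ∧
    ∀ (i : ℕ) (h : i + 1 < k), G.Adj (u ⟨i, Nat.lt_of_succ_lt h⟩) (u ⟨i + 1, h⟩)}

/-- The number of edges of `G` between the disjoint sets `X` and `Y`. -/
noncomputable def eCount {V : Type*} (G : SimpleGraph V) (X Y : Set V) : ℕ :=
  Nat.card {p : V × V // p.1 ∈ X ∧ p.2 ∈ Y ∧ G.Adj p.1 p.2}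

/-- The neighbourhood of `v` inside the set `Y`. -/
def nbhdIn {V : Type*} (G : SimpleGraph V) (v : V) (Y : Set V) : Set V :=
  {y ∈ Y | G.Adj v y}

/-- The independence number of a finite graph. -/
noncomputable def indepNum {W : Type*} [Fintype W] (G : SimpleGraph W) : ℕ :=
  sSup {m | ∃ s : Finset W, (∀ a ∈ s, ∀ b ∈ s, ¬ G.Adj a b) ∧ s.card = m}

section Aux
variable (m : ℕ)

noncomputable def dih (a : Fin (m+3)) (s : Bool) : Fin (m+3) ≃ Fin (m+3) :=
  if s then Equiv.addLeft a else Equiv.subLeft a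

lemma dih_apply (a : Fin (m+3)) (s : Bool) (i : Fin (m+3)) :
    dih m a s i = if s then a + i else a - i := by
  cases s <;> simp [dih]

lemma cyc_adj_succ (i : Fin (m+3)) : (cycleGraph (m+3)).Adj i (i+1) := by
  rw [cycleGraph_adj']; right; simp

lemma cyc_adj_iff {i j : Fin (m+3)} :
    (cycleGraph (m+3)).Adj i j ↔ j = i + 1 ∨ i = j + 1 := by
  rw [cycleGraph_adj']
  constructor
  · rintro (h | h)
    · right
      have h1 : i - j = 1 := by apply Fin.ext; simpa using h
      rw [sub_eq_iff_eq_add] at h1; rw [h1]; ring_nf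
    · left
      have h1 : j - i = 1 := by apply Fin.ext; simpa using h
      rw [sub_eq_iff_eq_add] at h1; rw [h1]; ring_nf
  · rintro (rfl | rfl)
    · right; simp
    · left; simp

lemma cyc_adj_dih (a : Fin (m+3)) (s : Bool) {i j : Fin (m+3)} :
    (cycleGraph (m+3)).Adj (dih m a s i) (dih m a s j) ↔ (cycleGraph (m+3)).Adj i j := by
  have h1 : (a + i) - (a + j) = i - j := by ring
  have h2 : (a - i) - (a - j) = j - i := by ring
  cases s <;> simp only [dih_apply] <;> rw [cycleGraph_adj', cycleGraph_adj'] <;>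
    simp [h1, h2] <;> tauto

end Aux

section Aux2
variable {V : Type*} (G : SimpleGraph V) (m : ℕ)

def tupSub (u : Fin (m+3) → V) (hu : ∀ i, G.Adj (u i) (u (i+1))) : G.Subgraph where
  verts := Set.range u
  Adj x y := ∃ i, (x = u i ∧ y = u (i+1)) ∨ (y = u i ∧ x = u (i+1))
  adj_sub := by rintro x y ⟨i, (⟨rfl,rfl⟩|⟨rfl,rfl⟩)⟩
                · exact hu i
                · exact (hu i).symm
  edge_vert := by rintro x y ⟨i, (⟨rfl,-⟩|⟨-,rfl⟩)⟩ <;> exact Set.mem_range_self _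
  symm := ⟨by rintro x y ⟨i, h⟩; exact ⟨i, h.symm⟩⟩

noncomputable def copyTup (c : {G' : G.Subgraph // Nonempty (cycleGraph (m+3) ≃g G'.coe)})
    (a : Fin (m+3)) (s : Bool) : Fin (m+3) → V :=
  fun i => ((Classical.choice c.2) (dih m a s i) : c.1.verts)

lemma copyTup_inj (c : {G' : G.Subgraph // Nonempty (cycleGraph (m+3) ≃g G'.coe)})
    (a : Fin (m+3)) (s : Bool) : Function.Injective (copyTup G m c a s) := by
  apply Function.Injective.comp (g := fun j => ((Classical.choice c.2) j : V))
  · intro x y hxy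
    exact (Classical.choice c.2).injective (Subtype.ext hxy)
  · exact (dih m a s).injective

lemma copyTup_adj (c : {G' : G.Subgraph // Nonempty (cycleGraph (m+3) ≃g G'.coe)})
    (a : Fin (m+3)) (s : Bool) (i : Fin (m+3)) :
    G.Adj (copyTup G m c a s i) (copyTup G m c a s (i+1)) := by
  have h1 : (cycleGraph (m+3)).Adj (dih m a s i) (dih m a s (i+1)) :=
    (cyc_adj_dih m a s).2 (cyc_adj_succ m i)
  have h2 := (Classical.choice c.2).map_adj_iff.2 h1
  exact c.1.adj_sub h2

lemma copyTup_sub_adj (c : {G' : G.Subgraph // Nonempty (cycleGraph (m+3) ≃g G'.coe)})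
    (a : Fin (m+3)) (s : Bool) (x y : V) :
    c.1.Adj x y ↔ ∃ i, (x = copyTup G m c a s i ∧ y = copyTup G m c a s (i+1)) ∨
      (y = copyTup G m c a s i ∧ x = copyTup G m c a s (i+1)) := by
  set φ := Classical.choice c.2 with hφ
  constructor
  · intro hadj
    have hx : x ∈ c.1.verts := hadj.fst_mem
    have hy : y ∈ c.1.verts := hadj.snd_mem
    have hca : (cycleGraph (m+3)).Adj (φ.symm ⟨x, hx⟩) (φ.symm ⟨y, hy⟩) := by
      apply φ.symm.map_adj_iff.2
      exact hadj
    set p := (dih m a s).symm (φ.symm ⟨x, hx⟩) with hp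
    set q := (dih m a s).symm (φ.symm ⟨y, hy⟩) with hq
    have hux : copyTup G m c a s p = x := by simp [copyTup, hp, ← hφ]
    have huy : copyTup G m c a s q = y := by simp [copyTup, hq, ← hφ]
    have hpq : (cycleGraph (m+3)).Adj p q := by
      have := (cyc_adj_dih m a s (i := p) (j := q))
      rw [hp, hq] at this ⊢
      simp only [Equiv.apply_symm_apply] at this
      exact this.1 (by simpa using hca)
    rcases (cyc_adj_iff m).1 hpq with hc | hc
    · exact ⟨p, Or.inl ⟨hux.symm, by rw [← hc, huy]⟩⟩
    · exact ⟨q, Or.inr ⟨huy.symm, by rw [← hc, hux]⟩⟩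
  · rintro ⟨i, (⟨rfl, rfl⟩ | ⟨rfl, rfl⟩)⟩
    · have h1 : (cycleGraph (m+3)).Adj (dih m a s i) (dih m a s (i+1)) :=
        (cyc_adj_dih m a s).2 (cyc_adj_succ m i)
      exact φ.map_adj_iff.2 h1
    · have h1 : (cycleGraph (m+3)).Adj (dih m a s i) (dih m a s (i+1)) :=
        (cyc_adj_dih m a s).2 (cyc_adj_succ m i)
      exact (Subgraph.Adj.symm (φ.map_adj_iff.2 h1))

lemma copyTup_sub (c : {G' : G.Subgraph // Nonempty (cycleGraph (m+3) ≃g G'.coe)})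
    (a : Fin (m+3)) (s : Bool) :
    tupSub G m (copyTup G m c a s) (copyTup_adj G m c a s) = c.1 := by
  apply Subgraph.ext
  · show Set.range (copyTup G m c a s) = c.1.verts
    ext x
    constructor
    · rintro ⟨i, rfl⟩; exact ((Classical.choice c.2) (dih m a s i)).2
    · intro hx
      exact ⟨(dih m a s).symm ((Classical.choice c.2).symm ⟨x, hx⟩), by simp [copyTup]⟩
  · ext x y
    exact (copyTup_sub_adj G m c a s x y).symm

end Aux2

section Aux3
variable {V : Type*} [Fintype V] (G : SimpleGraph V) (m : ℕ)

instance subgraphFinite : Finite G.Subgraph := by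
  have : Function.Injective (fun H : G.Subgraph => (H.verts, H.Adj)) := by
    intro H H' h
    simp only [Prod.mk.injEq] at h
    exact SimpleGraph.Subgraph.ext h.1 h.2
  exact Finite.of_injective _ this

lemma dih_determines {a a' : Fin (m+3)} {s s' : Bool}
    (h : ∀ i, dih m a s i = dih m a' s' i) : a = a' ∧ s = s' := by
  have h0 := h 0
  have h1 := h 1
  simp only [dih_apply] at h0 h1
  have h2 : (2 : Fin (m+3)) ≠ 0 := by simp [Fin.ext_iff, Nat.mod_eq_of_lt (show 2 < m+3 by omega)]
  cases s <;> cases s' <;> simp_all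
  · exact absurd (by linear_combination - h1 : (2 : Fin (m+3)) = 0) h2
  · exact absurd (by linear_combination h1 : (2 : Fin (m+3)) = 0) h2

lemma copy_le_tup :
    Nat.card ({G' : G.Subgraph // Nonempty (cycleGraph (m+3) ≃g G'.coe)} × Fin (m+3) × Bool)
      ≤ Nat.card {u : Fin (m+3) → V // Function.Injective u ∧ ∀ i, G.Adj (u i) (u (i+1))} := by
  apply Nat.card_le_card_of_injective
    (f := fun p => ⟨copyTup G m p.1 p.2.1 p.2.2,
      copyTup_inj G m p.1 p.2.1 p.2.2, copyTup_adj G m p.1 p.2.1 p.2.2⟩)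
  rintro ⟨c, a, s⟩ ⟨c', a', s'⟩ hp
  have hu : copyTup G m c a s = copyTup G m c' a' s' := congrArg Subtype.val hp
  have hc : c.1 = c'.1 := by
    rw [← copyTup_sub G m c a s, ← copyTup_sub G m c' a' s']
    congr 1
  have hcc : c = c' := Subtype.ext hc
  subst hcc
  have hd : ∀ i, dih m a s i = dih m a' s' i := by
    intro i
    have := congrFun hu i
    simp only [copyTup] at this
    exact (Classical.choice c.2).injective (Subtype.ext this)
  obtain ⟨rfl, rfl⟩ := dih_determines m hd
  rfl

end Aux3

section Aux4
variable {V : Type*} [Fintype V] (G : SimpleGraph V) (m : ℕ)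

lemma nat_card_sigma {ι : Type*} [Fintype ι] (f : ι → Type*) [∀ i, Finite (f i)] :
    Nat.card (Σ i, f i) = ∑ i, Nat.card (f i) := by
  letI : ∀ i, Fintype (f i) := fun i => Fintype.ofFinite _
  simp [Nat.card_eq_fintype_card, Fintype.card_sigma]

lemma card_fix (u : Fin (m+3) → V) (hu : Function.Injective u) :
    Nat.card {f : V → Fin (m+3) // ∀ i, f (u i) = i} = (m+3) ^ (Fintype.card V - (m+3)) := by
  classical
  have e : {f : V → Fin (m+3) // ∀ i, f (u i) = i} ≃ (↥(Set.range u)ᶜ → Fin (m+3)) :=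
    { toFun := fun f x => f.1 x.1
      invFun := fun g =>
        ⟨fun v => if h : v ∈ Set.range u then (Set.mem_range.mp h).choose else g ⟨v, h⟩, by
          intro i
          have h : u i ∈ Set.range u := Set.mem_range_self i
          dsimp only
          rw [dif_pos h]
          exact hu (Set.mem_range.mp h).choose_spec⟩
      left_inv := by
        rintro ⟨f, hf⟩
        apply Subtype.ext
        funext v
        dsimp only
        by_cases h : v ∈ Set.range u
        · obtain ⟨i, rfl⟩ := h
          have h' : u i ∈ Set.range u := Set.mem_range_self i
          rw [dif_pos h', hf i]
          exact hu (Set.mem_range.mp h').choose_spec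
        · rw [dif_neg h]
      right_inv := by
        intro g
        funext x
        dsimp only
        rw [dif_neg x.2] }
  rw [Nat.card_congr e, Nat.card_fun]
  have hr : Nat.card ↥(Set.range u) = m + 3 := by
    rw [Nat.card_range_of_injective hu, Nat.card_eq_fintype_card, Fintype.card_fin]
  have hcompl : Nat.card ↥(Set.range u) + Nat.card ↥(Set.range u)ᶜ = Fintype.card V := by
    have := Set.ncard_add_ncard_compl (Set.range u)
    simpa [← Nat.card_coe_set_eq, Set.ncard_univ, Nat.card_eq_fintype_card] using this
  have hc : Nat.card ↥(Set.range u)ᶜ = Fintype.card V - (m+3) := by omega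
  rw [hc, Nat.card_eq_fintype_card, Fintype.card_fin]

abbrev Pair := {p : (Fin (m+3) → V) × (V → Fin (m+3)) //
  (∀ i, p.2 (p.1 i) = i) ∧ ∀ i, G.Adj (p.1 i) (p.1 (i+1))}

lemma pair_card_left :
    Nat.card (Pair G m) =
      Nat.card {u : Fin (m+3) → V // Function.Injective u ∧ ∀ i, G.Adj (u i) (u (i+1))} *
        (m+3) ^ (Fintype.card V - (m+3)) := by
  classical
  have e1 : Pair G m ≃ Σ u : Fin (m+3) → V,
      {f : V → Fin (m+3) // (∀ i, f (u i) = i) ∧ ∀ i, G.Adj (u i) (u (i+1))} :=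
    Equiv.subtypeProdEquivSigmaSubtype (α := Fin (m+3) → V) (β := V → Fin (m+3))
      (fun u f => (∀ i, f (u i) = i) ∧ ∀ i, G.Adj (u i) (u (i+1)))
  rw [Nat.card_congr e1, nat_card_sigma]
  have hfib : ∀ u : Fin (m+3) → V,
      Nat.card {f : V → Fin (m+3) // (∀ i, f (u i) = i) ∧ ∀ i, G.Adj (u i) (u (i+1))} =
        if Function.Injective u ∧ ∀ i, G.Adj (u i) (u (i+1))
          then (m+3) ^ (Fintype.card V - (m+3)) else 0 := by
    intro u
    by_cases hadj : ∀ i, G.Adj (u i) (u (i+1))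
    · by_cases hinj : Function.Injective u
      · rw [if_pos ⟨hinj, hadj⟩,
          Nat.card_congr (Equiv.subtypeEquivRight (fun f => and_iff_left hadj))]
        exact card_fix m u hinj
      · rw [if_neg (by tauto)]
        have : IsEmpty {f : V → Fin (m+3) // (∀ i, f (u i) = i) ∧
            ∀ i, G.Adj (u i) (u (i+1))} := by
          constructor
          rintro ⟨f, hf, -⟩
          exact hinj fun i j hij => by rw [← hf i, ← hf j, hij]
        simp [Nat.card_of_isEmpty]
    · rw [if_neg (by tauto)]
      have : IsEmpty {f : V → Fin (m+3) // (∀ i, f (u i) = i) ∧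
          ∀ i, G.Adj (u i) (u (i+1))} := ⟨fun f => hadj f.2.2⟩
      simp [Nat.card_of_isEmpty]
  simp_rw [hfib]
  rw [Finset.sum_ite, Finset.sum_const, Finset.sum_const_zero, add_zero, smul_eq_mul]
  congr 1
  rw [Nat.card_eq_fintype_card, Fintype.card_subtype]

lemma next_eq (i : Fin (m+3)) :
    (⟨(i.val + 1) % (m+3), Nat.mod_lt _ i.pos⟩ : Fin (m+3)) = i + 1 := by
  apply Fin.ext; simp [Fin.add_def]

lemma pair_card_right {r : ℕ}
    (h : ∀ U : Fin (m+3) → Set V,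
      (∀ i j, i ≠ j → Disjoint (U i) (U j)) → (⋃ i, U i) = Set.univ →
      cCount G U ≤ r) :
    Nat.card (Pair G m) ≤ (m+3) ^ (Fintype.card V) * r := by
  classical
  have e1 : Pair G m ≃ Σ f : V → Fin (m+3),
      {u : Fin (m+3) → V // (∀ i, f (u i) = i) ∧ ∀ i, G.Adj (u i) (u (i+1))} :=
    ((Equiv.prodComm _ _).subtypeEquiv (fun p => by rfl)).trans
      (Equiv.subtypeProdEquivSigmaSubtype (α := V → Fin (m+3)) (β := Fin (m+3) → V)
        (fun f u => (∀ i, f (u i) = i) ∧ ∀ i, G.Adj (u i) (u (i+1))))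
  rw [Nat.card_congr e1, nat_card_sigma]
  have hfib : ∀ f : V → Fin (m+3),
      Nat.card {u : Fin (m+3) → V // (∀ i, f (u i) = i) ∧ ∀ i, G.Adj (u i) (u (i+1))} ≤ r := by
    intro f
    have e2 : {u : Fin (m+3) → V // (∀ i, f (u i) = i) ∧ ∀ i, G.Adj (u i) (u (i+1))} ≃
        {u : Fin (m+3) → V // (∀ i, u i ∈ (fun i => f ⁻¹' {i}) i) ∧
          ∀ i : Fin (m+3), G.Adj (u i) (u ⟨(i.val + 1) % (m+3), Nat.mod_lt _ i.pos⟩)} := by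
      apply Equiv.subtypeEquivRight
      intro u
      simp [next_eq]
    rw [Nat.card_congr e2]
    apply h
    · intro i j hij
      rw [Set.disjoint_left]
      rintro x hx hx'
      simp only [Set.mem_preimage, Set.mem_singleton_iff] at hx hx'
      exact hij (hx ▸ hx')
    · ext x
      simp only [Set.mem_iUnion, Set.mem_preimage, Set.mem_singleton_iff, Set.mem_univ, iff_true]
      exact ⟨f x, rfl⟩
  calc ∑ f : V → Fin (m+3), Nat.card
        {u : Fin (m+3) → V // (∀ i, f (u i) = i) ∧ ∀ i, G.Adj (u i) (u (i+1))}
      ≤ ∑ _f : V → Fin (m+3), r := Finset.sum_le_sum (fun f _ => hfib f)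
    _ = (m+3) ^ (Fintype.card V) * r := by
        rw [Finset.sum_const, smul_eq_mul, Finset.card_univ, Fintype.card_fun]
        simp

end Aux4

theorem stmt0 {V : Type*} [Fintype V] (G : SimpleGraph V) (k r : ℕ) (hk : 3 ≤ k)
    (h : ∀ U : Fin k → Set V,
      (∀ i j, i ≠ j → Disjoint (U i) (U j)) → (⋃ i, U i) = Set.univ →
      cCount G U ≤ r) :
    2 * _root_.copyCount (cycleGraph k) G ≤ k ^ (k - 1) * r := by
  classical
  obtain ⟨m, rfl⟩ : ∃ m, k = m + 3 := ⟨k - 3, by omega⟩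
  set cc := _root_.copyCount (cycleGraph (m+3)) G with hcc
  set N := Nat.card {u : Fin (m+3) → V //
    Function.Injective u ∧ ∀ i, G.Adj (u i) (u (i+1))} with hN
  have h1 : cc * ((m+3) * 2) ≤ N := by
    have h' := copy_le_tup G m
    have h'' : Nat.card (Fin (m+3)) * Nat.card Bool = (m+3) * 2 := by simp
    rw [Nat.card_prod, Nat.card_prod, h''] at h'
    exact h'
  have h2 : N * (m+3) ^ (Fintype.card V - (m+3)) ≤ (m+3) ^ (Fintype.card V) * r := by
    rw [← pair_card_left G m]
    exact pair_card_right G m h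
  by_cases hN0 : N = 0
  · have hc0 : cc = 0 := by
      rw [hN0] at h1
      rcases Nat.mul_eq_zero.mp (Nat.le_zero.mp h1) with h0 | h0
      · exact h0
      · exact absurd h0 (by norm_num)
    rw [hc0]; simp
  · have hne : Nonempty {u : Fin (m+3) → V //
        Function.Injective u ∧ ∀ i, G.Adj (u i) (u (i+1))} := by
      exact (Nat.card_pos_iff.mp (Nat.pos_of_ne_zero hN0)).1
    obtain ⟨⟨u, hu, -⟩⟩ := hne
    have hkn : m + 3 ≤ Fintype.card V := by
      simpa using Fintype.card_le_of_injective u hu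
    have hsplit : (m+3) ^ (Fintype.card V) =
        (m+3) ^ (m+3) * (m+3) ^ (Fintype.card V - (m+3)) := by
      rw [← pow_add]; congr 1; exact (Nat.add_sub_cancel' hkn).symm
    have h3 : N ≤ (m+3)^(m+3) * r := by
      have hpos : 0 < (m+3) ^ (Fintype.card V - (m+3)) := pow_pos (Nat.succ_pos (m+2)) _
      apply Nat.le_of_mul_le_mul_right _ hpos
      calc N * (m+3) ^ (Fintype.card V - (m+3))
          ≤ (m+3)^(Fintype.card V) * r := h2
        _ = ((m+3)^(m+3) * r) * (m+3)^(Fintype.card V - (m+3)) := by rw [hsplit]; ring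
    have h4 : cc * ((m+3)*2) ≤ (m+3)^(m+3) * r := h1.trans h3
    have hpow : (m+3)^(m+3) = (m+3)^(m+2) * (m+3) := by rw [← pow_succ]
    have h5 : (2 * cc) * (m+3) ≤ ((m+3)^(m+2) * r) * (m+3) := by
      calc (2*cc)*(m+3) = cc * ((m+3)*2) := by ring
        _ ≤ (m+3)^(m+3) * r := h4
        _ = ((m+3)^(m+2)*r)*(m+3) := by rw [hpow]; ring
    have h6 := Nat.le_of_mul_le_mul_right h5 (Nat.succ_pos (m+2))
    have he : m + 3 - 1 = m + 2 := rfl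
    rw [he]
    exact h6
end

section
/- Let G be a graph on n vertices and let k ≥ 2 and r be integers. Suppose that for every partition of V(G) into k parts U_1, …, U_k, the number of paths u_1, …, u_k with u_i ∈ U_i for all i is at most r. Then the number of (unlabeled) copies of the path P_{k-1} (the path with k-1 edges, i.e., k vertices) in G is at most (1/2)·k^k·r. -/
open SimpleGraph

/-! ### Auxiliary definitions and lemmas -/

/-- Adjacency-along-a-sequence predicate (matches the one inside `pCount`). -/
def adjP {V : Type*} (G : SimpleGraph V) (k : ℕ) (u : Fin k → V) : Prop :=
  ∀ (i : ℕ) (h : i + 1 < k), G.Adj (u ⟨i, Nat.lt_of_succ_lt h⟩) (u ⟨i + 1, h⟩)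

/-- The reversal automorphism of the path graph. -/
def revIso (k : ℕ) : pathGraph k ≃g pathGraph k where
  toEquiv := Fin.revPerm
  map_rel_iff' := by
    intro i j
    simp only [Fin.revPerm_apply, pathGraph_adj, Fin.val_rev]
    omega

lemma subgraph_adj_iff {V : Type*} {G : SimpleGraph V} {k : ℕ} (G' : G.Subgraph)
    (e : pathGraph k ≃g G'.coe) (x y : V) :
    G'.Adj x y ↔ ∃ i j : Fin k, (pathGraph k).Adj i j ∧ x = ↑(e i) ∧ y = ↑(e j) := by
  constructor
  · intro hxy
    have hx : x ∈ G'.verts := G'.edge_vert hxy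
    have hy : y ∈ G'.verts := G'.edge_vert hxy.symm
    refine ⟨e.symm ⟨x, hx⟩, e.symm ⟨y, hy⟩, ?_, by simp, by simp⟩
    rw [← e.map_adj_iff]
    simp only [RelIso.apply_symm_apply, Subgraph.coe_adj]
    exact hxy
  · rintro ⟨i, j, hij, rfl, rfl⟩
    have := e.map_adj_iff.2 hij
    rwa [Subgraph.coe_adj] at this

lemma subgraph_verts_eq {V : Type*} {G : SimpleGraph V} {k : ℕ} (G' : G.Subgraph)
    (e : pathGraph k ≃g G'.coe) : G'.verts = Set.range (fun i => (↑(e i) : V)) := by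
  ext x
  constructor
  · intro hx; exact ⟨e.symm ⟨x, hx⟩, by simp⟩
  · rintro ⟨i, rfl⟩; exact (e i).2

lemma seq_inj {V : Type*} {G : SimpleGraph V} {k : ℕ} (G' : G.Subgraph)
    (e : pathGraph k ≃g G'.coe) : Function.Injective (fun i => (↑(e i) : V)) :=
  fun _ _ hab => e.injective (Subtype.ext hab)

lemma seq_adjP {V : Type*} {G : SimpleGraph V} {k : ℕ} (G' : G.Subgraph)
    (e : pathGraph k ≃g G'.coe) : adjP G k (fun i => (↑(e i) : V)) := by
  intro i hi
  have hadj : (pathGraph k).Adj ⟨i, Nat.lt_of_succ_lt hi⟩ ⟨i + 1, hi⟩ := by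
    rw [pathGraph_adj]; left; rfl
  have := e.map_adj_iff.2 hadj
  rw [Subgraph.coe_adj] at this
  exact G'.adj_sub this

lemma two_copyCount_le {V : Type*} [Fintype V] {G : SimpleGraph V} {k : ℕ} (hk : 2 ≤ k) :
    2 * _root_.copyCount (pathGraph k) G ≤
      Nat.card {u : Fin k → V // Function.Injective u ∧ adjP G k u} := by
  classical
  set S := {G' : G.Subgraph // Nonempty (pathGraph k ≃g G'.coe)} with hS
  let eOf : Bool → (s : S) → (pathGraph k ≃g s.1.coe) := fun b s =>
    if b then s.2.some else (revIso k).trans s.2.some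
  let Φ : Bool × S → {u : Fin k → V // Function.Injective u ∧ adjP G k u} := fun p =>
    ⟨fun i => ↑(eOf p.1 p.2 i), seq_inj _ _, seq_adjP _ _⟩
  have hΦ : Function.Injective Φ := by
    rintro ⟨b₁, s₁⟩ ⟨b₂, s₂⟩ hp
    have hw : (fun i => (↑(eOf b₁ s₁ i) : V)) = (fun i => (↑(eOf b₂ s₂ i) : V)) :=
      congrArg Subtype.val hp
    have hs : s₁ = s₂ := by
      apply Subtype.ext
      apply SimpleGraph.Subgraph.ext
      · rw [subgraph_verts_eq s₁.1 (eOf b₁ s₁), subgraph_verts_eq s₂.1 (eOf b₂ s₂), hw]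
      · funext x y
        apply propext
        have hw' : ∀ i, (↑(eOf b₁ s₁ i) : V) = ↑(eOf b₂ s₂ i) := fun i => congrFun hw i
        rw [subgraph_adj_iff s₁.1 (eOf b₁ s₁), subgraph_adj_iff s₂.1 (eOf b₂ s₂)]
        simp_rw [hw']
    subst hs
    suffices hb : b₁ = b₂ by rw [hb]
    by_contra hb
    have key : ∀ (i : Fin k), (↑(s₁.2.some i) : V) = ↑(((revIso k).trans s₁.2.some) i) := by
      intro i
      rcases Bool.eq_false_or_eq_true b₁ with h1 | h1 <;>
        rcases Bool.eq_false_or_eq_true b₂ with h2 | h2 <;>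
          simp_all [eOf]
      · exact congrFun hw i
      · exact (congrFun hw i).symm
    have := key ⟨0, by omega⟩
    simp only [RelIso.trans_apply] at this
    have heq : (⟨0, by omega⟩ : Fin k) = (revIso k) ⟨0, by omega⟩ :=
      (s₁.2.some.injective (Subtype.ext this))
    have : ((revIso k) (⟨0, by omega⟩ : Fin k)).val = k - 1 := by
      simp [revIso, Fin.val_rev]
    rw [← heq] at this
    simp at this
    omega
  calc 2 * _root_.copyCount (pathGraph k) G = Nat.card (Bool × S) := by
        rw [Nat.card_prod]; congr 1; simp [Nat.card_eq_fintype_card]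
    _ ≤ _ := Nat.card_le_card_of_injective Φ hΦ

lemma count_fixing {V : Type*} [Fintype V] [DecidableEq V] {k : ℕ} {u : Fin k → V}
    (hu : Function.Injective u) :
    Fintype.card {f : V → Fin k // ∀ i, f (u i) = i} = k ^ (Fintype.card V - k) := by
  classical
  let E : {f : V → Fin k // ∀ i, f (u i) = i} ≃ (((Set.range u)ᶜ : Set V) → Fin k) :=
    { toFun := fun f x => f.1 x
      invFun := fun g => ⟨fun v => if h : v ∈ Set.range u then
          (Equiv.ofInjective u hu).symm ⟨v, h⟩ else g ⟨v, h⟩, by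
        intro i
        simp only [dif_pos (Set.mem_range_self i)]
        exact (Equiv.ofInjective u hu).symm_apply_apply i⟩
      left_inv := fun f => by
        apply Subtype.ext
        funext v
        by_cases h : v ∈ Set.range u
        · obtain ⟨i, rfl⟩ := h
          simp only [dif_pos (Set.mem_range_self i)]
          rw [f.2 i]
          exact (Equiv.ofInjective u hu).symm_apply_apply i
        · simp [h]
      right_inv := fun g => by
        funext x
        exact dif_neg x.2 }
  rw [Fintype.card_congr E, Fintype.card_fun]
  congr 1
  · simp
  · rw [Fintype.card_compl_set, Set.card_range_of_injective hu, Fintype.card_fin]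

theorem stmt1 {V : Type*} [Fintype V] (G : SimpleGraph V) (k r : ℕ) (hk : 2 ≤ k)
    (h : ∀ U : Fin k → Set V,
      (∀ i j, i ≠ j → Disjoint (U i) (U j)) → (⋃ i, U i) = Set.univ →
      pCount G U ≤ r) :
    2 * _root_.copyCount (pathGraph k) G ≤ k ^ k * r := by
  classical
  set n := Fintype.card V with hn
  set A : Finset (Fin k → V) :=
    Finset.univ.filter (fun u => Function.Injective u ∧ adjP G k u) with hA
  have h1 : 2 * _root_.copyCount (pathGraph k) G ≤ A.card := by
    have h0 := two_copyCount_le (G := G) hk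
    rwa [Nat.card_eq_fintype_card, Fintype.card_subtype] at h0
  -- each partition gives at most r
  have hp : ∀ f : V → Fin k,
      (Finset.univ.filter (fun u : Fin k → V => (∀ i, f (u i) = i) ∧ adjP G k u)).card ≤ r := by
    intro f
    calc (Finset.univ.filter (fun u : Fin k → V => (∀ i, f (u i) = i) ∧ adjP G k u)).card
        = Fintype.card {u : Fin k → V // (∀ i, f (u i) = i) ∧ adjP G k u} :=
          (Fintype.card_subtype _).symm
      _ = pCount G (fun i => f ⁻¹' {i}) := by
          rw [pCount, Nat.card_eq_fintype_card]
          apply Fintype.card_congr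
          apply Equiv.subtypeEquivRight
          intro u
          simp [adjP]
      _ ≤ r := by
          apply h
          · intro i j hij
            rw [Set.disjoint_left]
            intro x hxi hxj
            simp only [Set.mem_preimage, Set.mem_singleton_iff] at hxi hxj
            exact hij (hxi ▸ hxj)
          · ext x; simp
  -- per-sequence count of partitions
  have hterm : ∀ u : Fin k → V,
      (Finset.univ.filter (fun f : V → Fin k => (∀ i, f (u i) = i) ∧ adjP G k u)).card
        = if Function.Injective u ∧ adjP G k u then k ^ (n - k) else 0 := by
    intro u
    by_cases hu : Function.Injective u ∧ adjP G k u
    · rw [if_pos hu, ← Fintype.card_subtype]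
      rw [show Fintype.card {f : V → Fin k // (∀ i, f (u i) = i) ∧ adjP G k u}
          = Fintype.card {f : V → Fin k // ∀ i, f (u i) = i} from
        Fintype.card_congr (Equiv.subtypeEquivRight (by intro f; simp [hu.2]))]
      exact count_fixing hu.1
    · rw [if_neg hu, Finset.card_eq_zero, Finset.filter_eq_empty_iff]
      rintro f - ⟨hf, hadj⟩
      exact hu ⟨fun a b hab => by rw [← hf a, ← hf b, hab], hadj⟩
  have hswap : ∑ f : V → Fin k,
      (Finset.univ.filter (fun u : Fin k → V => (∀ i, f (u i) = i) ∧ adjP G k u)).card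
      = ∑ u : Fin k → V,
      (Finset.univ.filter (fun f : V → Fin k => (∀ i, f (u i) = i) ∧ adjP G k u)).card := by
    simp_rw [Finset.card_filter]
    rw [Finset.sum_comm]
  have h2 : A.card * k ^ (n - k) ≤ k ^ n * r := by
    calc A.card * k ^ (n - k)
        = ∑ _u ∈ A, k ^ (n - k) := by rw [Finset.sum_const, smul_eq_mul]
      _ = ∑ u : Fin k → V,
            (if Function.Injective u ∧ adjP G k u then k ^ (n - k) else 0) := by
          rw [hA, Finset.sum_filter]
      _ = ∑ u : Fin k → V,
            (Finset.univ.filter (fun f : V → Fin k => (∀ i, f (u i) = i) ∧ adjP G k u)).card := by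
          simp_rw [hterm]
      _ = ∑ f : V → Fin k,
            (Finset.univ.filter (fun u : Fin k → V => (∀ i, f (u i) = i) ∧ adjP G k u)).card :=
          hswap.symm
      _ ≤ ∑ _f : V → Fin k, r := Finset.sum_le_sum fun f _ => hp f
      _ = k ^ n * r := by
          rw [Finset.sum_const, smul_eq_mul, Finset.card_univ, Fintype.card_fun,
            Fintype.card_fin]
  by_cases hA0 : A.card = 0
  · rw [hA0] at h1
    exact h1.trans (Nat.zero_le _)
  · obtain ⟨u, hu⟩ := Finset.card_pos.mp (Nat.pos_of_ne_zero hA0)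
    have hinj : Function.Injective u := (Finset.mem_filter.mp hu).2.1
    have hkn : k ≤ n := by
      have := Fintype.card_le_of_injective u hinj
      simpa using this
    have hpow : k ^ n = k ^ k * k ^ (n - k) := by
      rw [← pow_add, Nat.add_sub_cancel' hkn]
    have hpos : 0 < k ^ (n - k) :=
      Nat.pow_pos (lt_of_lt_of_le Nat.zero_lt_two hk)
    have hfin : A.card ≤ k ^ k * r := by
      apply Nat.le_of_mul_le_mul_right _ hpos
      calc A.card * k ^ (n - k) ≤ k ^ n * r := h2
        _ = k ^ k * r * k ^ (n - k) := by rw [hpow]; ring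
    exact h1.trans hfin
end

section
/- Let J be a non-empty independent set of the cycle C_{2k+1} with vertices 1,…,2k+1 (edges {1,2},…,{2k,2k+1},{2k+1,1}). Then there exists an independent set I of C_{2k+1} containing J with the following property: if i_1,…,i_r are the elements of I in cyclic order, then for every j, the cyclic distance i_{j+1} − i_j (mod 2k+1) is either 2 or 3, and whenever this distance is 3, at least one of i_j, i_{j+1} belongs to J. -/
open SimpleGraph

theorem stmt2 (k : ℕ) (hk : 2 ≤ k) (J : Set (ZMod (2 * k + 1))) (hJne : J.Nonempty)
    (hJind : ∀ i ∈ J, i + 1 ∉ J) :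
    ∃ I : Set (ZMod (2 * k + 1)), J ⊆ I ∧ (∀ i ∈ I, i + 1 ∉ I) ∧
      ∀ i ∈ I, (i + 2 ∈ I ∨ i + 3 ∈ I) ∧
        ((i + 2 ∉ I ∧ i + 3 ∈ I) → (i ∈ J ∨ i + 3 ∈ J)) := by
  haveI : NeZero (2 * k + 1) := ⟨by omega⟩
  obtain ⟨j0, hj0⟩ := hJne
  have hex : ∀ i : ZMod (2 * k + 1), ∃ t : ℕ, i + (t : ZMod (2 * k + 1)) ∈ J := by
    intro i
    refine ⟨(j0 - i).val, ?_⟩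
    rw [ZMod.natCast_val, ZMod.cast_id]
    convert hj0 using 1
    ring
  classical
  set u : ZMod (2 * k + 1) → ℕ := fun i => Nat.find (hex i) with hu
  have humem : ∀ i, i + ((u i : ℕ) : ZMod (2 * k + 1)) ∈ J := fun i => Nat.find_spec (hex i)
  have hu0 : ∀ i, u i = 0 ↔ i ∈ J := by
    intro i
    constructor
    · intro h
      have := humem i
      rw [h] at this
      simpa using this
    · intro h
      have : i + ((0 : ℕ) : ZMod (2 * k + 1)) ∈ J := by simpa using h
      simpa [hu] using Nat.find_eq_zero (hex i) |>.mpr this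
  have hstep : ∀ i : ZMod (2 * k + 1), i ∉ J → u i = u (i + 1) + 1 := by
    intro i hiJ
    have h1 : 1 ≤ u i := by
      rcases Nat.eq_zero_or_pos (u i) with h | h
      · exact absurd ((hu0 i).mp h) hiJ
      · omega
    have hle1 : u i ≤ u (i + 1) + 1 := by
      apply Nat.find_le
      have hc : i + ((u (i + 1) + 1 : ℕ) : ZMod (2 * k + 1))
          = (i + 1) + ((u (i + 1) : ℕ) : ZMod (2 * k + 1)) := by
        push_cast; ring
      rw [hc]
      exact humem (i + 1)
    have hle2 : u (i + 1) ≤ u i - 1 := by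
      apply Nat.find_le
      have hc : (i + 1) + ((u i - 1 : ℕ) : ZMod (2 * k + 1))
          = i + ((u i : ℕ) : ZMod (2 * k + 1)) := by
        rw [Nat.cast_sub h1]; push_cast; ring
      rw [hc]
      exact humem i
    omega
  clear_value u
  set I : Set (ZMod (2 * k + 1)) := J ∪ {i | u i % 2 = 0 ∧ i - 1 ∉ J} with hI
  have hInotJ : ∀ i, i ∈ I → i ∉ J → u i % 2 = 0 ∧ 2 ≤ u i := by
    intro i hi hiJ
    rcases hi with hi | hi
    · exact absurd hi hiJ
    · have h0 : u i ≠ 0 := fun h => hiJ ((hu0 i).mp h)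
      have h1 : u i % 2 = 0 := hi.1
      exact ⟨h1, by omega⟩
  have hsucc : ∀ i, i ∈ I → i + 1 ∉ J := by
    intro i hi
    by_cases hiJ : i ∈ J
    · exact hJind i hiJ
    · have h2 := hInotJ i hi hiJ
      have hs := hstep i hiJ
      intro hcon
      have h0 := (hu0 (i + 1)).mpr hcon
      omega
  refine ⟨I, Set.subset_union_left, ?_, ?_⟩
  · -- independence
    intro i hi hcon
    have h1J : i + 1 ∉ J := hsucc i hi
    rcases hcon with hc | hc
    · exact h1J hc
    · have hiJ : i ∉ J := by
        have hc2 : i + 1 - 1 ∉ J := hc.2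
        have he : i + 1 - 1 = i := by ring
        rw [he] at hc2
        exact hc2
      have h2 := hInotJ i hi hiJ
      have hs := hstep i hiJ
      rcases hc with ⟨hc1, _⟩
      omega
  · -- main property
    intro i hi
    have h1J : i + 1 ∉ J := hsucc i hi
    by_cases h2J : i + 2 ∈ J
    · exact ⟨Or.inl (Or.inl h2J), fun h => absurd (Or.inl h2J : i + 2 ∈ I) h.1⟩
    · by_cases hp2 : u (i + 2) % 2 = 0
      · have h2I : i + 2 ∈ I := by
          right
          refine ⟨hp2, ?_⟩
          have he : i + 2 - 1 = i + 1 := by ring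
          rw [he]; exact h1J
        exact ⟨Or.inl h2I, fun h => absurd h2I h.1⟩
      · by_cases h3J : i + 3 ∈ J
        · exact ⟨Or.inr (Or.inl h3J), fun _ => Or.inr h3J⟩
        · have hs2 : u (i + 2) = u (i + 2 + 1) + 1 := hstep (i + 2) h2J
          have e3 : i + 2 + 1 = i + 3 := by ring
          rw [e3] at hs2
          have h3I : i + 3 ∈ I := by
            right
            refine ⟨by omega, ?_⟩
            have he : i + 3 - 1 = i + 2 := by ring
            rw [he]; exact h2J
          refine ⟨Or.inr h3I, fun _ => ?_⟩
          left
          by_contra hiJ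
          have hI2 := hInotJ i hi hiJ
          have hsi : u i = u (i + 1) + 1 := hstep i hiJ
          have hsi1 : u (i + 1) = u (i + 1 + 1) + 1 := hstep (i + 1) h1J
          have e2 : i + 1 + 1 = i + 2 := by ring
          rw [e2] at hsi1
          omega
end

section
/- Let s ≥ 2 and λ ≥ 1, let G be an n-vertex graph, and let U_1,…,U_s ⊆ V(G) be pairwise disjoint sets such that e(U_1,U_2) ≤ λ(|U_1|+|U_2|), and for every 1 ≤ i ≤ s−2 and every u_i ∈ U_i we have e(N_{U_{i+1}}(u_i), U_{i+2}) ≤ λ(|N_{U_{i+1}}(u_i)| + |U_{i+2}|). Then the number p(U_1,…,U_s) of paths u_1,…,u_s with u_j ∈ U_j for all j satisfies: p(U_1,…,U_s) ≤ λ^{(s-1)/2} n^{(s-3)/2} (|U_1||U_s| + λn) if s is odd, and p(U_1,…,U_s) ≤ λ^{s/2} n^{s/2 - 1} (|U_1| + |U_2|) if s is even. -/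
open SimpleGraph

open scoped Classical

section Aux
variable {V : Type*} [Fintype V]

lemma nbhdIn_subset (G : SimpleGraph V) (v : V) (Y : Set V) : nbhdIn G v Y ⊆ Y :=
  fun _ h => h.1

lemma pCount_two (G : SimpleGraph V) (U : Fin 2 → Set V) :
    pCount G U = eCount G (U ⟨0, by omega⟩) (U ⟨1, by omega⟩) := by
  apply Nat.card_congr
  refine ⟨fun u => ⟨(u.1 ⟨0, by omega⟩, u.1 ⟨1, by omega⟩), u.2.1 _, u.2.1 _, u.2.2 0 (by omega)⟩,
    fun p => ⟨fun i => if (i : ℕ) = 0 then p.1.1 else p.1.2, ?_, ?_⟩, ?_, ?_⟩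
  · rintro ⟨iv, hi⟩
    match iv, hi with
    | 0, hi => simpa using p.2.1
    | 1, hi => simpa using p.2.2.1
  · intro i h
    match i, h with
    | 0, h => simpa using p.2.2.2
  · intro u
    apply Subtype.ext
    funext i
    rcases i with ⟨iv, hi⟩
    match iv, hi with
    | 0, hi => simp
    | 1, hi => simp
  · intro p
    apply Subtype.ext
    simp

lemma eCount_eq_sum (G : SimpleGraph V) (X Y : Set V) :
    eCount G X Y = ∑ x : X, (nbhdIn G (x : V) Y).ncard := by
  have e : {p : V × V // p.1 ∈ X ∧ p.2 ∈ Y ∧ G.Adj p.1 p.2} ≃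
      Σ x : X, (nbhdIn G (x : V) Y : Set V) :=
    { toFun := fun p => ⟨⟨p.1.1, p.2.1⟩, ⟨p.1.2, p.2.2.1, p.2.2.2⟩⟩
      invFun := fun q => ⟨(q.1.1, q.2.1), q.1.2, q.2.2.1, q.2.2.2⟩
      left_inv := fun p => rfl
      right_inv := fun q => rfl }
  rw [eCount, Nat.card_congr e, Nat.card_eq_fintype_card, Fintype.card_sigma]
  exact Finset.sum_congr rfl fun x _ => by
    rw [← Nat.card_coe_set_eq, Nat.card_eq_fintype_card]

end Aux

section Peel
variable {V : Type*} [Fintype V]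

def peel (G : SimpleGraph V) {k : ℕ} (U : Fin (k + 2) → Set V) (v : V) :
    Fin (k + 1) → Set V :=
  fun i => if (i : ℕ) = 0 then nbhdIn G v (U ⟨1, by omega⟩) else U ⟨(i : ℕ) + 1, by omega⟩

lemma peel_zero (G : SimpleGraph V) {k : ℕ} (U : Fin (k + 2) → Set V) (v : V) (h : 0 < k + 1) :
    peel G U v ⟨0, h⟩ = nbhdIn G v (U ⟨1, by omega⟩) := by simp [peel]

lemma peel_succ (G : SimpleGraph V) {k : ℕ} (U : Fin (k + 2) → Set V) (v : V) (i : ℕ)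
    (h : i + 1 < k + 1) : peel G U v ⟨i + 1, h⟩ = U ⟨i + 2, by omega⟩ := by simp [peel]

lemma peel_subset (G : SimpleGraph V) {k : ℕ} (U : Fin (k + 2) → Set V) (v : V) (i : Fin (k+1)) :
    peel G U v i ⊆ U ⟨(i : ℕ) + 1, by omega⟩ := by
  rcases i with ⟨iv, hi⟩
  match iv, hi with
  | 0, hi => rw [peel_zero]; exact nbhdIn_subset _ _ _
  | iv + 1, hi => rw [peel_succ]

lemma pCount_peel {k : ℕ} (G : SimpleGraph V) (U : Fin (k + 2) → Set V) :
    pCount G U = ∑ v : (U ⟨0, by omega⟩ : Set V), pCount G (peel G U (v : V)) := by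
  have e : {u : Fin (k + 2) → V // (∀ i, u i ∈ U i) ∧
      ∀ (i : ℕ) (h : i + 1 < k + 2), G.Adj (u ⟨i, Nat.lt_of_succ_lt h⟩) (u ⟨i + 1, h⟩)} ≃
      Σ v : (U ⟨0, by omega⟩ : Set V), {u : Fin (k + 1) → V //
        (∀ i, u i ∈ peel G U (v : V) i) ∧
        ∀ (i : ℕ) (h : i + 1 < k + 1), G.Adj (u ⟨i, Nat.lt_of_succ_lt h⟩) (u ⟨i + 1, h⟩)} := by
    refine ⟨fun u => ⟨⟨u.1 ⟨0, by omega⟩, u.2.1 _⟩, Fin.tail u.1, ?_, ?_⟩,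
      fun q => ⟨Fin.cons (q.1 : V) q.2.1, ?_, ?_⟩, ?_, ?_⟩
    · rintro ⟨iv, hi⟩
      match iv, hi with
      | 0, hi =>
        rw [peel_zero]
        exact ⟨u.2.1 ⟨1, by omega⟩, u.2.2 0 (by omega)⟩
      | iv + 1, hi =>
        rw [peel_succ]
        exact u.2.1 ⟨iv + 2, by omega⟩
    · intro i h
      exact u.2.2 (i + 1) (by omega)
    · rintro ⟨iv, hi⟩
      match iv, hi with
      | 0, hi => exact q.1.2
      | iv + 1, hi =>
        have := q.2.2.1 ⟨iv, by omega⟩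
        exact peel_subset G U (q.1 : V) ⟨iv, by omega⟩ this
    · intro i h
      match i, h with
      | 0, h =>
        have := q.2.2.1 ⟨0, by omega⟩
        rw [peel_zero] at this
        exact this.2
      | i + 1, h =>
        exact q.2.2.2 i (by omega)
    · intro u
      apply Subtype.ext
      exact Fin.cons_self_tail u.1
    · rintro ⟨v, q⟩
      refine Sigma.subtype_ext rfl ?_
      funext i
      rfl
  rw [pCount, Nat.card_congr e, Nat.card_eq_fintype_card, Fintype.card_sigma]
  exact Finset.sum_congr rfl fun v _ => by rw [pCount, Nat.card_eq_fintype_card]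

end Peel

section More
variable {V : Type*} [Fintype V]

lemma ncard_eq_card (X : Set V) : X.ncard = Fintype.card X := by
  rw [← Nat.card_coe_set_eq, Nat.card_eq_fintype_card]

lemma eCount_le_prod (G : SimpleGraph V) (X Y : Set V) :
    eCount G X Y ≤ X.ncard * Y.ncard := by
  rw [eCount_eq_sum]
  calc ∑ x : X, (nbhdIn G (x : V) Y).ncard ≤ ∑ _x : X, Y.ncard :=
        Finset.sum_le_sum fun x _ => Set.ncard_le_ncard (nbhdIn_subset _ _ _) Y.toFinite
    _ = X.ncard * Y.ncard := by
        rw [Finset.sum_const, smul_eq_mul, Finset.card_univ, ← ncard_eq_card]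

lemma ncard_two_le (X Y : Set V) (h : Disjoint X Y) : X.ncard + Y.ncard ≤ Fintype.card V := by
  rw [← Set.ncard_union_eq h X.toFinite Y.toFinite]
  calc (X ∪ Y).ncard ≤ (Set.univ : Set V).ncard :=
        Set.ncard_le_ncard (Set.subset_univ _) Set.finite_univ
    _ = Fintype.card V := by rw [Set.ncard_univ, Nat.card_eq_fintype_card]

lemma ncard_three_le (X Y Z : Set V) (hXY : Disjoint X Y) (hXZ : Disjoint X Z)
    (hYZ : Disjoint Y Z) : X.ncard + Y.ncard + Z.ncard ≤ Fintype.card V := by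
  have h1 : Disjoint (X ∪ Y) Z := Set.disjoint_union_left.2 ⟨hXZ, hYZ⟩
  have := ncard_two_le (X ∪ Y) Z h1
  rwa [Set.ncard_union_eq hXY X.toFinite Y.toFinite] at this

end More

section KeyPrep
variable {V : Type*} [Fintype V]

lemma peel_one (G : SimpleGraph V) {k : ℕ} (U : Fin (k + 2) → Set V) (v : V) (h : 1 < k + 1) :
    peel G U v ⟨1, h⟩ = U ⟨2, by omega⟩ := peel_succ G U v 0 h

lemma peel_disjoint (G : SimpleGraph V) {k : ℕ} (U : Fin (k + 2) → Set V) (v : V)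
    (hd : ∀ i j, i ≠ j → Disjoint (U i) (U j)) :
    ∀ i j, i ≠ j → Disjoint (peel G U v i) (peel G U v j) := by
  intro i j hij
  refine Disjoint.mono (peel_subset G U v i) (peel_subset G U v j) (hd _ _ ?_)
  intro hc
  apply hij
  have := congrArg Fin.val hc
  simp only [Fin.val_mk] at this
  exact Fin.ext (by omega)

lemma peel2_zero (G : SimpleGraph V) {k : ℕ} (U : Fin (k + 3) → Set V) (v w : V)
    (h : 0 < k + 1) :
    peel G (peel G U v) w ⟨0, h⟩ = nbhdIn G w (U ⟨2, by omega⟩) := by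
  rw [peel_zero, peel_one]

lemma peel2_succ (G : SimpleGraph V) {k : ℕ} (U : Fin (k + 3) → Set V) (v w : V) (i : ℕ)
    (h : i + 1 < k + 1) :
    peel G (peel G U v) w ⟨i + 1, h⟩ = U ⟨i + 3, by omega⟩ := by
  rw [peel_succ]
  exact peel_succ G U v (i + 1) (by omega)

lemma peel2_succ' (G : SimpleGraph V) {k : ℕ} (U : Fin (k + 3) → Set V) (v w : V) (i : ℕ)
    (h : i + 2 < k + 1) :
    peel G (peel G U v) w ⟨i + 2, h⟩ = U ⟨i + 4, by omega⟩ := peel2_succ G U v w (i+1) h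

lemma peel2_subset (G : SimpleGraph V) {k : ℕ} (U : Fin (k + 3) → Set V) (v w : V)
    (i : Fin (k + 1)) : peel G (peel G U v) w i ⊆ U ⟨(i : ℕ) + 2, by omega⟩ := by
  refine (peel_subset G (peel G U v) w i).trans ?_
  exact peel_subset G U v ⟨(i : ℕ) + 1, by omega⟩

lemma ncard_le_n (X : Set V) : X.ncard ≤ Fintype.card V := by
  calc X.ncard ≤ (Set.univ : Set V).ncard := Set.ncard_le_ncard (Set.subset_univ _) Set.finite_univ
    _ = Fintype.card V := by rw [Set.ncard_univ, Nat.card_eq_fintype_card]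

lemma sum_const_subtype (X : Set V) (r : ℝ) : ∑ _x : X, r = (X.ncard : ℝ) * r := by
  rw [Finset.sum_const, Finset.card_univ, ← ncard_eq_card, nsmul_eq_mul]

lemma eCount_cast_sum (G : SimpleGraph V) (X Y : Set V) :
    (eCount G X Y : ℝ) = ∑ x : X, ((nbhdIn G (x : V) Y).ncard : ℝ) := by
  rw [eCount_eq_sum, Nat.cast_sum]

end KeyPrep

section Key
variable {V : Type*} [Fintype V]

set_option maxHeartbeats 3200000 in
lemma key (n : ℕ) (hn : Fintype.card V = n) (lam : ℝ) (hlam : 1 ≤ lam) (G : SimpleGraph V) :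
    ∀ (s : ℕ) (hs : s ≥ 2) (U : Fin s → Set V)
      (hdisj : ∀ i j, i ≠ j → Disjoint (U i) (U j))
      (h12 : (eCount G (U ⟨0, by omega⟩) (U ⟨1, by omega⟩) : ℝ) ≤
        lam * ((U ⟨0, by omega⟩).ncard + (U ⟨1, by omega⟩).ncard))
      (hnb : ∀ (i : ℕ) (h : s > i + 2), ∀ u ∈ U ⟨i, by omega⟩,
        (eCount G (nbhdIn G u (U ⟨i + 1, by omega⟩)) (U ⟨i + 2, h⟩) : ℝ) ≤
          lam * ((nbhdIn G u (U ⟨i + 1, by omega⟩)).ncard + (U ⟨i + 2, h⟩).ncard)),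
      (Odd s → (pCount G U : ℝ) ≤ lam ^ ((s - 1) / 2) * (n : ℝ) ^ ((s - 3) / 2) *
          ((U ⟨0, by omega⟩).ncard * (U ⟨s - 1, by omega⟩).ncard + lam * n)) ∧
      (Even s → (pCount G U : ℝ) ≤ lam ^ (s / 2) * (n : ℝ) ^ (s / 2 - 1) *
          ((U ⟨0, by omega⟩).ncard + (U ⟨1, by omega⟩).ncard)) := by
  intro s
  induction s using Nat.strong_induction_on with
  | _ s IH =>
  intro hs U hdisj h12 hnb
  obtain ⟨m, rfl⟩ : ∃ m, s = m + 2 := ⟨s - 2, by omega⟩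
  have hn0 : (0 : ℝ) ≤ (n : ℝ) := Nat.cast_nonneg n
  have hlam0 : (0 : ℝ) ≤ lam := le_trans zero_le_one hlam
  have hcV : ((Fintype.card V : ℕ) : ℝ) = (n : ℝ) := by rw [hn]
  rcases Nat.lt_or_ge m 2 with hm | hm
  · interval_cases m
    · -- s = 2
      refine ⟨fun hodd => absurd hodd (by decide), fun _ => ?_⟩
      rw [pCount_two G U]
      calc (eCount G (U ⟨0, by omega⟩) (U ⟨1, by omega⟩) : ℝ) ≤
            lam * ((U ⟨0, by omega⟩).ncard + (U ⟨1, by omega⟩).ncard) := h12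
        _ = lam ^ ((0+2) / 2) * (n : ℝ) ^ ((0+2) / 2 - 1) *
            ((U ⟨0, by omega⟩).ncard + (U ⟨1, by omega⟩).ncard) := by norm_num
    · -- s = 3
      refine ⟨fun _ => ?_, fun heven => absurd heven (by decide)⟩
      have hab : ((U ⟨0, by omega⟩).ncard : ℝ) + (U ⟨1, by omega⟩).ncard ≤ n := by
        have := ncard_two_le (U ⟨0, by omega⟩) (U ⟨1, by omega⟩)
          (hdisj _ _ (by simp [Fin.ext_iff]))
        rw [hn] at this
        exact_mod_cast this
      have hcast1 : (pCount G U : ℝ) =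
          ∑ v : (U ⟨0, by omega⟩ : Set V), (pCount G (peel G U (v : V)) : ℝ) := by
        rw [pCount_peel G U, Nat.cast_sum]
      have hptwo : ∀ v : (U ⟨0, by omega⟩ : Set V), (pCount G (peel G U (v : V)) : ℝ) =
          (eCount G (nbhdIn G (v : V) (U ⟨1, by omega⟩)) (U ⟨2, by omega⟩) : ℝ) := by
        intro v
        rw [pCount_two G (peel G U (v : V)), peel_zero, peel_one]
      calc (pCount G U : ℝ)
          = ∑ v : (U ⟨0, by omega⟩ : Set V), (pCount G (peel G U (v : V)) : ℝ) := hcast1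
        _ ≤ ∑ v : (U ⟨0, by omega⟩ : Set V),
            lam * (((nbhdIn G (v : V) (U ⟨1, by omega⟩)).ncard : ℝ) +
              ((U ⟨2, by omega⟩).ncard : ℝ)) := by
            refine Finset.sum_le_sum fun v _ => ?_
            rw [hptwo v]
            exact hnb 0 (by omega) (v : V) v.2
        _ = lam * (((eCount G (U ⟨0, by omega⟩) (U ⟨1, by omega⟩) : ℝ)) +
            ((U ⟨0, by omega⟩).ncard : ℝ) * ((U ⟨2, by omega⟩).ncard : ℝ)) := by
            have hexp : ∀ x : ℝ, lam * (x + ((U ⟨2, by omega⟩).ncard : ℝ)) =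
                lam * x + lam * ((U ⟨2, by omega⟩).ncard : ℝ) := fun x => by ring
            simp only [hexp]
            rw [Finset.sum_add_distrib, ← Finset.mul_sum, sum_const_subtype,
              ← eCount_cast_sum]
            ring
        _ ≤ lam ^ ((1+2-1) / 2) * (n : ℝ) ^ ((1+2-3) / 2) *
            (((U ⟨0, by omega⟩).ncard : ℝ) * ((U ⟨1+2-1, by omega⟩).ncard : ℝ) + lam * n) := by
            have h2 : ((U ⟨1+2-1, by omega⟩ : Set V).ncard : ℝ) =
              ((U ⟨2, by omega⟩ : Set V).ncard : ℝ) := rfl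
            rw [h2, show ((1+2-1)/2 : ℕ) = 1 from rfl, show ((1+2-3)/2 : ℕ) = 0 from rfl,
              pow_one, pow_zero, mul_one]
            nlinarith [mul_le_mul_of_nonneg_left h12 hlam0,
              mul_le_mul_of_nonneg_left hab (mul_nonneg hlam0 hlam0)]
  · obtain ⟨t, rfl⟩ : ∃ t, m = t + 2 := ⟨m - 2, by omega⟩
    have hmemw : ∀ (v : (U ⟨0, by omega⟩ : Set V)) (w : (peel G U (v : V) ⟨0, by omega⟩ : Set V)),
        (w : V) ∈ U ⟨1, by omega⟩ :=
      fun v w => peel_subset G U (v : V) ⟨0, by omega⟩ w.2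
    have hIH : ∀ (v : (U ⟨0, by omega⟩ : Set V)) (w : (peel G U (v : V) ⟨0, by omega⟩ : Set V)),
        (Odd (t + 2) → (pCount G (peel G (peel G U (v : V)) (w : V)) : ℝ) ≤
            lam ^ ((t + 2 - 1) / 2) * (n : ℝ) ^ ((t + 2 - 3) / 2) *
              (((nbhdIn G (w : V) (U ⟨2, by omega⟩)).ncard : ℝ) *
                ((U ⟨t + 2 + 2 - 1, by omega⟩).ncard : ℝ) + lam * n)) ∧
        (Even (t + 2) → (pCount G (peel G (peel G U (v : V)) (w : V)) : ℝ) ≤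
            lam ^ ((t + 2) / 2) * (n : ℝ) ^ ((t + 2) / 2 - 1) *
              (((nbhdIn G (w : V) (U ⟨2, by omega⟩)).ncard : ℝ) +
                ((U ⟨3, by omega⟩).ncard : ℝ))) := by
      intro v w
      have hz : peel G (peel G U (v : V)) (w : V) ⟨0, by omega⟩ =
          nbhdIn G (w : V) (U ⟨2, by omega⟩) := peel2_zero G U (v : V) (w : V) (by omega)
      have ho : peel G (peel G U (v : V)) (w : V) ⟨1, by omega⟩ = U ⟨3, by omega⟩ :=
        peel2_succ G U (v : V) (w : V) 0 (by omega)
      have hl : peel G (peel G U (v : V)) (w : V) ⟨t + 2 - 1, by omega⟩ =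
          U ⟨t + 2 + 2 - 1, by omega⟩ := peel2_succ G U (v : V) (w : V) t (by omega)
      have h := IH (t + 2) (by omega) (by omega) (peel G (peel G U (v : V)) (w : V))
        (peel_disjoint G _ _ (peel_disjoint G U (v : V) hdisj))
        (by rw [hz, ho]; exact hnb 1 (by omega) (w : V) (hmemw v w))
        (by
          intro i h u hu
          have hu' : u ∈ U ⟨i + 2, by omega⟩ :=
            peel2_subset G U (v : V) (w : V) ⟨i, by omega⟩ hu
          rcases i with _ | i
          · rw [peel2_succ, peel2_succ']
            exact hnb 2 (by omega) u hu'
          · rw [peel2_succ, peel2_succ']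
            exact hnb (i + 3) (by omega) u hu')
      constructor
      · intro hodd
        have h1 := h.1 hodd
        rwa [hz, hl] at h1
      · intro heven
        have h1 := h.2 heven
        rwa [hz, ho] at h1
    have ha0 : (0 : ℝ) ≤ ((U ⟨0, by omega⟩ : Set V).ncard : ℝ) := Nat.cast_nonneg _
    have hb0 : (0 : ℝ) ≤ ((U ⟨1, by omega⟩ : Set V).ncard : ℝ) := Nat.cast_nonneg _
    have hc0 : (0 : ℝ) ≤ ((U ⟨2, by omega⟩ : Set V).ncard : ℝ) := Nat.cast_nonneg _
    have hd0 : (0 : ℝ) ≤ ((U ⟨3, by omega⟩ : Set V).ncard : ℝ) := Nat.cast_nonneg _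
    have he2 : (eCount G (U ⟨0, by omega⟩) (U ⟨1, by omega⟩) : ℝ) ≤
        ((U ⟨0, by omega⟩ : Set V).ncard : ℝ) * ((U ⟨1, by omega⟩ : Set V).ncard : ℝ) := by
      exact_mod_cast eCount_le_prod G (U ⟨0, by omega⟩) (U ⟨1, by omega⟩)
    have hab : ((U ⟨0, by omega⟩ : Set V).ncard : ℝ) + ((U ⟨1, by omega⟩ : Set V).ncard : ℝ) ≤ n := by
      have := ncard_two_le (U ⟨0, by omega⟩) (U ⟨1, by omega⟩)
        (hdisj _ _ (Fin.ne_of_val_ne (by norm_num)))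
      rw [hn] at this
      exact_mod_cast this
    have hcast1 : (pCount G U : ℝ) =
        ∑ v : (U ⟨0, by omega⟩ : Set V), (pCount G (peel G U (v : V)) : ℝ) := by
      rw [pCount_peel G U, Nat.cast_sum]
    have hcast2 : ∀ v : (U ⟨0, by omega⟩ : Set V), (pCount G (peel G U (v : V)) : ℝ) =
        ∑ w : (peel G U (v : V) ⟨0, by omega⟩ : Set V),
          (pCount G (peel G (peel G U (v : V)) (w : V)) : ℝ) := by
      intro v
      rw [pCount_peel G (peel G U (v : V)), Nat.cast_sum]
    have hys : ∑ v : (U ⟨0, by omega⟩ : Set V),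
        ((nbhdIn G (v : V) (U ⟨1, by omega⟩)).ncard : ℝ) =
        (eCount G (U ⟨0, by omega⟩) (U ⟨1, by omega⟩) : ℝ) := (eCount_cast_sum G _ _).symm
    have hXv : ∀ v : (U ⟨0, by omega⟩ : Set V), peel G U (v : V) ⟨0, by omega⟩ =
        nbhdIn G (v : V) (U ⟨1, by omega⟩) := fun v => peel_zero G U (v : V) (by omega)
    refine ⟨fun hodd => ?_, fun heven => ?_⟩
    · -- odd case
      have ht : t % 2 = 1 := by rcases hodd with ⟨j, hj⟩; omega
      have hodd' : Odd (t + 2) := by rcases hodd with ⟨j, hj⟩; exact ⟨j - 1, by omega⟩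
      have hL0 : (0 : ℝ) ≤ ((U ⟨t + 2 + 2 - 1, by omega⟩ : Set V).ncard : ℝ) := Nat.cast_nonneg _
      have hK2 : (0 : ℝ) ≤ lam ^ ((t + 2 - 1) / 2) * (n : ℝ) ^ ((t + 2 - 3) / 2) := by positivity
      have hbc : ((U ⟨1, by omega⟩ : Set V).ncard : ℝ) + ((U ⟨2, by omega⟩ : Set V).ncard : ℝ) ≤ n := by
        have := ncard_two_le (U ⟨1, by omega⟩) (U ⟨2, by omega⟩)
          (hdisj _ _ (Fin.ne_of_val_ne (by norm_num)))
        rw [hn] at this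
        exact_mod_cast this
      have bound2 : ∀ v : (U ⟨0, by omega⟩ : Set V),
          ∑ w : (peel G U (v : V) ⟨0, by omega⟩ : Set V),
            (pCount G (peel G (peel G U (v : V)) (w : V)) : ℝ) ≤
          lam ^ ((t + 2 - 1) / 2) * (n : ℝ) ^ ((t + 2 - 3) / 2) *
            (lam * (((nbhdIn G (v : V) (U ⟨1, by omega⟩)).ncard : ℝ) +
                ((U ⟨2, by omega⟩ : Set V).ncard : ℝ)) *
              ((U ⟨t + 2 + 2 - 1, by omega⟩ : Set V).ncard : ℝ) +
              lam * (n : ℝ) * ((nbhdIn G (v : V) (U ⟨1, by omega⟩)).ncard : ℝ)) := by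
        intro v
        calc ∑ w : (peel G U (v : V) ⟨0, by omega⟩ : Set V),
              (pCount G (peel G (peel G U (v : V)) (w : V)) : ℝ)
            ≤ ∑ w : (peel G U (v : V) ⟨0, by omega⟩ : Set V),
              lam ^ ((t + 2 - 1) / 2) * (n : ℝ) ^ ((t + 2 - 3) / 2) *
                (((nbhdIn G (w : V) (U ⟨2, by omega⟩)).ncard : ℝ) *
                  ((U ⟨t + 2 + 2 - 1, by omega⟩ : Set V).ncard : ℝ) + lam * n) :=
            Finset.sum_le_sum fun w _ => (hIH v w).1 hodd'
          _ = lam ^ ((t + 2 - 1) / 2) * (n : ℝ) ^ ((t + 2 - 3) / 2) *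
              ((eCount G (peel G U (v : V) ⟨0, by omega⟩) (U ⟨2, by omega⟩) : ℝ) *
                ((U ⟨t + 2 + 2 - 1, by omega⟩ : Set V).ncard : ℝ) +
                lam * (n : ℝ) * ((peel G U (v : V) ⟨0, by omega⟩ : Set V).ncard : ℝ)) := by
              have hexp : ∀ x : ℝ, lam ^ ((t + 2 - 1) / 2) * (n : ℝ) ^ ((t + 2 - 3) / 2) *
                  (x * ((U ⟨t + 2 + 2 - 1, by omega⟩ : Set V).ncard : ℝ) + lam * n) =
                  (lam ^ ((t + 2 - 1) / 2) * (n : ℝ) ^ ((t + 2 - 3) / 2) *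
                    ((U ⟨t + 2 + 2 - 1, by omega⟩ : Set V).ncard : ℝ)) * x +
                  lam ^ ((t + 2 - 1) / 2) * (n : ℝ) ^ ((t + 2 - 3) / 2) * (lam * n) :=
                fun x => by ring
              simp only [hexp]
              rw [Finset.sum_add_distrib, ← Finset.mul_sum, sum_const_subtype,
                ← eCount_cast_sum]
              ring
          _ ≤ _ := by
              rw [hXv v]
              have h0 := hnb 0 (by omega) (v : V) v.2
              exact mul_le_mul_of_nonneg_left
                (add_le_add_left (mul_le_mul_of_nonneg_right h0 hL0) _) hK2
      calc (pCount G U : ℝ)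
          = ∑ v : (U ⟨0, by omega⟩ : Set V), (pCount G (peel G U (v : V)) : ℝ) := hcast1
        _ = ∑ v : (U ⟨0, by omega⟩ : Set V),
            ∑ w : (peel G U (v : V) ⟨0, by omega⟩ : Set V),
              (pCount G (peel G (peel G U (v : V)) (w : V)) : ℝ) :=
            Finset.sum_congr rfl fun v _ => hcast2 v
        _ ≤ ∑ v : (U ⟨0, by omega⟩ : Set V),
            lam ^ ((t + 2 - 1) / 2) * (n : ℝ) ^ ((t + 2 - 3) / 2) *
              (lam * (((nbhdIn G (v : V) (U ⟨1, by omega⟩)).ncard : ℝ) +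
                  ((U ⟨2, by omega⟩ : Set V).ncard : ℝ)) *
                ((U ⟨t + 2 + 2 - 1, by omega⟩ : Set V).ncard : ℝ) +
                lam * (n : ℝ) * ((nbhdIn G (v : V) (U ⟨1, by omega⟩)).ncard : ℝ)) :=
            Finset.sum_le_sum fun v _ => bound2 v
        _ = lam ^ ((t + 2 - 1) / 2) * (n : ℝ) ^ ((t + 2 - 3) / 2) *
            (lam * ((eCount G (U ⟨0, by omega⟩) (U ⟨1, by omega⟩) : ℝ) +
                ((U ⟨0, by omega⟩ : Set V).ncard : ℝ) * ((U ⟨2, by omega⟩ : Set V).ncard : ℝ)) *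
              ((U ⟨t + 2 + 2 - 1, by omega⟩ : Set V).ncard : ℝ) +
              lam * (n : ℝ) * (eCount G (U ⟨0, by omega⟩) (U ⟨1, by omega⟩) : ℝ)) := by
            have hexp : ∀ x : ℝ, lam ^ ((t + 2 - 1) / 2) * (n : ℝ) ^ ((t + 2 - 3) / 2) *
                (lam * (x + ((U ⟨2, by omega⟩ : Set V).ncard : ℝ)) *
                  ((U ⟨t + 2 + 2 - 1, by omega⟩ : Set V).ncard : ℝ) + lam * (n : ℝ) * x) =
                (lam ^ ((t + 2 - 1) / 2) * (n : ℝ) ^ ((t + 2 - 3) / 2) * lam *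
                    ((U ⟨t + 2 + 2 - 1, by omega⟩ : Set V).ncard : ℝ) +
                  lam ^ ((t + 2 - 1) / 2) * (n : ℝ) ^ ((t + 2 - 3) / 2) * lam * (n : ℝ)) * x +
                lam ^ ((t + 2 - 1) / 2) * (n : ℝ) ^ ((t + 2 - 3) / 2) * lam *
                  ((U ⟨2, by omega⟩ : Set V).ncard : ℝ) *
                  ((U ⟨t + 2 + 2 - 1, by omega⟩ : Set V).ncard : ℝ) := fun x => by ring
            simp only [hexp]
            rw [Finset.sum_add_distrib, ← Finset.mul_sum, sum_const_subtype, hys]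
            ring
        _ ≤ lam ^ ((t + 2 + 2 - 1) / 2) * (n : ℝ) ^ ((t + 2 + 2 - 3) / 2) *
            (((U ⟨0, by omega⟩ : Set V).ncard : ℝ) *
              ((U ⟨t + 2 + 2 - 1, by omega⟩ : Set V).ncard : ℝ) + lam * n) := by
            rw [show (t + 2 + 2 - 1) / 2 = (t + 2 - 1) / 2 + 1 by omega,
              show (t + 2 + 2 - 3) / 2 = (t + 2 - 3) / 2 + 1 by omega, pow_succ, pow_succ]
            have hinner : lam * ((eCount G (U ⟨0, by omega⟩) (U ⟨1, by omega⟩) : ℝ) +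
                ((U ⟨0, by omega⟩ : Set V).ncard : ℝ) * ((U ⟨2, by omega⟩ : Set V).ncard : ℝ)) *
                  ((U ⟨t + 2 + 2 - 1, by omega⟩ : Set V).ncard : ℝ) +
                lam * (n : ℝ) * (eCount G (U ⟨0, by omega⟩) (U ⟨1, by omega⟩) : ℝ) ≤
                lam * (n : ℝ) * (((U ⟨0, by omega⟩ : Set V).ncard : ℝ) *
                  ((U ⟨t + 2 + 2 - 1, by omega⟩ : Set V).ncard : ℝ) + lam * (n : ℝ)) := by
              nlinarith [mul_le_mul_of_nonneg_left (mul_le_mul_of_nonneg_right he2 hL0) hlam0,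
                mul_le_mul_of_nonneg_left
                  (mul_le_mul_of_nonneg_left hbc (mul_nonneg ha0 hL0)) hlam0,
                mul_le_mul_of_nonneg_left (mul_le_mul_of_nonneg_left h12 hn0) hlam0,
                mul_le_mul_of_nonneg_left
                  (mul_le_mul_of_nonneg_left hab (mul_nonneg hlam0 hn0)) hlam0]
            calc lam ^ ((t + 2 - 1) / 2) * (n : ℝ) ^ ((t + 2 - 3) / 2) *
                (lam * ((eCount G (U ⟨0, by omega⟩) (U ⟨1, by omega⟩) : ℝ) +
                    ((U ⟨0, by omega⟩ : Set V).ncard : ℝ) *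
                      ((U ⟨2, by omega⟩ : Set V).ncard : ℝ)) *
                  ((U ⟨t + 2 + 2 - 1, by omega⟩ : Set V).ncard : ℝ) +
                  lam * (n : ℝ) * (eCount G (U ⟨0, by omega⟩) (U ⟨1, by omega⟩) : ℝ))
                ≤ lam ^ ((t + 2 - 1) / 2) * (n : ℝ) ^ ((t + 2 - 3) / 2) *
                  (lam * (n : ℝ) * (((U ⟨0, by omega⟩ : Set V).ncard : ℝ) *
                    ((U ⟨t + 2 + 2 - 1, by omega⟩ : Set V).ncard : ℝ) + lam * (n : ℝ))) :=
                mul_le_mul_of_nonneg_left hinner hK2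
              _ = lam ^ ((t + 2 - 1) / 2) * lam * ((n : ℝ) ^ ((t + 2 - 3) / 2) * (n : ℝ)) *
                  (((U ⟨0, by omega⟩ : Set V).ncard : ℝ) *
                    ((U ⟨t + 2 + 2 - 1, by omega⟩ : Set V).ncard : ℝ) + lam * (n : ℝ)) := by
                ring
    · -- even case
      have heven' : Even (t + 2) := by rcases heven with ⟨j, hj⟩; exact ⟨j - 1, by omega⟩
      have hK : (0 : ℝ) ≤ lam ^ ((t + 2) / 2) * (n : ℝ) ^ ((t + 2) / 2 - 1) := by positivity
      have hbcd : ((U ⟨1, by omega⟩ : Set V).ncard : ℝ) + ((U ⟨2, by omega⟩ : Set V).ncard : ℝ) +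
          ((U ⟨3, by omega⟩ : Set V).ncard : ℝ) ≤ n := by
        have := ncard_three_le (U ⟨1, by omega⟩) (U ⟨2, by omega⟩) (U ⟨3, by omega⟩)
          (hdisj _ _ (Fin.ne_of_val_ne (by norm_num)))
          (hdisj _ _ (Fin.ne_of_val_ne (by norm_num)))
          (hdisj _ _ (Fin.ne_of_val_ne (by norm_num)))
        rw [hn] at this
        exact_mod_cast this
      have bound2 : ∀ v : (U ⟨0, by omega⟩ : Set V),
          ∑ w : (peel G U (v : V) ⟨0, by omega⟩ : Set V),
            (pCount G (peel G (peel G U (v : V)) (w : V)) : ℝ) ≤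
          lam ^ ((t + 2) / 2) * (n : ℝ) ^ ((t + 2) / 2 - 1) *
            (lam * (((nbhdIn G (v : V) (U ⟨1, by omega⟩)).ncard : ℝ) +
                ((U ⟨2, by omega⟩ : Set V).ncard : ℝ)) +
              ((nbhdIn G (v : V) (U ⟨1, by omega⟩)).ncard : ℝ) *
                ((U ⟨3, by omega⟩ : Set V).ncard : ℝ)) := by
        intro v
        calc ∑ w : (peel G U (v : V) ⟨0, by omega⟩ : Set V),
              (pCount G (peel G (peel G U (v : V)) (w : V)) : ℝ)
            ≤ ∑ w : (peel G U (v : V) ⟨0, by omega⟩ : Set V),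
              lam ^ ((t + 2) / 2) * (n : ℝ) ^ ((t + 2) / 2 - 1) *
                (((nbhdIn G (w : V) (U ⟨2, by omega⟩)).ncard : ℝ) +
                  ((U ⟨3, by omega⟩ : Set V).ncard : ℝ)) :=
            Finset.sum_le_sum fun w _ => (hIH v w).2 heven'
          _ = lam ^ ((t + 2) / 2) * (n : ℝ) ^ ((t + 2) / 2 - 1) *
              ((eCount G (peel G U (v : V) ⟨0, by omega⟩) (U ⟨2, by omega⟩) : ℝ) +
                ((peel G U (v : V) ⟨0, by omega⟩ : Set V).ncard : ℝ) *
                  ((U ⟨3, by omega⟩ : Set V).ncard : ℝ)) := by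
              have hexp : ∀ x : ℝ, lam ^ ((t + 2) / 2) * (n : ℝ) ^ ((t + 2) / 2 - 1) *
                  (x + ((U ⟨3, by omega⟩ : Set V).ncard : ℝ)) =
                  lam ^ ((t + 2) / 2) * (n : ℝ) ^ ((t + 2) / 2 - 1) * x +
                  lam ^ ((t + 2) / 2) * (n : ℝ) ^ ((t + 2) / 2 - 1) *
                    ((U ⟨3, by omega⟩ : Set V).ncard : ℝ) := fun x => by ring
              simp only [hexp]
              rw [Finset.sum_add_distrib, ← Finset.mul_sum, sum_const_subtype,
                ← eCount_cast_sum]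
              ring
          _ ≤ _ := by
              rw [hXv v]
              have h0 := hnb 0 (by omega) (v : V) v.2
              exact mul_le_mul_of_nonneg_left (add_le_add_left h0 _) hK
      calc (pCount G U : ℝ)
          = ∑ v : (U ⟨0, by omega⟩ : Set V), (pCount G (peel G U (v : V)) : ℝ) := hcast1
        _ = ∑ v : (U ⟨0, by omega⟩ : Set V),
            ∑ w : (peel G U (v : V) ⟨0, by omega⟩ : Set V),
              (pCount G (peel G (peel G U (v : V)) (w : V)) : ℝ) :=
            Finset.sum_congr rfl fun v _ => hcast2 v
        _ ≤ ∑ v : (U ⟨0, by omega⟩ : Set V),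
            lam ^ ((t + 2) / 2) * (n : ℝ) ^ ((t + 2) / 2 - 1) *
              (lam * (((nbhdIn G (v : V) (U ⟨1, by omega⟩)).ncard : ℝ) +
                  ((U ⟨2, by omega⟩ : Set V).ncard : ℝ)) +
                ((nbhdIn G (v : V) (U ⟨1, by omega⟩)).ncard : ℝ) *
                  ((U ⟨3, by omega⟩ : Set V).ncard : ℝ)) :=
            Finset.sum_le_sum fun v _ => bound2 v
        _ = lam ^ ((t + 2) / 2) * (n : ℝ) ^ ((t + 2) / 2 - 1) *
            (lam * ((eCount G (U ⟨0, by omega⟩) (U ⟨1, by omega⟩) : ℝ) +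
                ((U ⟨0, by omega⟩ : Set V).ncard : ℝ) * ((U ⟨2, by omega⟩ : Set V).ncard : ℝ)) +
              (eCount G (U ⟨0, by omega⟩) (U ⟨1, by omega⟩) : ℝ) *
                ((U ⟨3, by omega⟩ : Set V).ncard : ℝ)) := by
            have hexp : ∀ x : ℝ, lam ^ ((t + 2) / 2) * (n : ℝ) ^ ((t + 2) / 2 - 1) *
                (lam * (x + ((U ⟨2, by omega⟩ : Set V).ncard : ℝ)) +
                  x * ((U ⟨3, by omega⟩ : Set V).ncard : ℝ)) =
                (lam ^ ((t + 2) / 2) * (n : ℝ) ^ ((t + 2) / 2 - 1) * lam +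
                  lam ^ ((t + 2) / 2) * (n : ℝ) ^ ((t + 2) / 2 - 1) *
                    ((U ⟨3, by omega⟩ : Set V).ncard : ℝ)) * x +
                lam ^ ((t + 2) / 2) * (n : ℝ) ^ ((t + 2) / 2 - 1) * lam *
                  ((U ⟨2, by omega⟩ : Set V).ncard : ℝ) := fun x => by ring
            simp only [hexp]
            rw [Finset.sum_add_distrib, ← Finset.mul_sum, sum_const_subtype, hys]
            ring
        _ ≤ lam ^ ((t + 2 + 2) / 2) * (n : ℝ) ^ ((t + 2 + 2) / 2 - 1) *
            (((U ⟨0, by omega⟩ : Set V).ncard : ℝ) + ((U ⟨1, by omega⟩ : Set V).ncard : ℝ)) := by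
            rw [show (t + 2 + 2) / 2 - 1 = ((t + 2) / 2 - 1) + 1 by omega,
              show (t + 2 + 2) / 2 = (t + 2) / 2 + 1 by omega, pow_succ, pow_succ]
            have hinner : lam * ((eCount G (U ⟨0, by omega⟩) (U ⟨1, by omega⟩) : ℝ) +
                ((U ⟨0, by omega⟩ : Set V).ncard : ℝ) * ((U ⟨2, by omega⟩ : Set V).ncard : ℝ)) +
                (eCount G (U ⟨0, by omega⟩) (U ⟨1, by omega⟩) : ℝ) *
                  ((U ⟨3, by omega⟩ : Set V).ncard : ℝ) ≤
                lam * (n : ℝ) * (((U ⟨0, by omega⟩ : Set V).ncard : ℝ) +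
                  ((U ⟨1, by omega⟩ : Set V).ncard : ℝ)) := by
              nlinarith [mul_le_mul_of_nonneg_left he2 hlam0,
                mul_le_mul_of_nonneg_right h12 hd0,
                mul_le_mul_of_nonneg_left hbcd (mul_nonneg hlam0 (add_nonneg ha0 hb0)),
                mul_nonneg (mul_nonneg hlam0 hb0) hb0,
                mul_nonneg (mul_nonneg hlam0 hb0) hc0,
                mul_nonneg (mul_nonneg hlam0 hb0) hd0]
            calc lam ^ ((t + 2) / 2) * (n : ℝ) ^ ((t + 2) / 2 - 1) *
                (lam * ((eCount G (U ⟨0, by omega⟩) (U ⟨1, by omega⟩) : ℝ) +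
                    ((U ⟨0, by omega⟩ : Set V).ncard : ℝ) *
                      ((U ⟨2, by omega⟩ : Set V).ncard : ℝ)) +
                  (eCount G (U ⟨0, by omega⟩) (U ⟨1, by omega⟩) : ℝ) *
                    ((U ⟨3, by omega⟩ : Set V).ncard : ℝ))
                ≤ lam ^ ((t + 2) / 2) * (n : ℝ) ^ ((t + 2) / 2 - 1) *
                  (lam * (n : ℝ) * (((U ⟨0, by omega⟩ : Set V).ncard : ℝ) +
                    ((U ⟨1, by omega⟩ : Set V).ncard : ℝ))) :=
                mul_le_mul_of_nonneg_left hinner hK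
              _ = lam ^ ((t + 2) / 2) * lam * ((n : ℝ) ^ ((t + 2) / 2 - 1) * (n : ℝ)) *
                  (((U ⟨0, by omega⟩ : Set V).ncard : ℝ) +
                    ((U ⟨1, by omega⟩ : Set V).ncard : ℝ)) := by
                ring


end Key


theorem stmt4 {V : Type*} [Fintype V] (n s : ℕ) (hn : Fintype.card V = n) (hs : 2 ≤ s)
    (lam : ℝ) (hlam : 1 ≤ lam) (G : SimpleGraph V) (U : Fin s → Set V)
    (hdisj : ∀ i j, i ≠ j → Disjoint (U i) (U j))
    (h12 : (eCount G (U ⟨0, by omega⟩) (U ⟨1, by omega⟩) : ℝ) ≤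
      lam * ((U ⟨0, by omega⟩).ncard + (U ⟨1, by omega⟩).ncard))
    (hnb : ∀ (i : ℕ) (h : i + 2 < s), ∀ u ∈ U ⟨i, by omega⟩,
      (eCount G (nbhdIn G u (U ⟨i + 1, by omega⟩)) (U ⟨i + 2, h⟩) : ℝ) ≤
        lam * ((nbhdIn G u (U ⟨i + 1, by omega⟩)).ncard + (U ⟨i + 2, h⟩).ncard)) :
    (Odd s → (pCount G U : ℝ) ≤ lam ^ ((s - 1) / 2) * (n : ℝ) ^ ((s - 3) / 2) *
        ((U ⟨0, by omega⟩).ncard * (U ⟨s - 1, by omega⟩).ncard + lam * n)) ∧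
    (Even s → (pCount G U : ℝ) ≤ lam ^ (s / 2) * (n : ℝ) ^ (s / 2 - 1) *
        ((U ⟨0, by omega⟩).ncard + (U ⟨1, by omega⟩).ncard)) := by
  exact key n hn lam hlam G s hs U hdisj h12 hnb
end

section
/- Let s, ℓ ≥ 2, let G be an n-vertex graph with no cycle of length 2ℓ, let {u_0}, U_1, …, U_s ⊆ V(G) be pairwise disjoint vertex sets, and suppose u_0 is adjacent to every vertex of U_1. Then p(U_1,…,U_s) ≤ (ℓ−1)^{(s−1)/2} n^{(s−3)/2} (|U_1||U_s| + (ℓ−1)n) if s is odd, and p(U_1,…,U_s) ≤ (ℓ−1)^{s/2} n^{s/2−1} (|U_1|+|U_2|) if s is even. -/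
open SimpleGraph

section Aux

variable {V : Type*} [Fintype V] [DecidableEq V] (G : SimpleGraph V) [DecidableRel G.Adj]

/-- Greedy construction of a long alternating path. -/
lemma exists_path (l : ℕ) (A B : Finset V) (hdisj : Disjoint A B)
    (hA : ∀ a ∈ A, l ≤ (B.filter (G.Adj a ·)).card)
    (hB : ∀ b ∈ B, l ≤ (A.filter (G.Adj b ·)).card)
    (a0 : V) (ha0 : a0 ∈ A) :
    ∀ m, m ≤ l - 1 → ∃ (c : V) (p : G.Walk a0 c), c ∈ A ∧ p.IsPath ∧ p.length = 2*m ∧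
      (∀ v ∈ p.support, v ∈ A ∪ B) ∧
      (p.support.toFinset ∩ A).card ≤ m + 1 ∧ (p.support.toFinset ∩ B).card ≤ m := by
  intro m
  induction m with
  | zero =>
    intro _
    refine ⟨a0, Walk.nil, ha0, Walk.IsPath.nil, rfl, ?_, ?_, ?_⟩
    · intro v hv; simp at hv; subst hv; exact Finset.mem_union_left _ ha0
    · simp only [Walk.support_nil]
      have h := Finset.card_le_card
        (Finset.inter_subset_left : [a0].toFinset ∩ A ⊆ [a0].toFinset)
      simpa using h
    · have : ([a0].toFinset ∩ B) = ∅ := by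
        apply Finset.eq_empty_of_forall_notMem
        intro x hx
        simp at hx
        exact (Finset.disjoint_left.mp hdisj (hx.1 ▸ ha0)) hx.2
      simp only [Walk.support_nil, this, Finset.card_empty, le_refl]
  | succ m ih =>
    intro hm
    obtain ⟨c, p, hc, hp, hlen, hsup, hcA, hcB⟩ := ih (by omega)
    have hfresh1 : ∃ b ∈ B.filter (G.Adj c ·), b ∉ p.support := by
      by_contra hcon
      push_neg at hcon
      have hsub : B.filter (G.Adj c ·) ⊆ p.support.toFinset ∩ B := fun b hb =>
        Finset.mem_inter.mpr ⟨List.mem_toFinset.mpr (hcon b hb), (Finset.mem_filter.mp hb).1⟩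
      have h1 := Finset.card_le_card hsub
      have h2 := hA c hc
      omega
    obtain ⟨b, hbB, hbns⟩ := hfresh1
    rw [Finset.mem_filter] at hbB
    have hbA : b ∉ A := fun h => Finset.disjoint_left.mp hdisj h hbB.1
    have hfresh2 : ∃ a ∈ A.filter (G.Adj b ·), a ∉ p.support := by
      by_contra hcon
      push_neg at hcon
      have hsub : A.filter (G.Adj b ·) ⊆ p.support.toFinset ∩ A := fun a ha =>
        Finset.mem_inter.mpr ⟨List.mem_toFinset.mpr (hcon a ha), (Finset.mem_filter.mp ha).1⟩
      have h1 := Finset.card_le_card hsub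
      have h2 := hB b hbB.1
      omega
    obtain ⟨a, haA, hans⟩ := hfresh2
    rw [Finset.mem_filter] at haA
    have hab : a ≠ b := fun h => hbA (h ▸ haA.1)
    have haB : a ∉ B := fun h => Finset.disjoint_left.mp hdisj haA.1 h
    have hTF : ((p.support.concat b).concat a).toFinset
        = insert a (insert b p.support.toFinset) := by
      ext x
      simp [List.concat_eq_append]
      tauto
    refine ⟨a, (p.concat hbB.2).concat haA.2, haA.1, ?_, ?_, ?_, ?_, ?_⟩
    · rw [Walk.isPath_def, Walk.support_concat, Walk.support_concat,
        List.append_assoc]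
      rw [List.nodup_append]
      refine ⟨hp.support_nodup, by simp [Ne.symm hab], ?_⟩
      intro x hx y hy hxy
      subst hxy
      simp at hy
      rcases hy with rfl | rfl
      · exact hbns hx
      · exact hans hx
    · simp only [Walk.length_concat, hlen]; omega
    · intro v hv
      rw [Walk.support_concat, Walk.support_concat] at hv
      rw [List.append_assoc] at hv
      rcases List.mem_append.mp hv with h | h
      · exact hsup v h
      · simp at h
        rcases h with rfl | rfl
        · exact Finset.mem_union_right _ hbB.1
        · exact Finset.mem_union_left _ haA.1
    · rw [Walk.support_concat, Walk.support_concat, ← List.concat_eq_append, ← List.concat_eq_append, hTF]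
      have step : insert a (insert b p.support.toFinset) ∩ A
          ⊆ insert a (p.support.toFinset ∩ A) := by
        intro x hx; simp at hx ⊢
        rcases hx.1 with rfl | rfl | h
        · exact Or.inl rfl
        · exact absurd hx.2 hbA
        · exact Or.inr ⟨h, hx.2⟩
      have h1 := Finset.card_le_card step
      have h2 := Finset.card_insert_le a (p.support.toFinset ∩ A)
      omega
    · rw [Walk.support_concat, Walk.support_concat, ← List.concat_eq_append, ← List.concat_eq_append, hTF]
      have step : insert a (insert b p.support.toFinset) ∩ B
          ⊆ insert b (p.support.toFinset ∩ B) := by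
        intro x hx; simp at hx ⊢
        rcases hx.1 with rfl | rfl | h
        · exact absurd hx.2 haB
        · exact Or.inl rfl
        · exact Or.inr ⟨h, hx.2⟩
      have h1 := Finset.card_le_card step
      have h2 := Finset.card_insert_le b (p.support.toFinset ∩ B)
      omega

set_option linter.unusedSectionVars false

/-- Core edge bound: if every vertex of `A` is adjacent to the hub `u0` and `G` has no
cycle of length `2l`, then the number of edges between `A` and `B` is at most
`(l-1)*(|A|+|B|)`. -/
lemma edge_bound (l : ℕ) (hl : 2 ≤ l) (hfree : CycleFree G (2*l)) (u0 : V) :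
    ∀ N (A B : Finset V), A.card + B.card ≤ N → Disjoint A B → u0 ∉ A → u0 ∉ B →
    (∀ a ∈ A, G.Adj u0 a) →
    ∑ a ∈ A, (B.filter (G.Adj a ·)).card ≤ (l-1) * (A.card + B.card) := by
  intro N
  induction N with
  | zero =>
    intro A B hN _ _ _ _
    have : A = ∅ := Finset.card_eq_zero.mp (by omega)
    simp [this]
  | succ N ihN =>
    intro A B hN hdisj hu0A hu0B hadj
    by_cases hA0 : A = ∅
    · simp [hA0]
    -- Case 1 : some a ∈ A with few neighbours in B
    by_cases h1 : ∃ a ∈ A, (B.filter (G.Adj a ·)).card ≤ l - 1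
    · obtain ⟨a, haA, hdeg⟩ := h1
      have hsplit : ∑ x ∈ A, (B.filter (G.Adj x ·)).card
          = (B.filter (G.Adj a ·)).card + ∑ x ∈ A.erase a, (B.filter (G.Adj x ·)).card :=
        (Finset.add_sum_erase A _ haA).symm
      have hcard : (A.erase a).card = A.card - 1 := Finset.card_erase_of_mem haA
      have hrec := ihN (A.erase a) B (by have := Finset.card_pos.mpr ⟨a, haA⟩; omega)
        (hdisj.mono_left (Finset.erase_subset a A))
        (fun h => hu0A (Finset.mem_of_mem_erase h)) hu0B
        (fun x hx => hadj x (Finset.mem_of_mem_erase hx))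
      have hpos := Finset.card_pos.mpr ⟨a, haA⟩
      have e1 : A.card + B.card = ((A.card - 1) + B.card) + 1 := by omega
      rw [e1, Nat.mul_add, Nat.mul_one, hsplit]
      rw [hcard] at hrec
      omega
    push_neg at h1
    -- Case 2 : some b ∈ B with few neighbours in A
    by_cases h2 : ∃ b ∈ B, (A.filter (G.Adj b ·)).card ≤ l - 1
    · obtain ⟨b, hbB, hdeg⟩ := h2
      have hkey : ∀ x ∈ A, (B.filter (G.Adj x ·)).card
          = ((B.erase b).filter (G.Adj x ·)).card + (if G.Adj x b then 1 else 0) := by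
        intro x hx
        by_cases hadjxb : G.Adj x b
        · rw [if_pos hadjxb]
          have : B.filter (G.Adj x ·) = insert b ((B.erase b).filter (G.Adj x ·)) := by
            ext y
            simp [Finset.mem_filter, Finset.mem_erase]
            constructor
            · rintro ⟨hy, hy2⟩
              by_cases hyb : y = b
              · exact Or.inl hyb
              · exact Or.inr ⟨⟨hyb, hy⟩, hy2⟩
            · rintro (rfl | ⟨⟨_, hy⟩, hy2⟩)
              · exact ⟨hbB, hadjxb⟩
              · exact ⟨hy, hy2⟩
          rw [this, Finset.card_insert_of_notMem (by simp [Finset.mem_filter])]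
        · rw [if_neg hadjxb]
          congr 1
          ext y
          simp only [Finset.mem_filter, Finset.mem_erase]
          constructor
          · rintro ⟨hy, hy2⟩
            exact ⟨⟨fun h => hadjxb (h ▸ hy2), hy⟩, hy2⟩
          · rintro ⟨⟨_, hy⟩, hy2⟩
            exact ⟨hy, hy2⟩
      have hsum : ∑ x ∈ A, (B.filter (G.Adj x ·)).card
          = ∑ x ∈ A, ((B.erase b).filter (G.Adj x ·)).card
            + ∑ x ∈ A, (if G.Adj x b then 1 else 0) := by
        rw [← Finset.sum_add_distrib]
        exact Finset.sum_congr rfl hkey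
      have hind : ∑ x ∈ A, (if G.Adj x b then 1 else 0) = (A.filter (G.Adj b ·)).card := by
        rw [Finset.card_filter]
        exact Finset.sum_congr rfl (fun x _ => by simp [G.adj_comm])
      have hbpos := Finset.card_pos.mpr ⟨b, hbB⟩
      have hcard : (B.erase b).card = B.card - 1 := Finset.card_erase_of_mem hbB
      have hrec := ihN A (B.erase b) (by omega)
        (hdisj.mono_right (Finset.erase_subset b B)) hu0A
        (fun h => hu0B (Finset.mem_of_mem_erase h)) hadj
      rw [hcard] at hrec
      have e2 : A.card + B.card = (A.card + (B.card - 1)) + 1 := by omega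
      rw [e2, Nat.mul_add, Nat.mul_one, hsum, hind]
      omega
    push_neg at h2
    -- Case 3 : min degree ≥ l on both sides : build a 2l-cycle, contradiction
    exfalso
    obtain ⟨a0, ha0⟩ := Finset.nonempty_iff_ne_empty.mpr hA0
    have hAdeg : ∀ a ∈ A, l ≤ (B.filter (G.Adj a ·)).card := fun a ha => by
      have := h1 a ha; omega
    have hBdeg : ∀ b ∈ B, l ≤ (A.filter (G.Adj b ·)).card := fun b hb => by
      have := h2 b hb; omega
    obtain ⟨c, p, hcA, hp, hplen, hpsup, -, -⟩ :=
      exists_path G l A B hdisj hAdeg hBdeg a0 ha0 (l-1) le_rfl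
    have hu0sup : u0 ∉ p.support := by
      intro h
      rcases Finset.mem_union.mp (hpsup u0 h) with h' | h'
      · exact hu0A h'
      · exact hu0B h'
    have hac : a0 ≠ c := by
      rintro rfl
      have := (Walk.isPath_iff_eq_nil (p := p)).mp hp
      rw [this] at hplen
      simp at hplen
      omega
    have hcu0 : G.Adj c u0 := (hadj c hcA).symm
    have hq : (p.concat hcu0).IsPath := by
      rw [Walk.isPath_def, Walk.support_concat, List.nodup_append]
      exact ⟨hp.support_nodup, List.nodup_singleton u0,
        fun x hx y hy hxy => by subst hxy; simp at hy; subst hy; exact hu0sup hx⟩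
    have hcyc : (Walk.cons (hadj a0 ha0) (p.concat hcu0)).IsCycle := by
      rw [Walk.cons_isCycle_iff]
      refine ⟨hq, ?_⟩
      rw [Walk.edges_concat, List.concat_eq_append]
      intro hmem
      rcases List.mem_append.mp hmem with h | h
      · exact hu0sup (Walk.fst_mem_support_of_mem_edges p h)
      · simp only [List.mem_singleton, Sym2.eq, Sym2.rel_iff', Prod.mk.injEq, Prod.swap_prod_mk] at h
        rcases h with ⟨rfl, rfl⟩ | ⟨h1, h2⟩
        · exact hu0A hcA
        · exact hac h2
    exact hfree _ hcyc (by simp [Walk.length_concat, hplen]; omega)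



/-- Finset of `U`-paths. -/
noncomputable def PFin {k : ℕ} (U : Fin k → Finset V) : Finset (Fin k → V) := by
  classical
  exact Finset.univ.filter (fun u => (∀ i, u i ∈ U i) ∧
    ∀ (i : ℕ) (h : i + 1 < k), G.Adj (u ⟨i, Nat.lt_of_succ_lt h⟩) (u ⟨i + 1, h⟩))

lemma mem_PFin {k : ℕ} {U : Fin k → Finset V} (u : Fin k → V) :
    u ∈ PFin G U ↔ ((∀ i, u i ∈ U i) ∧
      ∀ (i : ℕ) (h : i + 1 < k), G.Adj (u ⟨i, Nat.lt_of_succ_lt h⟩) (u ⟨i + 1, h⟩)) := by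
  simp [PFin]

lemma PFin_zero (U : Fin 0 → Finset V) : (PFin G U).card = 1 := by
  have : PFin G U = Finset.univ := by
    ext u
    simp only [mem_PFin, Finset.mem_univ, iff_true]
    exact ⟨fun i => i.elim0, fun i h => by omega⟩
  rw [this, Finset.card_univ]
  simp

lemma PFin_one (U : Fin 1 → Finset V) : (PFin G U).card = (U 0).card := by
  apply Finset.card_bij (fun u _ => u 0)
  · intro u hu
    exact ((mem_PFin G u).mp hu).1 0
  · intro u hu v hv h
    funext i
    rw [Subsingleton.elim i 0]
    exact h
  · intro a ha
    refine ⟨fun _ => a, (mem_PFin G _).mpr ⟨fun i => ?_, fun i h => by omega⟩, rfl⟩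
    rw [Subsingleton.elim i 0]; exact ha

/-- Peeling off the first two vertices of a path. -/
lemma peel_s6 (k : ℕ) (U : Fin (k + 2) → Finset V) :
    (PFin G U).card ≤ ∑ b ∈ U 1, ((U 0).filter (G.Adj b ·)).card *
      (PFin G (fun i : Fin k => if (i : ℕ) = 0
        then (U ⟨(i : ℕ) + 2, by omega⟩).filter (G.Adj b ·)
        else U ⟨(i : ℕ) + 2, by omega⟩)).card := by
  classical
  set W : V → Fin k → Finset V := fun b i => if (i : ℕ) = 0
        then (U ⟨(i : ℕ) + 2, by omega⟩).filter (G.Adj b ·)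
        else U ⟨(i : ℕ) + 2, by omega⟩ with hW
  have hTcard : ∑ b ∈ U 1, ((U 0).filter (G.Adj b ·)).card * (PFin G (W b)).card
      = ((U 1).sigma (fun b => ((U 0).filter (G.Adj b ·)) ×ˢ PFin G (W b))).card := by
    rw [Finset.card_sigma]
    exact Finset.sum_congr rfl (fun b _ => (Finset.card_product _ _).symm)
  rw [hTcard]
  apply Finset.card_le_card_of_injOn
    (fun u => ⟨u 1, (u 0, fun i => u ⟨(i : ℕ) + 2, by omega⟩)⟩)
  · intro u hu
    obtain ⟨hmem, hchain⟩ := (mem_PFin G u).mp hu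
    rw [Finset.mem_coe, Finset.mem_sigma]
    refine ⟨hmem 1, ?_⟩
    rw [Finset.mem_product]
    constructor
    · rw [Finset.mem_filter]
      refine ⟨hmem 0, ?_⟩
      have h0 := hchain 0 (by omega)
      have e0 : (⟨0, by omega⟩ : Fin (k+2)) = 0 := rfl
      have e1 : (⟨1, by omega⟩ : Fin (k+2)) = 1 := rfl
      rw [e0, e1] at h0
      exact h0.symm
    · rw [mem_PFin]
      constructor
      · intro i
        by_cases hi : (i : ℕ) = 0
        · simp only [hW, hi, if_pos]
          rw [Finset.mem_filter]
          refine ⟨hmem _, ?_⟩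
          have h1 := hchain 1 (by omega)
          convert h1 using 2 <;> simp [Fin.ext_iff]
        · simp only [hW, hi, if_neg, ite_false]
          exact hmem _
      · intro i h
        have hc := hchain (i + 2) (by omega)
        convert hc using 2 <;> simp [Fin.ext_iff]
  · intro u hu v hv h
    simp only [Sigma.mk.inj_iff, Prod.mk.injEq, heq_iff_eq] at h
    obtain ⟨h1, h0, ht⟩ := h
    funext j
    rcases Nat.lt_or_ge (j : ℕ) 2 with hj | hj
    · interval_cases hj' : (j : ℕ)
      · have : j = 0 := by simp [Fin.ext_iff, hj']
        rw [this]; exact h0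
      · have : j = 1 := by simp [Fin.ext_iff, hj']
        rw [this]; exact h1
    · have hjk : (j : ℕ) - 2 < k := by omega
      have := congrFun ht ⟨(j : ℕ) - 2, hjk⟩
      simp only at this
      have ej : (⟨((⟨(j : ℕ) - 2, hjk⟩ : Fin k) : ℕ) + 2, by omega⟩ : Fin (k+2)) = j := by
        simp [Fin.ext_iff]; omega
      rwa [ej] at this

lemma swap_sum (A B : Finset V) (m : V → ℕ) :
    ∑ b ∈ B, (A.filter (G.Adj b ·)).card * m b
      = ∑ a ∈ A, ∑ b ∈ B.filter (G.Adj a ·), m b := by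
  have step1 : ∀ b, (A.filter (G.Adj b ·)).card * m b
      = ∑ a ∈ A, (if G.Adj a b then m b else 0) := by
    intro b
    rw [Finset.card_filter, Finset.sum_mul]
    refine Finset.sum_congr rfl fun a _ => ?_
    by_cases h : G.Adj a b
    · have h' : G.Adj b a := h.symm
      simp [h, h']
    · have h' : ¬ G.Adj b a := fun hh => h hh.symm
      simp [h, h']
  calc ∑ b ∈ B, (A.filter (G.Adj b ·)).card * m b
      = ∑ b ∈ B, ∑ a ∈ A, (if G.Adj a b then m b else 0) :=
        Finset.sum_congr rfl fun b _ => step1 b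
    _ = ∑ a ∈ A, ∑ b ∈ B, (if G.Adj a b then m b else 0) := Finset.sum_comm
    _ = ∑ a ∈ A, ∑ b ∈ B.filter (G.Adj a ·), m b :=
        Finset.sum_congr rfl fun a _ => (Finset.sum_filter _ _).symm

lemma two_card_le (n : ℕ) (hn : Fintype.card V = n) (A B : Finset V) (h : Disjoint A B) :
    A.card + B.card ≤ n := by
  rw [← Finset.card_union_of_disjoint h, ← hn]
  exact Finset.card_le_univ _

lemma three_card_le (n : ℕ) (hn : Fintype.card V = n) (A B C : Finset V)
    (hAB : Disjoint A B) (hAC : Disjoint A C) (hBC : Disjoint B C) :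
    A.card + B.card + C.card ≤ n := by
  have : A.card + (B.card + C.card) ≤ n := by
    rw [← Finset.card_union_of_disjoint hBC, ← Finset.card_union_of_disjoint
      (Finset.disjoint_union_right.mpr ⟨hAB, hAC⟩), ← hn]
    exact Finset.card_le_univ _
  omega

/-- The 3-set bound: number of paths `U0 - U1 - U2` counted via middle vertices. -/
lemma triple_bound (n l : ℕ) (hl : 2 ≤ l) (hfree : CycleFree G (2*l))
    (hn : Fintype.card V = n) (u0 : V) (U0 U1 U2 : Finset V)
    (h01 : Disjoint U0 U1) (h02 : Disjoint U0 U2) (h12 : Disjoint U1 U2)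
    (hu0 : u0 ∉ U0) (hu1 : u0 ∉ U1) (hu2 : u0 ∉ U2)
    (hadj : ∀ a ∈ U0, G.Adj u0 a) :
    ∑ b ∈ U1, ((U0.filter (G.Adj b ·)).card * (U2.filter (G.Adj b ·)).card)
      ≤ (l-1) * (U0.card * U2.card + (l-1) * n) := by
  rw [swap_sum]
  have inner : ∀ a ∈ U0, ∑ b ∈ U1.filter (G.Adj a ·), (U2.filter (G.Adj b ·)).card
      ≤ (l-1) * ((U1.filter (G.Adj a ·)).card + U2.card) := by
    intro a ha
    apply edge_bound G l hl hfree a ((U1.filter (G.Adj a ·)).card + U2.card) _ _ le_rfl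
    · exact h12.mono_left (Finset.filter_subset _ _)
    · intro h
      exact Finset.disjoint_left.mp h01 ha (Finset.filter_subset _ _ h)
    · exact fun h => Finset.disjoint_left.mp h02 ha h
    · exact fun x hx => (Finset.mem_filter.mp hx).2
  calc ∑ a ∈ U0, ∑ b ∈ U1.filter (G.Adj a ·), (U2.filter (G.Adj b ·)).card
      ≤ ∑ a ∈ U0, (l-1) * ((U1.filter (G.Adj a ·)).card + U2.card) :=
        Finset.sum_le_sum inner
    _ = (l-1) * (∑ a ∈ U0, (U1.filter (G.Adj a ·)).card + U0.card * U2.card) := by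
        rw [← Finset.mul_sum, Finset.sum_add_distrib, Finset.sum_const, smul_eq_mul]
    _ ≤ (l-1) * ((l-1) * (U0.card + U1.card) + U0.card * U2.card) := by
        have := edge_bound G l hl hfree u0 (U0.card + U1.card) U0 U1 le_rfl h01 hu0 hu1 hadj
        exact Nat.mul_le_mul_left _ (by omega)
    _ ≤ (l-1) * (U0.card * U2.card + (l-1) * n) := by
        have h2 := two_card_le n hn U0 U1 h01
        have h3 : (l-1) * (U0.card + U1.card) ≤ (l-1) * n := Nat.mul_le_mul_left _ h2
        exact Nat.mul_le_mul_left _ (by omega)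

lemma esum_bound (l : ℕ) (hl : 2 ≤ l) (hfree : CycleFree G (2*l)) (u0 : V)
    (U0 U1 : Finset V) (h01 : Disjoint U0 U1) (hu0 : u0 ∉ U0) (hu1 : u0 ∉ U1)
    (hadj : ∀ a ∈ U0, G.Adj u0 a) :
    ∑ b ∈ U1, ((U0).filter (G.Adj b ·)).card ≤ (l-1) * (U0.card + U1.card) := by
  have hsw := swap_sum G U0 U1 (fun _ => 1)
  simp only [mul_one, Finset.sum_const, smul_eq_mul] at hsw
  rw [hsw]
  exact edge_bound G l hl hfree u0 _ U0 U1 le_rfl h01 hu0 hu1 hadj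

lemma lt_aux1 (k : ℕ) (i : Fin k) : (i : ℕ) + 2 < k + 2 := Nat.add_lt_add_right i.isLt 2

/-- The truncated family of sets, with the third set restricted to neighbours of `b`. -/
noncomputable def Wfam {k : ℕ} (U : Fin (k + 2) → Finset V) (b : V) : Fin k → Finset V :=
  fun i => if (i : ℕ) = 0 then (U ⟨(i : ℕ) + 2, lt_aux1 k i⟩).filter (G.Adj b ·)
    else U ⟨(i : ℕ) + 2, lt_aux1 k i⟩

lemma peel2 (k : ℕ) (U : Fin (k + 2) → Finset V) :
    (PFin G U).card ≤ ∑ b ∈ U 1, ((U 0).filter (G.Adj b ·)).card *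
      (PFin G (Wfam G U b)).card :=
  peel_s6 G k U

lemma odd_sub4 (t : ℕ) (h : Odd (t + 4)) : Odd t := by
  obtain ⟨m, hm⟩ := h; exact ⟨m - 2, by omega⟩

lemma even_sub4 (t : ℕ) (h : Even (t + 4)) : Even t := by
  obtain ⟨m, hm⟩ := h; exact ⟨m - 2, by omega⟩

lemma exp_odd1 (t : ℕ) (h : Odd t) : (t + 2 + 1) / 2 = (t + 1) / 2 + 1 := by omega

lemma exp_odd2 (t : ℕ) (h : Odd t) : (t + 2 - 1) / 2 = (t - 1) / 2 + 1 := by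
  obtain ⟨m, rfl⟩ := h; omega

lemma exp_even1 (t : ℕ) : (t + 2 + 2) / 2 = (t + 2) / 2 + 1 := by omega

lemma exp_even2 (t : ℕ) (h : Even t) : (t + 2 + 2) / 2 - 1 = ((t + 2) / 2 - 1) + 1 := by
  obtain ⟨m, rfl⟩ := h; omega

lemma master (n l : ℕ) (hl : 2 ≤ l) (hfree : CycleFree G (2*l)) (hn : Fintype.card V = n) :
    ∀ t (u0 : V) (U : Fin (t+2) → Finset V),
      (∀ i j, i ≠ j → Disjoint (U i) (U j)) → (∀ i, u0 ∉ U i) → (∀ u ∈ U 0, G.Adj u0 u) →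
      (Odd (t+2) → (PFin G U).card ≤ (l-1)^((t+1)/2) * n^((t-1)/2) *
          ((U 0).card * (U ⟨t+1, Nat.lt_succ_self (t+1)⟩).card + (l-1)*n)) ∧
      (Even (t+2) → (PFin G U).card ≤ (l-1)^((t+2)/2) * n^((t+2)/2 - 1) *
          ((U 0).card + (U 1).card)) := by
  intro t
  induction t using Nat.strong_induction_on with
  | _ t IH =>
  intro u0 U hdisj hu0 hadj
  have hesum : ∑ b ∈ U 1, ((U 0).filter (G.Adj b ·)).card ≤ (l-1) * ((U 0).card + (U 1).card) :=
    esum_bound G l hl hfree u0 (U 0) (U 1) (hdisj 0 1 (by simp)) (hu0 0) (hu0 1) hadj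
  have hABn : (U 0).card + (U 1).card ≤ n := two_card_le n hn _ _ (hdisj 0 1 (by simp))
  match t with
  | 0 =>
    constructor
    · intro hodd; exact absurd hodd (by decide)
    · intro _
      have hp := peel2 G 0 U
      have hz : ∀ b, (PFin G (Wfam G U b)).card = 1 := fun b => PFin_zero G _
      simp only [hz, mul_one] at hp
      have he : (l-1)^((0+2)/2) * n^((0+2)/2 - 1) = (l-1) := by norm_num
      rw [he]
      exact hp.trans hesum
  | 1 =>
    constructor
    · intro _
      have hp := peel2 G 1 U
      have h1 : ∀ b, (PFin G (Wfam G U b)).card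
          = ((U ⟨2, by norm_num⟩).filter (G.Adj b ·)).card := by
        intro b
        rw [PFin_one]
        simp [Wfam]
      simp only [h1] at hp
      have htr := triple_bound G n l hl hfree hn u0 (U 0) (U 1) (U ⟨2, by norm_num⟩)
        (hdisj 0 1 (by simp)) (hdisj 0 ⟨2, by norm_num⟩ (Fin.ne_of_val_ne (by norm_num)))
        (hdisj 1 ⟨2, by norm_num⟩ (Fin.ne_of_val_ne (by norm_num)))
        (hu0 0) (hu0 1) (hu0 ⟨2, by norm_num⟩) hadj
      have he : (l-1)^((1+1)/2) * n^((1-1)/2) = (l-1) := by norm_num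
      rw [he]
      exact hp.trans htr
    · intro heven; exact absurd heven (by decide)
  | (t' + 2) =>
    have hp := peel2 G (t' + 2) U
    have hWsub : ∀ b (i : Fin (t'+2)), Wfam G U b i ⊆ U ⟨(i : ℕ) + 2, lt_aux1 _ i⟩ := by
      intro b i
      unfold Wfam
      split
      · exact (Finset.filter_subset _ _)
      · exact subset_rfl
    have hW0 : ∀ b, Wfam G U b 0 = (U ⟨2, Nat.lt_add_of_pos_left (Nat.succ_pos _)⟩).filter (G.Adj b ·) := by
      intro b
      show (if _ then _ else _) = _
      norm_num
    have hW1eq : ∀ b, Wfam G U b 1 = U ⟨3, by norm_num⟩ := by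
      intro b
      show (if _ then _ else _) = _
      norm_num
    have hWlast : ∀ b, Wfam G U b ⟨t'+1, Nat.lt_succ_self (t'+1)⟩
        = U ⟨t'+3, by norm_num⟩ := by
      intro b
      show (if _ then _ else _) = _
      rw [if_neg (Nat.succ_ne_zero t')]
    have hIH : ∀ b ∈ U 1,
        (Odd t' → (PFin G (Wfam G U b)).card ≤ (l-1)^((t'+1)/2) * n^((t'-1)/2) *
            ((Wfam G U b 0).card *
              (Wfam G U b ⟨t'+1, Nat.lt_succ_self (t'+1)⟩).card + (l-1)*n)) ∧
        (Even t' → (PFin G (Wfam G U b)).card ≤ (l-1)^((t'+2)/2) * n^((t'+2)/2 - 1) *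
            ((Wfam G U b 0).card + (Wfam G U b 1).card)) := by
      intro b hb
      have hoddiff : Odd (t'+2) ↔ Odd t' := by
        constructor
        · rintro ⟨m, hm⟩; exact ⟨m-1, by omega⟩
        · rintro ⟨m, hm⟩; exact ⟨m+1, by omega⟩
      have heviff : Even (t'+2) ↔ Even t' := by
        constructor
        · rintro ⟨m, hm⟩; exact ⟨m-1, by omega⟩
        · rintro ⟨m, hm⟩; exact ⟨m+1, by omega⟩
      have := IH t' (Nat.lt_add_of_pos_right (Nat.succ_pos 1)) b (Wfam G U b) ?_ ?_ ?_
      · exact ⟨fun h => this.1 (hoddiff.mpr h), fun h => this.2 (heviff.mpr h)⟩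
      · intro i j hij
        refine Finset.disjoint_of_subset_left (hWsub b i)
          (Finset.disjoint_of_subset_right (hWsub b j) ?_)
        apply hdisj
        exact Fin.ne_of_val_ne (fun h => hij (Fin.ext (Nat.add_right_cancel h)))
      · intro i hmem
        exact Finset.disjoint_left.mp
          (hdisj 1 ⟨(i:ℕ)+2, lt_aux1 _ i⟩ (Fin.ne_of_val_ne (by
            rw [Fin.val_one]
            exact fun h => Nat.succ_ne_zero (i:ℕ) (Nat.succ_injective h.symm)))) hb (hWsub b i hmem)
      · intro u hu
        rw [hW0 b] at hu
        exact (Finset.mem_filter.mp hu).2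
    have h2lt : (2:ℕ) < t'+2+2 := Nat.lt_add_of_pos_left (Nat.succ_pos _)
    have htr := triple_bound G n l hl hfree hn u0 (U 0) (U 1) (U ⟨2, h2lt⟩)
      (hdisj 0 1 (by simp)) (hdisj 0 ⟨2, h2lt⟩ (Fin.ne_of_val_ne (by norm_num)))
      (hdisj 1 ⟨2, h2lt⟩ (Fin.ne_of_val_ne (by simp [Fin.val_one])))
      (hu0 0) (hu0 1) (hu0 ⟨2, h2lt⟩) hadj
    have hc2n : ((U ⟨2, h2lt⟩) : Finset V).card ≤ n := by
      rw [← hn]; exact Finset.card_le_univ _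
    constructor
    · -- odd case
      intro hodd
      have hoddt : Odd t' := odd_sub4 t' (by convert hodd using 2)
      set a := (U 0).card with ha
      have h3lt : t'+3 < t'+2+2 := by norm_num
      set z := ((U ⟨t'+3, h3lt⟩) : Finset V).card with hz
      set c1 := (l-1)^((t'+1)/2) * n^((t'-1)/2) with hc1
      have hbound : ∀ b ∈ U 1,
          ((U 0).filter (G.Adj b ·)).card * (PFin G (Wfam G U b)).card
          ≤ (c1 * z) * (((U 0).filter (G.Adj b ·)).card * ((U ⟨2, h2lt⟩).filter (G.Adj b ·)).card)
            + (c1 * ((l-1)*n)) * ((U 0).filter (G.Adj b ·)).card := by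
        intro b hb
        have h1 := (hIH b hb).1 hoddt
        rw [hWlast b, hW0 b] at h1
        calc ((U 0).filter (G.Adj b ·)).card * (PFin G (Wfam G U b)).card
            ≤ ((U 0).filter (G.Adj b ·)).card *
              (c1 * (((U ⟨2, h2lt⟩).filter (G.Adj b ·)).card * z + (l-1)*n)) :=
              Nat.mul_le_mul_left _ h1
          _ = (c1 * z) * (((U 0).filter (G.Adj b ·)).card * ((U ⟨2, h2lt⟩).filter (G.Adj b ·)).card)
            + (c1 * ((l-1)*n)) * ((U 0).filter (G.Adj b ·)).card := by ring
      have h3n : z + (a + (U 1).card) ≤ n := by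
        have h3 := three_card_le n hn (U ⟨t'+3, h3lt⟩) (U 0) (U 1)
          (hdisj _ _ (Fin.ne_of_val_ne (Nat.succ_ne_zero _)))
          (hdisj _ _ (Fin.ne_of_val_ne (by simp [Fin.val_one])))
          (hdisj _ _ (by simp))
        omega
      calc (PFin G U).card
          ≤ ∑ b ∈ U 1, ((U 0).filter (G.Adj b ·)).card * (PFin G (Wfam G U b)).card := hp
        _ ≤ ∑ b ∈ U 1, ((c1 * z) * (((U 0).filter (G.Adj b ·)).card * ((U ⟨2, h2lt⟩).filter (G.Adj b ·)).card)
            + (c1 * ((l-1)*n)) * ((U 0).filter (G.Adj b ·)).card) := Finset.sum_le_sum hbound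
        _ = (c1 * z) * (∑ b ∈ U 1, ((U 0).filter (G.Adj b ·)).card * ((U ⟨2, h2lt⟩).filter (G.Adj b ·)).card)
            + (c1 * ((l-1)*n)) * (∑ b ∈ U 1, ((U 0).filter (G.Adj b ·)).card) := by
            rw [Finset.sum_add_distrib, Finset.mul_sum, Finset.mul_sum]
        _ ≤ (c1 * z) * ((l-1) * (a * ((U ⟨2, h2lt⟩) : Finset V).card + (l-1)*n))
            + (c1 * ((l-1)*n)) * ((l-1) * (a + (U 1).card)) :=
            Nat.add_le_add (Nat.mul_le_mul_left _ htr) (Nat.mul_le_mul_left _ hesum)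
        _ ≤ (c1 * z) * ((l-1) * (a * n + (l-1)*n))
            + (c1 * ((l-1)*n)) * ((l-1) * (a + (U 1).card)) :=
            Nat.add_le_add (Nat.mul_le_mul_left _ (Nat.mul_le_mul_left _
              (Nat.add_le_add_right (Nat.mul_le_mul_left _ hc2n) _))) le_rfl
        _ = c1 * (l-1) * (z * (a * n + (l-1)*n) + ((l-1)*n) * (a + (U 1).card)) := by ring
        _ ≤ c1 * (l-1) * (n * (a * z) + (l-1) * (n * n)) := by
            apply Nat.mul_le_mul_left
            have e : z * (a * n + (l-1)*n) + ((l-1)*n) * (a + (U 1).card)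
                = n * (a * z) + (l-1) * n * (z + (a + (U 1).card)) := by ring
            rw [e]
            refine Nat.add_le_add_left ?_ _
            calc (l-1) * n * (z + (a + (U 1).card)) ≤ (l-1) * n * n := Nat.mul_le_mul_left _ h3n
              _ = (l-1) * (n * n) := by ring
        _ = ((l-1)^((t'+1)/2 + 1) * n^((t'-1)/2 + 1)) * (a * z + (l-1)*n) := by
            rw [hc1, pow_succ, pow_succ]; ring
        _ = (l-1)^((t'+2+1)/2) * n^((t'+2-1)/2) * (a * z + (l-1)*n) := by
            rw [exp_odd1 t' hoddt, exp_odd2 t' hoddt]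
    · -- even case
      intro heven
      have hevent : Even t' := even_sub4 t' (by convert heven using 2)
      set c1 := (l-1)^((t'+2)/2) * n^((t'+2)/2 - 1) with hc1
      have hbound : ∀ b ∈ U 1,
          ((U 0).filter (G.Adj b ·)).card * (PFin G (Wfam G U b)).card
          ≤ ((U 0).filter (G.Adj b ·)).card * (c1 * n) := by
        intro b hb
        have h1 := (hIH b hb).2 hevent
        rw [hW1eq b, hW0 b] at h1
        have h23 : ((U ⟨2, h2lt⟩).filter (G.Adj b ·)).card + ((U ⟨3, by norm_num⟩) : Finset V).card ≤ n := by
          have hsub : ((U ⟨2, h2lt⟩).filter (G.Adj b ·)).card ≤ ((U ⟨2, h2lt⟩) : Finset V).card :=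
            Finset.card_le_card (Finset.filter_subset _ _)
          have h23' := two_card_le n hn (U ⟨2, h2lt⟩) (U ⟨3, by norm_num⟩)
            (hdisj _ _ (Fin.ne_of_val_ne (by norm_num)))
          omega
        refine Nat.mul_le_mul_left _ (h1.trans ?_)
        exact Nat.mul_le_mul_left _ h23
      calc (PFin G U).card
          ≤ ∑ b ∈ U 1, ((U 0).filter (G.Adj b ·)).card * (PFin G (Wfam G U b)).card := hp
        _ ≤ ∑ b ∈ U 1, ((U 0).filter (G.Adj b ·)).card * (c1 * n) := Finset.sum_le_sum hbound
        _ = (∑ b ∈ U 1, ((U 0).filter (G.Adj b ·)).card) * (c1 * n) := by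
            rw [Finset.sum_mul]
        _ ≤ ((l-1) * ((U 0).card + (U 1).card)) * (c1 * n) :=
            Nat.mul_le_mul_right _ hesum
        _ = ((l-1)^((t'+2)/2 + 1) * n^(((t'+2)/2 - 1) + 1)) * ((U 0).card + (U 1).card) := by
            rw [hc1, pow_succ, pow_succ]; ring
        _ = (l-1)^((t'+2+2)/2) * n^((t'+2+2)/2 - 1) * ((U 0).card + (U 1).card) := by
            rw [exp_even2 t' hevent, exp_even1 t']

end Aux

theorem stmt6 {V : Type*} [Fintype V] (n s l : ℕ) (hn : Fintype.card V = n)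
    (hs : 2 ≤ s) (hl : 2 ≤ l)
    (G : SimpleGraph V) (hfree : CycleFree G (2 * l))
    (u0 : V) (U : Fin s → Set V)
    (hdisj : ∀ i j, i ≠ j → Disjoint (U i) (U j))
    (hu0 : ∀ i, u0 ∉ U i)
    (hadj : ∀ u ∈ U ⟨0, by omega⟩, G.Adj u0 u) :
    (Odd s → pCount G U ≤ (l - 1) ^ ((s - 1) / 2) * n ^ ((s - 3) / 2) *
        ((U ⟨0, by omega⟩).ncard * (U ⟨s - 1, by omega⟩).ncard + (l - 1) * n)) ∧
    (Even s → pCount G U ≤ (l - 1) ^ (s / 2) * n ^ (s / 2 - 1) *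
        ((U ⟨0, by omega⟩).ncard + (U ⟨1, by omega⟩).ncard)) := by
  classical
  obtain ⟨t, rfl⟩ : ∃ t, s = t + 2 := ⟨s - 2, by omega⟩
  set F : Fin (t+2) → Finset V := fun i => (U i).toFinset with hF
  have hpc : pCount G U = (PFin G F).card := by
    rw [pCount, Nat.card_eq_fintype_card]
    exact Fintype.card_of_subtype (PFin G F) (fun u => by
      simp [mem_PFin, hF, Set.mem_toFinset])
  have hm := master G n l hl hfree hn t u0 F
    (fun i j hij => Set.disjoint_toFinset.mpr (hdisj i j hij))
    (fun i => by simp [hF, Set.mem_toFinset]; exact hu0 i)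
    (fun u hu => hadj u (by simpa [hF, Set.mem_toFinset] using hu))
  have hnc : ∀ i, (U i).ncard = (F i).card := fun i => Set.ncard_eq_toFinset_card' _
  constructor
  · intro hodd
    have h1 := hm.1 hodd
    rw [hpc]
    have e0 : (⟨0, by omega⟩ : Fin (t+2)) = 0 := rfl
    have elast : (⟨t+2-1, by omega⟩ : Fin (t+2)) = ⟨t+1, Nat.lt_succ_self (t+1)⟩ :=
      Fin.ext (Nat.succ_sub_one (t+1))
    have ee1 : (t+2-1)/2 = (t+1)/2 := by omega
    have ee2 : (t+2-3)/2 = (t-1)/2 := by omega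
    rw [e0, elast, ee1, ee2, hnc, hnc]
    exact h1
  · intro heven
    have h2 := hm.2 heven
    rw [hpc]
    have e0 : (⟨0, by omega⟩ : Fin (t+2)) = 0 := rfl
    have e1 : (⟨1, by omega⟩ : Fin (t+2)) = 1 := rfl
    rw [e0, e1, hnc, hnc]
    exact h2
end

section
/- Let ℓ ≥ 2 and let G be an n-vertex graph with no cycle of length 2ℓ. Then every vertex v of G is the endpoint of at most 4(ℓ−1)n paths of length 2. -/
open SimpleGraph

section AuxLemmas

variable {V : Type*}

/-- Build a walk from a function with consecutive adjacencies. -/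
lemma walk_of_fn (G : SimpleGraph V) :
    ∀ (m : ℕ) (f : ℕ → V), (∀ j, j < m → G.Adj (f j) (f (j+1))) →
      ∃ w : G.Walk (f 0) (f m), w.length = m ∧ w.support = (List.range (m+1)).map f := by
  intro m
  induction m with
  | zero =>
      intro f _
      exact ⟨Walk.nil, rfl, by simp [List.range_succ]⟩
  | succ m ih =>
      intro f hadj
      obtain ⟨w, hl, hs⟩ := ih (fun j => f (j+1)) (fun j hj => hadj (j+1) (by omega))
      refine ⟨Walk.cons (hadj 0 (by omega)) w, by simp [hl], ?_⟩
      rw [Walk.support_cons, hs]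
      simp [List.range_succ_eq_map, List.map_map, Function.comp_def]

/-- `getVert` is injective on a path. -/
lemma path_getVert_inj {G : SimpleGraph V} :
    ∀ {u v : V} (p : G.Walk u v), p.IsPath → ∀ i k, i ≤ p.length → k ≤ p.length →
      p.getVert i = p.getVert k → i = k := by
  intro u v p
  induction p with
  | nil =>
      intro _ i k hi hk _
      simp only [Walk.length_nil, Nat.le_zero] at hi hk
      omega
  | @cons u x w h q ih =>
      intro hp i k hi hk heq
      rw [Walk.cons_isPath_iff] at hp
      rw [Walk.length_cons] at hi hk
      match i, k with
      | 0, 0 => rfl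
      | 0, k+1 =>
          exfalso
          apply hp.2
          rw [Walk.mem_support_iff_exists_getVert]
          refine ⟨k, ?_, by omega⟩
          rw [Walk.getVert_cons_succ] at heq
          rw [← heq, Walk.getVert_zero]
      | i+1, 0 =>
          exfalso
          apply hp.2
          rw [Walk.mem_support_iff_exists_getVert]
          refine ⟨i, ?_, by omega⟩
          rw [Walk.getVert_cons_succ] at heq
          rw [heq, Walk.getVert_zero]
      | i+1, k+1 =>
          rw [Walk.getVert_cons_succ, Walk.getVert_cons_succ] at heq
          have := ih hp.1 i k (by omega) (by omega) heq
          omega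

/-- The cyclic alternation lemma. -/
lemma zmod_alt {c : ℕ} [NeZero c] (χ : ZMod c → Prop) (dn : ℕ)
    (h1 : ∀ i, ¬ χ i → χ (i+1)) (hne : ∃ i, χ i) :
    ∃ i, χ i ∧ χ (i + (2*dn : ℕ)) := by
  classical
  by_contra hcon
  push_neg at hcon
  set S : Finset (ZMod c) := Finset.univ.filter χ with hS
  set T : Finset (ZMod c) := Finset.univ.filter (fun i => ¬ χ i) with hT
  have hmemS : ∀ i, i ∈ S ↔ χ i := by intro i; simp [hS]
  have hmemT : ∀ i, i ∈ T ↔ ¬ χ i := by intro i; simp [hT]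
  have hST : S.card ≤ T.card := by
    have hsub : S.image (fun i : ZMod c => i + ((2*dn : ℕ) : ZMod c)) ⊆ T := by
      intro x hx
      obtain ⟨i, hi, rfl⟩ := Finset.mem_image.mp hx
      exact (hmemT _).2 (hcon i ((hmemS _).1 hi))
    calc S.card = (S.image (fun i : ZMod c => i + ((2*dn : ℕ) : ZMod c))).card :=
        (Finset.card_image_of_injective _ (add_left_injective _)).symm
      _ ≤ T.card := Finset.card_le_card hsub
  have hTSsub : T.image (fun i => i + 1) ⊆ S := by
    intro x hx
    obtain ⟨i, hi, rfl⟩ := Finset.mem_image.mp hx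
    exact (hmemS _).2 (h1 i ((hmemT _).1 hi))
  have hTS : T.card ≤ S.card := by
    calc T.card = (T.image (fun i => i + 1)).card :=
        (Finset.card_image_of_injective _ (add_left_injective _)).symm
      _ ≤ S.card := Finset.card_le_card hTSsub
  have himg : T.image (fun i => i + 1) = S := by
    apply Finset.eq_of_subset_of_card_le hTSsub
    rw [Finset.card_image_of_injective _ (add_left_injective _)]
    omega
  have step : ∀ i, χ i → χ (i + 1 + 1) := by
    intro i hi
    by_cases h : χ (i+1)
    · exfalso
      have hmem : (i+1) ∈ S := (hmemS _).2 h
      rw [← himg] at hmem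
      obtain ⟨t, ht, hteq⟩ := Finset.mem_image.mp hmem
      have : t = i := by
        have := add_right_cancel hteq
        exact this
      subst this
      exact (hmemT _).1 ht hi
    · exact h1 _ h
  have chain : ∀ (k : ℕ) (i : ZMod c), χ i → χ (i + (2*k : ℕ)) := by
    intro k
    induction k with
    | zero => intro i hi; simpa using hi
    | succ k ih =>
        intro i hi
        have h2 := step _ (ih i hi)
        have heq : i + (2*(k+1) : ℕ) = i + (2*k : ℕ) + 1 + 1 := by
          push_cast
          ring
        rwa [heq]
  obtain ⟨i, hi⟩ := hne
  exact hcon i hi (chain dn i hi)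

/-- Degeneracy: a dense graph has a subgraph of large minimum degree. -/
lemma exists_min_deg [Fintype V] [DecidableEq V] (H : SimpleGraph V) [DecidableRel H.Adj] (d : ℕ) :
    ∀ s : Finset V, 2*d*s.card < ((s ×ˢ s).filter (fun p => H.Adj p.1 p.2)).card →
      ∃ t : Finset V, t ⊆ s ∧ t.Nonempty ∧ ∀ a ∈ t, d < (t.filter (H.Adj a)).card := by
  intro s
  induction s using Finset.strongInduction with
  | _ s ih =>
    intro hs
    by_cases hall : ∀ a ∈ s, d < (s.filter (H.Adj a)).card
    · refine ⟨s, subset_rfl, ?_, hall⟩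
      rcases Finset.eq_empty_or_nonempty s with rfl | hne
      · simp at hs
      · exact hne
    · push_neg at hall
      obtain ⟨a, ha, hdeg⟩ := hall
      set s' := s.erase a with hs'
      have hkey : ((s ×ˢ s).filter (fun p => H.Adj p.1 p.2)).card ≤
          ((s' ×ˢ s').filter (fun p => H.Adj p.1 p.2)).card + 2*d := by
        have hsub : (s ×ˢ s).filter (fun p => H.Adj p.1 p.2) ⊆
            ((s' ×ˢ s').filter (fun p => H.Adj p.1 p.2)) ∪
              ((s.filter (H.Adj a)).image (fun b => (a, b)) ∪
               (s.filter (H.Adj a)).image (fun b => (b, a))) := by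
          intro p hp
          rw [Finset.mem_filter, Finset.mem_product] at hp
          obtain ⟨⟨hp1, hp2⟩, hadj⟩ := hp
          rcases eq_or_ne p.1 a with h1 | h1
          · apply Finset.mem_union_right
            apply Finset.mem_union_left
            rw [Finset.mem_image]
            exact ⟨p.2, Finset.mem_filter.2 ⟨hp2, h1 ▸ hadj⟩, by rw [← h1]⟩
          · rcases eq_or_ne p.2 a with h2 | h2
            · apply Finset.mem_union_right
              apply Finset.mem_union_right
              rw [Finset.mem_image]
              exact ⟨p.1, Finset.mem_filter.2 ⟨hp1, (h2 ▸ hadj).symm⟩, by rw [← h2]⟩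
            · apply Finset.mem_union_left
              rw [Finset.mem_filter, Finset.mem_product]
              exact ⟨⟨Finset.mem_erase.2 ⟨h1, hp1⟩, Finset.mem_erase.2 ⟨h2, hp2⟩⟩, hadj⟩
        calc ((s ×ˢ s).filter (fun p => H.Adj p.1 p.2)).card
            ≤ _ := Finset.card_le_card hsub
          _ ≤ ((s' ×ˢ s').filter (fun p => H.Adj p.1 p.2)).card +
              (((s.filter (H.Adj a)).image (fun b => (a, b))).card +
               ((s.filter (H.Adj a)).image (fun b => (b, a))).card) := by
            refine (Finset.card_union_le _ _).trans ?_
            gcongr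
            exact Finset.card_union_le _ _
          _ ≤ _ := by
            have h1 := Finset.card_image_le (s := s.filter (H.Adj a)) (f := fun b => (a, b))
            have h2 := Finset.card_image_le (s := s.filter (H.Adj a)) (f := fun b => (b, a))
            omega
      have hcard : s'.card = s.card - 1 := Finset.card_erase_of_mem ha
      have hscard : 1 ≤ s.card := Finset.card_pos.2 ⟨a, ha⟩
      obtain ⟨k, hk⟩ : ∃ k, s.card = k + 1 := ⟨s.card - 1, by omega⟩
      have hmul : 2*d*s.card = 2*d*s'.card + 2*d := by
        rw [hcard, hk, Nat.add_sub_cancel]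
        ring
      have hrec : 2*d*s'.card < ((s' ×ˢ s').filter (fun p => H.Adj p.1 p.2)).card := by
        omega
      obtain ⟨t, hts, htne, htdeg⟩ := ih s' (Finset.erase_ssubset ha) hrec
      exact ⟨t, hts.trans (Finset.erase_subset _ _), htne, htdeg⟩

end AuxLemmas

theorem stmt7 {V : Type*} [Fintype V] (n l : ℕ) (hn : Fintype.card V = n) (hl : 2 ≤ l)
    (G : SimpleGraph V) (hfree : CycleFree G (2 * l)) (v : V) :
    Nat.card {p : V × V // G.Adj v p.1 ∧ G.Adj p.1 p.2 ∧ p.2 ≠ v} ≤ 4 * (l - 1) * n := by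
  classical
  by_contra hcon
  push_neg at hcon
  set D : ℕ := 2 * (l - 1) with hD
  have hD2 : 2 ≤ D := by omega
  set X : Finset V := G.neighborFinset v with hX
  let H : SimpleGraph V :=
    { Adj := fun a b => G.Adj a b ∧ a ≠ v ∧ b ≠ v ∧ (a ∈ X ∨ b ∈ X)
      symm := by
        constructor
        intro a b hab
        exact ⟨hab.1.symm, hab.2.2.1, hab.2.1, hab.2.2.2.symm⟩
      loopless := ⟨fun a hab => G.loopless.irrefl a hab.1⟩ }
  have hcardP : Nat.card {p : V × V // G.Adj v p.1 ∧ G.Adj p.1 p.2 ∧ p.2 ≠ v} =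
      (Finset.univ.filter (fun p : V × V => G.Adj v p.1 ∧ G.Adj p.1 p.2 ∧ p.2 ≠ v)).card := by
    rw [Nat.card_eq_fintype_card, Fintype.card_subtype]
  have hsubpairs : Finset.univ.filter (fun p : V × V => G.Adj v p.1 ∧ G.Adj p.1 p.2 ∧ p.2 ≠ v)
      ⊆ (Finset.univ ×ˢ Finset.univ).filter (fun p : V × V => H.Adj p.1 p.2) := by
    intro p hp
    rw [Finset.mem_filter] at hp
    rw [Finset.mem_filter, Finset.mem_product]
    refine ⟨⟨Finset.mem_univ _, Finset.mem_univ _⟩, hp.2.2.1, hp.2.1.ne', hp.2.2.2, Or.inl ?_⟩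
    rw [hX, SimpleGraph.mem_neighborFinset]
    exact hp.2.1
  have hpairs : 2 * D * (Finset.univ : Finset V).card <
      ((Finset.univ ×ˢ Finset.univ).filter (fun p : V × V => H.Adj p.1 p.2)).card := by
    have h1 : 2 * D * (Finset.univ : Finset V).card = 4 * (l - 1) * n := by
      rw [Finset.card_univ, hn, hD]; ring
    rw [h1]
    calc 4 * (l-1) * n < Nat.card {p : V × V // G.Adj v p.1 ∧ G.Adj p.1 p.2 ∧ p.2 ≠ v} := hcon
      _ = _ := hcardP
      _ ≤ _ := Finset.card_le_card hsubpairs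
  obtain ⟨t, -, htne, htdeg⟩ := exists_min_deg H D Finset.univ hpairs
  let H2 : SimpleGraph V :=
    { Adj := fun a b => H.Adj a b ∧ a ∈ t ∧ b ∈ t
      symm := ⟨fun a b h => ⟨h.1.symm, h.2.2, h.2.1⟩⟩
      loopless := ⟨fun a h => H.loopless.irrefl a h.1⟩ }
  -- maximal path in H2
  set PS : Set ℕ := {L | ∃ (a b : V) (w : H2.Walk a b), w.IsPath ∧ w.length = L} with hPS
  have hPS0 : (0 : ℕ) ∈ PS := ⟨htne.choose, htne.choose, Walk.nil, Walk.IsPath.nil, rfl⟩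
  have hPSbdd : BddAbove PS := by
    refine ⟨Fintype.card V, ?_⟩
    rintro L ⟨a, b, w, hw, rfl⟩
    exact hw.length_lt.le
  set L : ℕ := sSup PS with hL
  have hLmem : L ∈ PS := Nat.sSup_mem ⟨0, hPS0⟩ hPSbdd
  obtain ⟨a, b, w, hw, hwl⟩ := hLmem
  have hmax : ∀ L' ∈ PS, L' ≤ L := fun L' h => le_csSup hPSbdd h
  have hL1 : 1 ≤ L := by
    obtain ⟨a₀, ha₀⟩ := htne
    have hpos : 0 < (t.filter (H.Adj a₀)).card := lt_of_le_of_lt (Nat.zero_le _) (htdeg a₀ ha₀)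
    obtain ⟨z, hz⟩ := Finset.card_pos.1 hpos
    rw [Finset.mem_filter] at hz
    have hadj : H2.Adj a₀ z := ⟨hz.2, ha₀, hz.1⟩
    refine hmax 1 ⟨a₀, z, Walk.cons hadj Walk.nil, ?_, rfl⟩
    rw [Walk.cons_isPath_iff]
    exact ⟨Walk.IsPath.nil, by simpa using hadj.ne⟩
  have hnbr : ∀ z, H2.Adj b z → z ∈ w.support := by
    intro z hz
    by_contra hzs
    have hp' : (Walk.cons hz.symm w.reverse).IsPath := by
      rw [Walk.cons_isPath_iff]
      exact ⟨hw.reverse, by rwa [Walk.support_reverse, List.mem_reverse]⟩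
    have hle : L + 1 ≤ L := by
      refine hmax (L+1) ⟨z, a, Walk.cons hz.symm w.reverse, hp', ?_⟩
      simp [Walk.length_cons, Walk.length_reverse, hwl]
    omega
  have hbt : b ∈ t := by
    have hlt : L - 1 < w.length := by omega
    have hadj := w.adj_getVert_succ hlt
    have hgb : w.getVert (L - 1 + 1) = b := by
      rw [show L - 1 + 1 = L from by omega, ← hwl]
      exact w.getVert_length
    rw [hgb] at hadj
    exact hadj.2.2
  set N : Finset V := t.filter (H.Adj b) with hN
  have hNcard : D < N.card := htdeg b hbt
  have hNadj : ∀ z ∈ N, H2.Adj b z := by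
    intro z hz
    rw [hN, Finset.mem_filter] at hz
    exact ⟨hz.2, hbt, hz.1⟩
  have hidx : ∀ z ∈ N, ∃ i, w.getVert i = z ∧ i ≤ L := by
    intro z hz
    have hzsup := hnbr z (hNadj z hz)
    rw [Walk.mem_support_iff_exists_getVert] at hzsup
    obtain ⟨i, h1, h2⟩ := hzsup
    exact ⟨i, h1, by omega⟩
  set J : Finset ℕ := (Finset.range (L+1)).filter (fun i => H2.Adj b (w.getVert i)) with hJ
  have hJne : J.Nonempty := by
    obtain ⟨z, hz⟩ := Finset.card_pos.1 (lt_of_le_of_lt (Nat.zero_le _) hNcard)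
    obtain ⟨i, hi1, hi2⟩ := hidx z hz
    refine ⟨i, ?_⟩
    rw [hJ, Finset.mem_filter, Finset.mem_range]
    exact ⟨by omega, by rw [hi1]; exact hNadj z hz⟩
  set j : ℕ := J.min' hJne with hj
  have hjJ : j ∈ J := J.min'_mem hJne
  have hchord : H2.Adj b (w.getVert j) := (Finset.mem_filter.1 hjJ).2
  have hjle : j ≤ L := by
    have := (Finset.mem_filter.1 hjJ).1
    rw [Finset.mem_range] at this
    omega
  have hidx' : ∀ z : V, ∃ i, z ∈ N → (w.getVert i = z ∧ i ≤ L) := by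
    intro z
    by_cases hz : z ∈ N
    · obtain ⟨i, h1, h2⟩ := hidx z hz
      exact ⟨i, fun _ => ⟨h1, h2⟩⟩
    · exact ⟨0, fun h => absurd h hz⟩
  choose F hF using hidx'
  have hmaps : ∀ z ∈ N, F z ∈ Finset.Ico j L := by
    intro z hz
    rw [Finset.mem_Ico]
    constructor
    · apply J.min'_le
      rw [hJ, Finset.mem_filter, Finset.mem_range]
      refine ⟨by have := (hF z hz).2; omega, ?_⟩
      rw [(hF z hz).1]
      exact hNadj z hz
    · rcases Nat.lt_or_ge (F z) L with h | h
      · exact h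
      · exfalso
        have hFL : F z = L := le_antisymm (hF z hz).2 h
        have hzb : z = b := by
          rw [← (hF z hz).1, hFL, ← hwl]
          exact w.getVert_length
        exact (hNadj z hz).ne hzb.symm
  have hinj : Set.InjOn F N := by
    intro z1 h1 z2 h2 heq
    rw [← (hF z1 h1).1, ← (hF z2 h2).1, heq]
  have hcard2 : N.card ≤ (Finset.Ico j L).card := Finset.card_le_card_of_injOn F hmaps hinj
  have hDL : D + 1 ≤ L - j := by
    rw [Nat.card_Ico] at hcard2
    omega
  set c : ℕ := L - j + 1 with hc
  have hcD : D + 2 ≤ c := by omega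
  haveI : NeZero c := ⟨by omega⟩
  set cyc : ZMod c → V := fun i => w.getVert (j + i.val) with hcyc
  have hvallt : ∀ i : ZMod c, i.val < c := fun i => ZMod.val_lt i
  have hadjcyc : ∀ i : ZMod c, H2.Adj (cyc i) (cyc (i+1)) := by
    intro i
    rcases Nat.lt_or_ge i.val (c-1) with hlt | hge
    · have hone : (1 : ZMod c).val = 1 := ZMod.val_one'' (by omega)
      have hval : (i + 1).val = i.val + 1 := by
        have hh := ZMod.val_add_of_lt (a := i) (b := 1) (by rw [hone]; omega)
        rw [hone] at hh
        exact hh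
      show H2.Adj (w.getVert (j + i.val)) (w.getVert (j + (i+1).val))
      rw [hval, ← Nat.add_assoc]
      exact w.adj_getVert_succ (by rw [hwl]; omega)
    · have hieq : i.val = c - 1 := by
        have := hvallt i
        omega
      have hi0 : i + 1 = 0 := by
        have hi : i = ((c-1 : ℕ) : ZMod c) := by rw [← ZMod.natCast_zmod_val i, hieq]
        rw [hi]
        have h5 : ((c-1 : ℕ) : ZMod c) + 1 = ((c : ℕ) : ZMod c) := by
          rw [← Nat.cast_succ, show (c-1).succ = c from by omega]
        rw [h5, ZMod.natCast_self]
      rw [hi0]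
      show H2.Adj (w.getVert (j + i.val)) (w.getVert (j + (0 : ZMod c).val))
      rw [hieq, ZMod.val_zero, Nat.add_zero]
      have hb : w.getVert (j + (c-1)) = b := by
        rw [show j + (c-1) = L from by omega, ← hwl]
        exact w.getVert_length
      rw [hb]
      exact hchord
  have hHadj : ∀ i : ZMod c, H.Adj (cyc i) (cyc (i+1)) := fun i => (hadjcyc i).1
  have hGadj : ∀ i : ZMod c, G.Adj (cyc i) (cyc (i+1)) := fun i => (hHadj i).1
  have hXor : ∀ i : ZMod c, cyc i ∈ X ∨ cyc (i+1) ∈ X := fun i => (hHadj i).2.2.2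
  have hnv : ∀ i : ZMod c, cyc i ≠ v := fun i => (hHadj i).2.1
  have hχne : ∃ i : ZMod c, cyc i ∈ X := by
    rcases hXor 0 with h | h
    · exact ⟨0, h⟩
    · exact ⟨0 + 1, h⟩
  obtain ⟨i₀, hi₀X, hi₀DX⟩ := zmod_alt (fun i => cyc i ∈ X) (l-1)
      (fun i h => (hXor i).resolve_left h) hχne
  rw [← hD] at hi₀DX
  set f : ℕ → V := fun s => cyc (i₀ + (s : ZMod c)) with hf
  have hfadj : ∀ s, s < D → G.Adj (f s) (f (s+1)) := by
    intro s hs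
    have hg := hGadj (i₀ + (s : ZMod c))
    have hcast : ((s+1 : ℕ) : ZMod c) = (s : ZMod c) + 1 := by push_cast; ring
    show G.Adj (cyc (i₀ + (s : ZMod c))) (cyc (i₀ + ((s+1 : ℕ) : ZMod c)))
    rw [hcast, ← add_assoc]
    exact hg
  obtain ⟨aw, hawlen, hawsup⟩ := walk_of_fn G D f hfadj
  have hcycinj : ∀ i k : ZMod c, cyc i = cyc k → i = k := by
    intro i k h
    have h1 : j + i.val ≤ w.length := by rw [hwl]; have := hvallt i; omega
    have h2 : j + k.val ≤ w.length := by rw [hwl]; have := hvallt k; omega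
    have h3 := path_getVert_inj w hw _ _ h1 h2 h
    have h4 : i.val = k.val := by omega
    exact ZMod.val_injective c h4
  have hfne : ∀ s1 s2, s1 ≤ D → s2 ≤ D → f s1 = f s2 → s1 = s2 := by
    intro s1 s2 hs1 hs2 h
    have h2 := hcycinj _ _ h
    have hcc : (s1 : ZMod c) = (s2 : ZMod c) := add_left_cancel h2
    have h3 := congrArg ZMod.val hcc
    rwa [ZMod.val_natCast_of_lt (by omega), ZMod.val_natCast_of_lt (by omega)] at h3
  have hawpath : aw.IsPath := by
    rw [Walk.isPath_def, hawsup]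
    apply List.Nodup.map_on _ List.nodup_range
    intro x hx y hy hxy
    rw [List.mem_range] at hx hy
    exact hfne x y (by omega) (by omega) hxy
  have hvsup : v ∉ aw.support := by
    rw [hawsup]
    simp only [List.mem_map, List.mem_range, not_exists, not_and]
    intro s _ heq
    exact hnv _ heq
  have hf0 : f 0 = cyc i₀ := by
    show cyc (i₀ + ((0:ℕ) : ZMod c)) = cyc i₀
    rw [Nat.cast_zero, add_zero]
  have hvx : G.Adj v (f 0) := by
    rw [hf0]
    rw [hX, SimpleGraph.mem_neighborFinset] at hi₀X
    exact hi₀X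
  have hyv : G.Adj (f D) v := by
    have : f D = cyc (i₀ + ((D:ℕ) : ZMod c)) := rfl
    rw [this]
    rw [hX, SimpleGraph.mem_neighborFinset] at hi₀DX
    exact hi₀DX.symm
  have hfneq : f 0 ≠ f D := by
    intro h
    have := hfne 0 D (by omega) le_rfl h
    omega
  set q := aw.append (Walk.cons hyv Walk.nil) with hq
  have hqsup : q.support = aw.support ++ [v] := by
    rw [hq, Walk.support_append]
    simp
  have hqpath : q.IsPath := by
    rw [Walk.isPath_def, hqsup]
    refine List.Nodup.append hawpath.support_nodup (List.nodup_singleton v) ?_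
    intro x hx hx'
    rw [List.mem_singleton] at hx'
    subst hx'
    exact hvsup hx
  have hqedges : q.edges = aw.edges ++ [s(f D, v)] := by
    rw [hq, Walk.edges_append]
    simp
  have hWcyc : (Walk.cons hvx q).IsCycle := by
    rw [Walk.cons_isCycle_iff]
    refine ⟨hqpath, ?_⟩
    rw [hqedges]
    simp only [List.mem_append, List.mem_singleton]
    rintro (h | h)
    · exact hvsup (Walk.fst_mem_support_of_mem_edges aw h)
    · rw [Sym2.eq_iff] at h
      rcases h with ⟨h1, h2⟩ | ⟨h1, h2⟩
      · exact hnv i₀ (hf0 ▸ h2)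
      · exact hfneq h2
  have hWlen : (Walk.cons hvx q).length = 2 * l := by
    rw [Walk.length_cons, hq, Walk.length_append, hawlen]
    simp only [Walk.length_cons, Walk.length_nil]
    omega
  exact hfree (Walk.cons hvx q) hWcyc hWlen
end

section
/- For every ℓ ≥ 2, the maximum number of copies of C_3 (triangles) in an n-vertex C_{2ℓ}-free graph is at most ((2ℓ−3)/3) · ex(n, C_{2ℓ}), where ex(n, C_{2ℓ}) is the maximum number of edges in an n-vertex C_{2ℓ}-free graph. -/
open SimpleGraph

set_option linter.unusedSectionVars false
set_option maxHeartbeats 1600000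

open Finset





variable {V : Type*} [Fintype V] [DecidableEq V] (G : SimpleGraph V) [DecidableRel G.Adj]

/-- number of neighbours of `v` inside `s` -/
def degIn (v : V) (s : Finset V) : ℕ := (s.filter (G.Adj v)).card

/-- number of ordered adjacent pairs inside `s` -/
def dIn (s : Finset V) : ℕ := ∑ v ∈ s, degIn G v s

lemma degIn_union {v : V} {a b : Finset V} (h : Disjoint a b) :
    degIn G v (a ∪ b) = degIn G v a + degIn G v b := by
  unfold degIn
  rw [filter_union, card_union_of_disjoint (h.mono (filter_subset _ _) (filter_subset _ _))]

lemma degIn_le_card_erase {v : V} {s : Finset V} : degIn G v s ≤ (s.erase v).card := by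
  apply card_le_card
  intro w hw
  simp only [mem_filter] at hw
  exact mem_erase.2 ⟨fun h => G.irrefl (h ▸ hw.2), hw.1⟩

lemma dIn_erase {v : V} {s : Finset V} (hv : v ∈ s) :
    dIn G s = dIn G (s.erase v) + 2 * degIn G v s := by
  have hsplit : s.erase v ∪ {v} = s := by
    rw [union_comm, ← Finset.insert_eq, Finset.insert_erase hv]
  have hdisj : Disjoint (s.erase v) ({v} : Finset V) := by
    simp [Finset.disjoint_singleton_right]
  have key : ∀ u, degIn G u s = degIn G u (s.erase v) + degIn G u {v} := by
    intro u; rw [← degIn_union G hdisj, hsplit]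
  have hsingle : ∀ u, degIn G u {v} = if G.Adj v u then 1 else 0 := by
    intro u
    unfold degIn
    rw [Finset.filter_singleton]
    by_cases h : G.Adj u v
    · simp [h, h.symm]
    · have h' : ¬ G.Adj v u := fun hh => h hh.symm
      simp [h, h']
  have hsum : ∑ u ∈ s.erase v, degIn G u s
      = dIn G (s.erase v) + ∑ u ∈ s.erase v, degIn G u {v} := by
    unfold dIn
    rw [← Finset.sum_add_distrib]
    exact Finset.sum_congr rfl fun u _ => key u
  have h2 : ∑ u ∈ s.erase v, degIn G u {v} = degIn G v (s.erase v) := by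
    rw [Finset.sum_congr rfl fun u _ => hsingle u, Finset.sum_boole]
    simp [degIn]
  have h3 : degIn G v (s.erase v) = degIn G v s := by
    unfold degIn
    congr 1
    rw [Finset.filter_erase]
    apply Finset.erase_eq_of_notMem
    simp
  have h4 : dIn G s = degIn G v s + ∑ u ∈ s.erase v, degIn G u s := by
    unfold dIn
    rw [← Finset.add_sum_erase _ _ hv]
  rw [h4, hsum, h2, h3]; ring

lemma dIn_split {A s : Finset V} (hA : A ⊆ s)
    (h : ∀ a ∈ A, ∀ b ∈ s, b ∉ A → ¬G.Adj a b) :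
    dIn G s = dIn G A + dIn G (s \ A) := by
  have hu : A ∪ (s \ A) = s := Finset.union_sdiff_of_subset hA
  have hd : Disjoint A (s \ A) := Finset.disjoint_sdiff
  have key : ∀ u, degIn G u s = degIn G u A + degIn G u (s \ A) := by
    intro u; rw [← degIn_union G hd, hu]
  have hzA : ∀ a ∈ A, degIn G a (s \ A) = 0 := by
    intro a ha
    unfold degIn
    rw [Finset.card_eq_zero, Finset.filter_eq_empty_iff]
    intro b hb
    rw [Finset.mem_sdiff] at hb
    exact h a ha b hb.1 hb.2
  have hzB : ∀ b ∈ s \ A, degIn G b A = 0 := by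
    intro b hb
    unfold degIn
    rw [Finset.card_eq_zero, Finset.filter_eq_empty_iff]
    intro a ha hadj
    rw [Finset.mem_sdiff] at hb
    exact h a ha b hb.1 hb.2 hadj.symm
  unfold dIn
  calc ∑ v ∈ s, degIn G v s = ∑ v ∈ A ∪ (s \ A), degIn G v s := by rw [hu]
    _ = ∑ v ∈ A, degIn G v s + ∑ v ∈ s \ A, degIn G v s := Finset.sum_union hd
    _ = ∑ v ∈ A, degIn G v A + ∑ v ∈ s \ A, degIn G v (s \ A) := by
        congr 1
        · exact Finset.sum_congr rfl fun a ha => by rw [key a, hzA a ha]; omega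
        · exact Finset.sum_congr rfl fun b hb => by rw [key b, hzB b hb]; omega

lemma dIn_le (s : Finset V) : dIn G s ≤ s.card * (s.card - 1) := by
  unfold dIn
  calc ∑ v ∈ s, degIn G v s ≤ ∑ v ∈ s, (s.card - 1) := by
        apply Finset.sum_le_sum
        intro v hv
        calc degIn G v s ≤ (s.erase v).card := degIn_le_card_erase G
          _ = s.card - 1 := Finset.card_erase_of_mem hv
    _ = s.card * (s.card - 1) := by rw [Finset.sum_const, smul_eq_mul]







/-- The index permutation used in the Erdős–Gallai rotation argument. -/
def rotIdx (j i m t : ℕ) : ℕ :=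
  if t ≤ j then j - t else if t ≤ j + m - i then i + (t - j) else j + m + 1 - t

variable {V : Type*} (G : SimpleGraph V)

lemma rotation_extend (u : ℕ → V) (m i j : ℕ)
    (hchain : ∀ r, r < m → G.Adj (u r) (u (r+1)))
    (hinj : ∀ r1, r1 ≤ m → ∀ r2, r2 ≤ m → u r1 = u r2 → r1 = r2)
    (hi : i < m) (hj : j ≤ i)
    (h0 : G.Adj (u 0) (u (i+1))) (h1 : G.Adj (u m) (u i))
    (w : V) (hw : ∀ r, r ≤ m → u r ≠ w) (hadjw : G.Adj w (u j)) :
    ∃ L' : List V, L'.Chain' G.Adj ∧ L'.Nodup ∧ L'.length = m + 2 ∧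
      ∀ x ∈ L', x = w ∨ ∃ r, r ≤ m ∧ x = u r := by
  have hσle : ∀ t, t ≤ m → rotIdx j i m t ≤ m := by
    intro t ht; simp only [rotIdx]; split_ifs <;> omega
  have hσinj : ∀ t1, t1 ≤ m → ∀ t2, t2 ≤ m →
      rotIdx j i m t1 = rotIdx j i m t2 → t1 = t2 := by
    intro t1 ht1 t2 ht2 he; simp only [rotIdx] at he; split_ifs at he <;> omega
  have hσ0 : rotIdx j i m 0 = j := by simp only [rotIdx]; rw [if_pos (Nat.zero_le j)]; omega
  have key : ∀ t, t < m → G.Adj (u (rotIdx j i m t)) (u (rotIdx j i m (t+1))) := by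
    intro t ht
    rcases Nat.lt_or_ge t j with c | c
    · have e1 : rotIdx j i m t = j - t := by
        simp only [rotIdx]; rw [if_pos (by omega)]
      have e2 : rotIdx j i m (t+1) = j - t - 1 := by
        simp only [rotIdx]; rw [if_pos (by omega)]; omega
      have h := hchain (j - t - 1) (by omega)
      have e3 : j - t - 1 + 1 = j - t := by omega
      rw [e3] at h
      rw [e1, e2]; exact h.symm
    · rcases Nat.eq_or_lt_of_le c with c' | c'
      · -- t = j
        have e1 : rotIdx j i m t = 0 := by
          simp only [rotIdx]; rw [if_pos (by omega)]; omega
        have e2 : rotIdx j i m (t+1) = i + 1 := by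
          simp only [rotIdx]; rw [if_neg (by omega), if_pos (by omega)]; omega
        rw [e1, e2]; exact h0
      · rcases Nat.lt_or_ge t (j + m - i) with d | d
        · -- j < t < j + m - i
          have e1 : rotIdx j i m t = i + (t - j) := by
            simp only [rotIdx]; rw [if_neg (by omega), if_pos (by omega)]
          have e2 : rotIdx j i m (t+1) = i + (t - j) + 1 := by
            simp only [rotIdx]; rw [if_neg (by omega), if_pos (by omega)]; omega
          rw [e1, e2]; exact hchain (i + (t - j)) (by omega)
        · rcases Nat.eq_or_lt_of_le d with d' | d'
          · -- t = j + m - i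
            have e1 : rotIdx j i m t = m := by
              simp only [rotIdx]; rw [if_neg (by omega), if_pos (by omega)]; omega
            have e2 : rotIdx j i m (t+1) = i := by
              simp only [rotIdx]; rw [if_neg (by omega), if_neg (by omega)]; omega
            rw [e1, e2]; exact h1
          · -- t > j + m - i
            have e1 : rotIdx j i m t = (j + m - t) + 1 := by
              simp only [rotIdx]; rw [if_neg (by omega), if_neg (by omega)]; omega
            have e2 : rotIdx j i m (t+1) = j + m - t := by
              simp only [rotIdx]; rw [if_neg (by omega), if_neg (by omega)]; omega
            have h := hchain (j + m - t) (by omega)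
            rw [e1, e2]; exact h.symm
  set f : Fin (m+1) → V := fun t => u (rotIdx j i m t.val) with hf
  refine ⟨w :: List.ofFn f, ?_, ?_, ?_, ?_⟩
  · show List.IsChain _ _; rw [List.isChain_iff_getElem]
    intro t ht
    simp only [List.length_cons, List.length_ofFn] at ht
    match t with
    | 0 =>
      simp only [List.get_eq_getElem, List.getElem_cons_zero, List.getElem_cons_succ,
        List.getElem_ofFn]
      show G.Adj w (u (rotIdx j i m (0 : Fin (m+1)).val))
      simp only [Fin.val_zero]
      rw [hσ0]; exact hadjw
    | (t+1) =>
      simp only [List.get_eq_getElem, List.getElem_cons_succ, List.getElem_ofFn]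
      exact key t (by omega)
  · rw [List.nodup_cons]
    constructor
    · intro hmem
      rw [List.mem_ofFn] at hmem
      obtain ⟨t, hft⟩ := hmem
      exact hw _ (hσle t.val (by omega)) hft
    · rw [List.nodup_ofFn]
      intro t1 t2 he
      have := hσinj t1.val (by omega) t2.val (by omega)
        (hinj _ (hσle _ (by omega)) _ (hσle _ (by omega)) he)
      exact Fin.ext this
  · simp
  · intro x hx
    rcases List.mem_cons.1 hx with h | h
    · exact Or.inl h
    · rw [List.mem_ofFn] at h
      obtain ⟨t, hft⟩ := h
      exact Or.inr ⟨rotIdx j i m t.val, hσle t.val (by omega), hft.symm⟩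


section EG
variable {V : Type*} [Fintype V] [DecidableEq V] (G : SimpleGraph V) [DecidableRel G.Adj]

theorem erdos_gallai (k : ℕ) : ∀ s : Finset V,
    (∀ L : List V, L.Chain' G.Adj → L.Nodup → (∀ x ∈ L, x ∈ s) → L.length ≤ k + 1) →
    dIn G s ≤ k * s.card := by
  intro s
  induction s using Finset.strongInduction with
  | _ s IH =>
  intro hpath
  by_cases hA : ∃ v ∈ s, 2 * degIn G v s ≤ k
  · obtain ⟨v, hv, hdeg⟩ := hA
    have h1 : dIn G s = dIn G (s.erase v) + 2 * degIn G v s := dIn_erase G hv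
    have h2 : dIn G (s.erase v) ≤ k * (s.erase v).card := by
      apply IH _ (Finset.erase_ssubset hv)
      intro L hc hn hm
      exact hpath L hc hn fun x hx => Finset.mem_of_mem_erase (hm x hx)
    rw [Finset.card_erase_of_mem hv] at h2
    have h4 : 1 ≤ s.card := Finset.card_pos.2 ⟨v, hv⟩
    have h5 : k * (s.card - 1) + k = k * s.card := by
      calc k * (s.card - 1) + k = k * ((s.card - 1) + 1) := by ring
        _ = k * s.card := by rw [Nat.sub_add_cancel h4]
    omega
  · push_neg at hA
    rcases Finset.eq_empty_or_nonempty s with rfl | ⟨v0, hv0⟩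
    · simp [dIn]
    classical
    set P : ℕ → Prop := fun len => ∃ L : List V, L.Chain' G.Adj ∧ L.Nodup ∧
      (∀ x ∈ L, x ∈ s) ∧ L.length = len with hP
    have hP1 : P 1 := ⟨[v0], by simp [List.Chain'], by simp, by simp [hv0], rfl⟩
    have hlenle : ∀ L : List V, L.Chain' G.Adj → L.Nodup → (∀ x ∈ L, x ∈ s) →
        L.length ≤ Nat.findGreatest P (k+1) := by
      intro L hc hn hm
      exact Nat.le_findGreatest (hpath L hc hn hm) ⟨L, hc, hn, hm, rfl⟩
    set M : ℕ := Nat.findGreatest P (k+1) with hM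
    have hM1 : 1 ≤ M := Nat.le_findGreatest (by omega) hP1
    have hMk : M ≤ k + 1 := Nat.findGreatest_le (k+1)
    obtain ⟨L, hLc, hLn, hLm, hLlen⟩ : P M := Nat.findGreatest_spec (by omega : 1 ≤ k+1) hP1
    set m : ℕ := M - 1 with hm
    have hLlen' : L.length = m + 1 := by omega
    have hLne : L ≠ [] := by intro h; rw [h] at hLlen'; simp at hLlen'
    set u : ℕ → V := fun r => L.getD r v0 with hu
    have hgetD : ∀ r (hr : r ≤ m), u r = L[r]'(by omega) := by
      intro r hr
      simp only [hu]
      exact List.getD_eq_getElem L v0 (by omega)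
    have humem : ∀ r, r ≤ m → u r ∈ L := by
      intro r hr; rw [hgetD r hr]; exact List.getElem_mem _
    have hus : ∀ r, r ≤ m → u r ∈ s := fun r hr => hLm _ (humem r hr)
    have hchain : ∀ r, r < m → G.Adj (u r) (u (r+1)) := by
      intro r hr
      rw [hgetD r (by omega), hgetD (r+1) (by omega)]
      simp only [List.Chain'] at hLc; rw [List.isChain_iff_getElem] at hLc
      have := hLc r (by omega)
      simpa only [List.get_eq_getElem] using this
    have hgetc : ∀ (r1 r2 : ℕ) (h1 : r1 < L.length) (h2 : r2 < L.length), r1 = r2 →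
        L[r1] = L[r2] := by
      intro r1 r2 h1 h2 h; subst h; rfl
    have hinj : ∀ r1, r1 ≤ m → ∀ r2, r2 ≤ m → u r1 = u r2 → r1 = r2 := by
      intro r1 h1 r2 h2 he
      rw [hgetD r1 h1, hgetD r2 h2] at he
      have h' : (fun (i : Fin L.length) => L[(i : ℕ)]) ⟨r1, by omega⟩ =
          (fun (i : Fin L.length) => L[(i : ℕ)]) ⟨r2, by omega⟩ := he
      have h2' := List.nodup_iff_injective_getElem.1 hLn h'
      simpa using congrArg Fin.val h2'
    have huidx : ∀ w ∈ L, u (List.idxOf w L) = w := by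
      intro w hw
      rw [hgetD _ (by have := List.idxOf_lt_length_iff.2 hw; omega)]
      exact List.getElem_idxOf (List.idxOf_lt_length_iff.2 hw)
    have hidx : ∀ z ∈ L, ∃ r, r ≤ m ∧ u r = z := by
      intro z hz
      refine ⟨List.idxOf z L, ?_, huidx z hz⟩
      have := List.idxOf_lt_length_iff.2 hz; omega
    have hu0 : u 0 = L.head hLne := by
      rw [hgetD 0 (by omega), List.head_eq_getElem_zero]
    have hum : u m = L.getLast hLne := by
      rw [hgetD m (by omega), List.getLast_eq_getElem]
      exact hgetc _ _ (by omega) (by omega) (by omega)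
    -- maximality: neighbours (in s) of the endpoints lie on the path
    have hnbr0 : ∀ w ∈ s, G.Adj (u 0) w → w ∈ L := by
      intro w hws hadj
      by_contra hwL
      have hchainw : (w :: L).Chain' G.Adj := by
        simp only [List.Chain']; rw [List.isChain_cons]
        refine ⟨?_, hLc⟩
        intro h hh
        rw [List.head?_eq_head hLne, Option.mem_some_iff] at hh
        rw [← hh, ← hu0]
        exact hadj.symm
      have := hlenle (w :: L) hchainw (List.nodup_cons.2 ⟨hwL, hLn⟩)
        (by intro x hx; rcases List.mem_cons.1 hx with rfl | h
            exacts [hws, hLm x h])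
      simp only [List.length_cons, hLlen'] at this
      omega
    have hnbrm : ∀ w ∈ s, G.Adj (u m) w → w ∈ L := by
      intro w hws hadj
      by_contra hwL
      have hchainw : (L ++ [w]).Chain' G.Adj := by
        simp only [List.Chain']; rw [List.isChain_append]
        refine ⟨hLc, by simp, ?_⟩
        intro x hx y hy
        rw [List.getLast?_eq_getLast hLne, Option.mem_some_iff] at hx
        simp only [List.head?_cons, Option.mem_some_iff] at hy
        rw [← hx, ← hy, ← hum]
        exact hadj
      have := hlenle (L ++ [w]) hchainw
        (by rw [List.nodup_append]; exact ⟨hLn, by simp, fun a ha b hb hab => hwL (by simp at hb; rw [← hb, ← hab]; exact ha)⟩)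
        (by intro x hx; rcases List.mem_append.1 hx with h | h
            · exact hLm x h
            · simp at h; rw [h]; exact hws)
      simp only [List.length_append, hLlen', List.length_singleton] at this
      omega
    -- pigeonhole: rotation index
    set x : V := u 0 with hx
    set y : V := u m with hy
    have hxs : x ∈ s := hus 0 (by omega)
    have hys : y ∈ s := hus m (by omega)
    set A : Finset ℕ := (Finset.range m).filter (fun i => G.Adj x (u (i+1))) with hA'
    set B : Finset ℕ := (Finset.range m).filter (fun i => G.Adj y (u i)) with hB'
    have hcardA : degIn G x s ≤ A.card := by
      apply Finset.card_le_card_of_injOn (fun w => List.idxOf w L - 1)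
      · intro w hw
        simp only [degIn, Finset.mem_coe, Finset.mem_filter] at hw
        have hwL : w ∈ L := hnbr0 w hw.1 hw.2
        have hlt : List.idxOf w L < m + 1 := by
          have := List.idxOf_lt_length_iff.2 hwL; omega
        have hne0 : List.idxOf w L ≠ 0 := by
          intro h0
          have huu := huidx w hwL
          rw [h0] at huu
          exact G.irrefl (huu ▸ hw.2)
        have huw : u (List.idxOf w L - 1 + 1) = w := by
          rw [(by omega : List.idxOf w L - 1 + 1 = List.idxOf w L)]
          exact huidx w hwL
        simp only [hA', Finset.mem_coe, Finset.mem_filter, Finset.mem_range]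
        refine ⟨by omega, ?_⟩
        rw [huw]; exact hw.2
      · intro w1 hw1 w2 hw2 he
        simp only [degIn, Finset.coe_filter, Set.mem_setOf_eq] at hw1 hw2
        have h1L := hnbr0 w1 hw1.1 hw1.2
        have h2L := hnbr0 w2 hw2.1 hw2.2
        have e1 := huidx w1 h1L
        have e2 := huidx w2 h2L
        have hne1 : List.idxOf w1 L ≠ 0 := by
          intro h0
          rw [h0] at e1
          exact G.irrefl (e1 ▸ hw1.2)
        have hne2 : List.idxOf w2 L ≠ 0 := by
          intro h0
          rw [h0] at e2
          exact G.irrefl (e2 ▸ hw2.2)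
        have he' : List.idxOf w1 L - 1 = List.idxOf w2 L - 1 := he
        have hlt1 : List.idxOf w1 L < m + 1 := by
          have := List.idxOf_lt_length_iff.2 h1L; omega
        have hlt2 : List.idxOf w2 L < m + 1 := by
          have := List.idxOf_lt_length_iff.2 h2L; omega
        have hee : List.idxOf w1 L = List.idxOf w2 L := by omega
        rw [← e1, ← e2, hee]
    have hcardB : degIn G y s ≤ B.card := by
      apply Finset.card_le_card_of_injOn (fun w => List.idxOf w L)
      · intro w hw
        simp only [degIn, Finset.mem_coe, Finset.mem_filter] at hw
        have hwL : w ∈ L := hnbrm w hw.1 hw.2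
        have hlt : List.idxOf w L < m + 1 := by
          have := List.idxOf_lt_length_iff.2 hwL; omega
        have hnem : List.idxOf w L ≠ m := by
          intro h0
          have huu := huidx w hwL
          rw [h0] at huu
          exact G.irrefl (huu ▸ hw.2)
        have huw : u (List.idxOf w L) = w := huidx w hwL
        simp only [hB', Finset.mem_coe, Finset.mem_filter, Finset.mem_range]
        refine ⟨by omega, ?_⟩
        rw [huw]; exact hw.2
      · intro w1 hw1 w2 hw2 he
        simp only [degIn, Finset.coe_filter, Set.mem_setOf_eq] at hw1 hw2
        have h1L := hnbrm w1 hw1.1 hw1.2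
        have h2L := hnbrm w2 hw2.1 hw2.2
        have e1 := huidx w1 h1L
        have e2 := huidx w2 h2L
        have he' : List.idxOf w1 L = List.idxOf w2 L := he
        rw [← e1, ← e2, he']
    have hdx := hA x hxs
    have hdy := hA y hys
    have hMle : m ≤ k := by omega
    have hABcard : m + 1 ≤ A.card + B.card := by omega
    have hABsub : A ∪ B ⊆ Finset.range m := by
      apply Finset.union_subset <;> exact Finset.filter_subset _ _
    have hABinter : (A ∩ B).Nonempty := by
      rw [← Finset.card_pos]
      have h1 := Finset.card_union_add_card_inter A B
      have h2 : (A ∪ B).card ≤ m := by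
        calc (A ∪ B).card ≤ (Finset.range m).card := Finset.card_le_card hABsub
          _ = m := Finset.card_range m
      omega
    obtain ⟨i, hiAB⟩ := hABinter
    rw [Finset.mem_inter] at hiAB
    have hiA := hiAB.1
    have hiB := hiAB.2
    simp only [hA', Finset.mem_filter, Finset.mem_range] at hiA
    simp only [hB', Finset.mem_filter, Finset.mem_range] at hiB
    obtain ⟨him, hadj0⟩ := hiA
    obtain ⟨-, hadjm⟩ := hiB
    -- Claim: no edges from L to the rest of s
    set S : Finset V := L.toFinset with hS
    have hSsub : S ⊆ s := by intro z hz; exact hLm z (List.mem_toFinset.1 hz)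
    have hScard : S.card = m + 1 := by
      rw [hS, List.toFinset_card_of_nodup hLn, hLlen']
    have claim2 : ∀ a ∈ S, ∀ b ∈ s, b ∉ S → ¬G.Adj a b := by
      intro z hzS w hws hwS hadj
      have hzL : z ∈ L := List.mem_toFinset.1 hzS
      have hwL : w ∉ L := fun h => hwS (List.mem_toFinset.2 h)
      obtain ⟨j, hjm, hju⟩ := hidx z hzL
      have hwne : ∀ r, r ≤ m → u r ≠ w := by
        intro r hr he; exact hwL (he ▸ humem r hr)
      have hrot : ∃ L' : List V, L'.Chain' G.Adj ∧ L'.Nodup ∧ L'.length = m + 2 ∧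
          ∀ x' ∈ L', x' = w ∨ ∃ r, r ≤ m ∧ x' = u r := by
        by_cases hji : j ≤ i
        · exact rotation_extend G u m i j hchain hinj him hji hadj0 hadjm w hwne
            (hju ▸ hadj.symm)
        · -- apply to the reversed path
          push_neg at hji
          set u' : ℕ → V := fun r => u (m - r) with hu'
          have hchain' : ∀ r, r < m → G.Adj (u' r) (u' (r+1)) := by
            intro r hr
            have h := hchain (m - r - 1) (by omega)
            have e : m - r - 1 + 1 = m - r := by omega
            rw [e] at h
            simp only [hu']
            have e2 : m - (r + 1) = m - r - 1 := by omega
            rw [e2]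
            exact h.symm
          have hinj' : ∀ r1, r1 ≤ m → ∀ r2, r2 ≤ m → u' r1 = u' r2 → r1 = r2 := by
            intro r1 h1 r2 h2 he
            have := hinj (m - r1) (by omega) (m - r2) (by omega) he
            omega
          have h0' : G.Adj (u' 0) (u' ((m - 1 - i) + 1)) := by
            simp only [hu']
            have e1 : m - 0 = m := by omega
            have e2 : m - (m - 1 - i + 1) = i := by omega
            rw [e1, e2]
            exact hadjm
          have h1' : G.Adj (u' m) (u' (m - 1 - i)) := by
            simp only [hu']
            have e1 : m - m = 0 := by omega
            have e2 : m - (m - 1 - i) = i + 1 := by omega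
            rw [e1, e2]
            exact hadj0
          have hwne' : ∀ r, r ≤ m → u' r ≠ w := fun r hr => hwne (m - r) (by omega)
          have hadjw' : G.Adj w (u' (m - j)) := by
            simp only [hu']
            have e : m - (m - j) = j := by omega
            rw [e, hju]
            exact hadj.symm
          obtain ⟨L', hc', hn', hl', hm'⟩ := rotation_extend G u' m (m - 1 - i) (m - j)
            hchain' hinj' (by omega) (by omega) h0' h1' w hwne' hadjw'
          refine ⟨L', hc', hn', hl', ?_⟩
          intro x' hx'
          rcases hm' x' hx' with h | ⟨r, hr, he⟩
          · exact Or.inl h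
          · exact Or.inr ⟨m - r, by omega, he⟩
      obtain ⟨L', hc', hn', hl', hm'⟩ := hrot
      have := hlenle L' hc' hn' (by
        intro x' hx'
        rcases hm' x' hx' with rfl | ⟨r, hr, rfl⟩
        · exact hws
        · exact hus r hr)
      omega
    -- split and conclude
    have hsplit := dIn_split G hSsub claim2
    have hd1 : dIn G S ≤ k * S.card := by
      calc dIn G S ≤ S.card * (S.card - 1) := dIn_le G S
        _ = (m + 1) * m := by rw [hScard]; simp
        _ ≤ (m + 1) * k := by exact Nat.mul_le_mul_left _ hMle
        _ = k * S.card := by rw [hScard]; ring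
    have hssdiff : s \ S ⊂ s := by
      apply Finset.sdiff_ssubset hSsub
      exact ⟨x, by rw [hS]; exact List.mem_toFinset.2 (humem 0 (by omega))⟩
    have hd2 : dIn G (s \ S) ≤ k * (s \ S).card := by
      apply IH _ hssdiff
      intro L'' hc hn hmm
      exact hpath L'' hc hn fun z hz => (Finset.mem_sdiff.1 (hmm z hz)).1
    have hcards : S.card + (s \ S).card = s.card := by
      rw [Finset.card_sdiff_of_subset hSsub]
      have := Finset.card_le_card hSsub
      omega
    calc dIn G s = dIn G S + dIn G (s \ S) := hsplit
      _ ≤ k * S.card + k * (s \ S).card := Nat.add_le_add hd1 hd2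
      _ = k * (S.card + (s \ S).card) := by ring
      _ = k * s.card := by rw [hcards]
end EG


section Counting
variable {V : Type*} [Fintype V] [DecidableEq V] (G : SimpleGraph V) [DecidableRel G.Adj]

lemma dIn_eq_card (s : Finset V) :
    dIn G s = ((s ×ˢ s).filter fun p => G.Adj p.1 p.2).card := by
  rw [Finset.card_eq_sum_card_fiberwise
    (f := Prod.fst) (t := s)
    (fun p hp => (Finset.mem_product.1 (Finset.mem_filter.1 hp).1).1)]
  apply Finset.sum_congr rfl
  intro v hv
  apply Finset.card_bij (fun w _ => (v, w))
  · intro w hw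
    simp only [degIn, Finset.mem_filter] at hw
    simp only [Finset.mem_filter, Finset.mem_product]
    exact ⟨⟨⟨hv, hw.1⟩, hw.2⟩, trivial⟩
  · intro w1 h1 w2 h2 he
    exact congrArg Prod.snd he
  · intro p hp
    simp only [Finset.mem_filter, Finset.mem_product] at hp
    refine ⟨p.2, ?_, ?_⟩
    · simp only [degIn, Finset.mem_filter]
      have h1 := hp.1.1.2
      have h2 := hp.1.2
      rw [hp.2] at h2
      exact ⟨h1, h2⟩
    · rw [← hp.2]

/-- ordered triangles -/
def oT : ℕ := ((Finset.univ ×ˢ Finset.univ ×ˢ Finset.univ : Finset (V × V × V)).filter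
    fun p => G.Adj p.1 p.2.1 ∧ G.Adj p.1 p.2.2 ∧ G.Adj p.2.1 p.2.2).card

lemma oT_eq_sum : oT G = ∑ v : V, dIn G (G.neighborFinset v) := by
  unfold oT
  rw [Finset.card_eq_sum_card_fiberwise (f := Prod.fst) (t := Finset.univ)
    (fun p _ => Finset.mem_univ _)]
  apply Finset.sum_congr rfl
  intro v hv
  rw [dIn_eq_card]
  apply Finset.card_bij (fun p _ => p.2)
  · intro p hp
    simp only [Finset.mem_filter, Finset.mem_product] at hp
    obtain ⟨⟨-, h1, h2, h3⟩, h4⟩ := hp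
    rw [h4] at h1 h2
    simp only [Finset.mem_filter, Finset.mem_product, SimpleGraph.mem_neighborFinset]
    exact ⟨⟨h1, h2⟩, h3⟩
  · intro p1 hp1 p2 hp2 he
    simp only [Finset.mem_filter] at hp1 hp2
    have : p1.1 = p2.1 := by rw [hp1.2, hp2.2]
    exact Prod.ext this he
  · intro q hq
    simp only [Finset.mem_filter, Finset.mem_product, SimpleGraph.mem_neighborFinset] at hq
    refine ⟨(v, q), ?_, rfl⟩
    simp only [Finset.mem_filter, Finset.mem_product, Finset.mem_univ, true_and]
    exact ⟨⟨hq.1.1, hq.1.2, hq.2⟩, trivial⟩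

lemma six_mul_cliques : 6 * (G.cliqueFinset 3).card = oT G := by
  unfold oT
  rw [Finset.card_eq_sum_card_fiberwise
    (f := fun p : V × V × V => ({p.1, p.2.1, p.2.2} : Finset V)) (t := G.cliqueFinset 3)
    (by
      intro p hp
      simp only [Finset.mem_coe, Finset.mem_filter] at hp
      rw [Finset.mem_coe, SimpleGraph.mem_cliqueFinset_iff]
      exact SimpleGraph.is3Clique_triple_iff.2 hp.2)]
  rw [Finset.sum_congr rfl (fun t ht => ?_), Finset.sum_const, smul_eq_mul, mul_comm]
  obtain ⟨a, b, c, hab, hac, hbc, rfl⟩ :=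
    SimpleGraph.is3Clique_iff.1 (SimpleGraph.mem_cliqueFinset_iff.1 ht)
  have nab : a ≠ b := hab.ne
  have nac : a ≠ c := hac.ne
  have nbc : b ≠ c := hbc.ne
  have key : (((Finset.univ ×ˢ Finset.univ ×ˢ Finset.univ : Finset (V × V × V)).filter
      fun p => G.Adj p.1 p.2.1 ∧ G.Adj p.1 p.2.2 ∧ G.Adj p.2.1 p.2.2).filter
      fun p => ({p.1, p.2.1, p.2.2} : Finset V) = {a, b, c}) =
      {(a,b,c), (a,c,b), (b,a,c), (b,c,a), (c,a,b), (c,b,a)} := by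
    ext p
    obtain ⟨p1, p2, p3⟩ := p
    simp only [Finset.mem_filter, Finset.mem_product, Finset.mem_univ, true_and,
      Finset.mem_insert, Finset.mem_singleton, Prod.mk.injEq]
    constructor
    · rintro ⟨⟨h12, h13, h23⟩, hset⟩
      have hm1 : p1 = a ∨ p1 = b ∨ p1 = c := by
        have : p1 ∈ ({a, b, c} : Finset V) := hset ▸ (by simp)
        simpa using this
      have hm2 : p2 = a ∨ p2 = b ∨ p2 = c := by
        have : p2 ∈ ({a, b, c} : Finset V) := hset ▸ (by simp)
        simpa using this
      have hm3 : p3 = a ∨ p3 = b ∨ p3 = c := by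
        have : p3 ∈ ({a, b, c} : Finset V) := hset ▸ (by simp)
        simpa using this
      have n12 : p1 ≠ p2 := h12.ne
      have n13 : p1 ≠ p3 := h13.ne
      have n23 : p2 ≠ p3 := h23.ne
      rcases hm1 with rfl | rfl | rfl <;> rcases hm2 with rfl | rfl | rfl <;>
        rcases hm3 with rfl | rfl | rfl <;> simp_all
    · rintro (⟨rfl, rfl, rfl⟩ | ⟨rfl, rfl, rfl⟩ | ⟨rfl, rfl, rfl⟩ | ⟨rfl, rfl, rfl⟩ |
        ⟨rfl, rfl, rfl⟩ | ⟨rfl, rfl, rfl⟩) <;>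
      refine ⟨⟨?_, ?_, ?_⟩, ?_⟩ <;>
      first
        | exact hab | exact hbc | exact hac | exact hab.symm | exact hbc.symm | exact hac.symm
        | (ext z; simp; try tauto)
  rw [key]
  rw [Finset.card_insert_of_notMem (by simp [Prod.ext_iff, nab, nac, nbc, nab.symm, nac.symm, nbc.symm]),
    Finset.card_insert_of_notMem (by simp [Prod.ext_iff, nab, nac, nbc, nab.symm, nac.symm, nbc.symm]),
    Finset.card_insert_of_notMem (by simp [Prod.ext_iff, nab, nac, nbc, nab.symm, nac.symm, nbc.symm]),
    Finset.card_insert_of_notMem (by simp [Prod.ext_iff, nab, nac, nbc, nab.symm, nac.symm, nbc.symm]),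
    Finset.card_insert_of_notMem (by simp [Prod.ext_iff, nab, nac, nbc, nab.symm, nac.symm, nbc.symm]),
    Finset.card_singleton]

end Counting



section Walks
variable {V : Type*} (G : SimpleGraph V)

lemma exists_walk_of_chain : ∀ (L : List V) (x y : V), L.Chain' G.Adj →
    L.head? = some x → L.getLast? = some y → ∃ p : G.Walk x y, p.support = L := by
  intro L
  induction L with
  | nil => intro x y _ h _; simp at h
  | cons a L ih =>
    intro x y hc hh hl
    rw [List.head?_cons, Option.some.injEq] at hh
    subst hh
    cases L with
    | nil =>
      simp only [List.getLast?_singleton, Option.some.injEq] at hl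
      subst hl
      exact ⟨SimpleGraph.Walk.nil, rfl⟩
    | cons b L' =>
      simp only [List.Chain'] at hc; rw [List.isChain_cons_cons] at hc
      rw [List.getLast?_cons_cons] at hl
      obtain ⟨p, hp⟩ := ih b y hc.2 rfl hl
      exact ⟨SimpleGraph.Walk.cons hc.1 p, by simp [hp]⟩

lemma no_long_path_in_nbhd {l : ℕ} (hl : 2 ≤ l) (hfree : CycleFree G (2*l)) (v : V) :
    ∀ L : List V, L.Chain' G.Adj → L.Nodup → (∀ x ∈ L, G.Adj v x) →
      L.length ≤ (2*l - 3) + 1 := by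
  intro L hc hn hmem
  by_contra hlen
  push_neg at hlen
  have hlen' : 2*l - 1 ≤ L.length := by omega
  set L1 : List V := L.take (2*l - 1) with hL1
  have hL1len : L1.length = 2*l - 1 := by
    rw [hL1, List.length_take]; omega
  have hL1c : L1.Chain' G.Adj := hc.take _
  have hL1n : L1.Nodup := hn.sublist (List.take_sublist _ _)
  have hL1mem : ∀ x ∈ L1, G.Adj v x := fun x hx => hmem x (List.take_subset _ _ hx)
  have hne : L1 ≠ [] := by
    intro h; rw [h] at hL1len; simp at hL1len; omega
  set x : V := L1.head hne with hx
  set y : V := L1.getLast hne with hy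
  obtain ⟨p, hsup⟩ := exists_walk_of_chain G L1 x y hL1c
    (List.head?_eq_head hne) (List.getLast?_eq_getLast hne)
  have hvx : G.Adj v x := hL1mem x (List.head_mem hne)
  have hvy : G.Adj v y := hL1mem y (List.getLast_mem hne)
  have hvL1 : v ∉ L1 := fun h => G.irrefl (hL1mem v h)
  have hplen : p.length = 2*l - 2 := by
    have := p.length_support
    rw [hsup, hL1len] at this
    omega
  set q : G.Walk x v := p.append (SimpleGraph.Walk.cons hvy.symm SimpleGraph.Walk.nil)
    with hq
  have hqsup : q.support = L1 ++ [v] := by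
    rw [hq, SimpleGraph.Walk.support_append, hsup]
    simp
  have hqpath : q.IsPath := by
    rw [SimpleGraph.Walk.isPath_def, hqsup, List.nodup_append]
    refine ⟨hL1n, by simp, ?_⟩
    intro a ha b hb hab
    simp at hb
    exact hvL1 (hb ▸ hab ▸ ha)
  have hqedges : q.edges = p.edges ++ [s(y, v)] := by
    rw [hq, SimpleGraph.Walk.edges_append]
    simp
  have hxy : x ≠ y := by
    intro he
    have h0 : L1.head hne = L1[0]'(by omega) := List.head_eq_getElem_zero hne
    have h1 : L1.getLast hne = L1[L1.length - 1]'(by omega) := List.getLast_eq_getElem hne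
    have he' : (fun (i : Fin L1.length) => L1[(i : ℕ)]) ⟨0, by omega⟩ =
        (fun (i : Fin L1.length) => L1[(i : ℕ)]) ⟨L1.length - 1, by omega⟩ := by
      simp only
      rw [← h0, ← h1, ← hx, ← hy, he]
    have := List.nodup_iff_injective_getElem.1 hL1n he'
    have := congrArg Fin.val this
    simp only at this
    omega
  have hedge : s(v, x) ∉ q.edges := by
    rw [hqedges]
    intro hmem'
    rcases List.mem_append.1 hmem' with h | h
    · have : v ∈ p.support := SimpleGraph.Walk.fst_mem_support_of_mem_edges p h
      rw [hsup] at this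
      exact hvL1 this
    · simp only [List.mem_singleton] at h
      rw [Sym2.eq_iff] at h
      rcases h with ⟨h1, -⟩ | ⟨-, h2⟩
      · exact G.irrefl (h1 ▸ hvy)
      · exact hxy h2
  set c : G.Walk v v := SimpleGraph.Walk.cons hvx q with hcw
  have hcyc : c.IsCycle := (SimpleGraph.Walk.cons_isCycle_iff q hvx).2 ⟨hqpath, hedge⟩
  have hclen : c.length = 2*l := by
    rw [hcw, SimpleGraph.Walk.length_cons, hq, SimpleGraph.Walk.length_append]
    simp [hplen]
    omega
  exact hfree c hcyc hclen

end Walks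

section Main
variable {V : Type*} [Fintype V] [DecidableEq V]

theorem triangle_bound {l : ℕ} (hl : 2 ≤ l) (G : SimpleGraph V) [DecidableRel G.Adj]
    (hfree : CycleFree G (2*l)) :
    6 * (G.cliqueFinset 3).card ≤ (2*l - 3) * (2 * G.edgeFinset.card) := by
  rw [six_mul_cliques, oT_eq_sum]
  calc ∑ v : V, dIn G (G.neighborFinset v)
      ≤ ∑ v : V, (2*l - 3) * (G.neighborFinset v).card := by
        apply Finset.sum_le_sum
        intro v _
        apply erdos_gallai G (2*l - 3) (G.neighborFinset v)
        intro L hcL hnL hmL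
        exact no_long_path_in_nbhd G hl hfree v L hcL hnL
          (fun x hx => (SimpleGraph.mem_neighborFinset G v x).1 (hmL x hx))
    _ = (2*l - 3) * (2 * G.edgeFinset.card) := by
        rw [← Finset.mul_sum]
        congr 1
        have : ∀ v : V, (G.neighborFinset v).card = G.degree v := fun v => rfl
        simp only [this]
        exact G.sum_degrees_eq_twice_card_edges

end Main


section CopyCount
open SimpleGraph
variable {V : Type*} [Fintype V] [DecidableEq V] (G : SimpleGraph V) [DecidableRel G.Adj]

lemma cg3_adj : ∀ i j : Fin 3, (cycleGraph 3).Adj i j ↔ i ≠ j := by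
  rw [cycleGraph_three_eq_top]; intro i j; exact SimpleGraph.top_adj i j

lemma verts_eq_image (G' : G.Subgraph) (e : cycleGraph 3 ≃g G'.coe) :
    ((Finset.univ.image fun i : Fin 3 => ((e i : G'.verts) : V)) : Set V) = G'.verts := by
  ext v
  simp only [Finset.coe_image, Set.mem_image, Finset.mem_coe, Finset.mem_image,
    Finset.mem_univ, true_and, Finset.coe_univ, Set.image_univ, Set.mem_range]
  constructor
  · rintro ⟨i, rfl⟩; exact (e i).2
  · intro hv
    exact ⟨e.symm ⟨v, hv⟩, by rw [RelIso.apply_symm_apply]⟩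

lemma subgraph_adj_iff_s8 (G' : G.Subgraph) (e : cycleGraph 3 ≃g G'.coe) {a b : V} :
    G'.Adj a b ↔ a ∈ G'.verts ∧ b ∈ G'.verts ∧ a ≠ b := by
  constructor
  · intro h
    exact ⟨G'.edge_vert h, G'.edge_vert h.symm, (G'.adj_sub h).ne⟩
  · rintro ⟨ha, hb, hne⟩
    have hA : G'.coe.Adj ⟨a, ha⟩ ⟨b, hb⟩ := by
      have h1 : (⟨a, ha⟩ : G'.verts) = e (e.symm ⟨a, ha⟩) := (e.apply_symm_apply _).symm
      have h2 : (⟨b, hb⟩ : G'.verts) = e (e.symm ⟨b, hb⟩) := (e.apply_symm_apply _).symm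
      rw [h1, h2, e.map_adj_iff, cg3_adj]
      intro hc
      apply hne
      have := congrArg e hc
      rw [e.apply_symm_apply, e.apply_symm_apply] at this
      exact congrArg Subtype.val this
    exact (SimpleGraph.Subgraph.coe_adj G' ⟨a, ha⟩ ⟨b, hb⟩) ▸ hA

lemma copyCount_eq_cliques :
    Nat.card {G' : G.Subgraph // Nonempty (cycleGraph 3 ≃g G'.coe)} =
      (G.cliqueFinset 3).card := by
  classical
  have hF : ∀ (p : {G' : G.Subgraph // Nonempty (cycleGraph 3 ≃g G'.coe)}),
      ∃ t : Finset V, t ∈ G.cliqueFinset 3 ∧ (↑t : Set V) = p.1.verts := by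
    rintro ⟨G', ⟨e⟩⟩
    refine ⟨Finset.univ.image fun i : Fin 3 => ((e i : G'.verts) : V), ?_,
      verts_eq_image G G' e⟩
    rw [SimpleGraph.mem_cliqueFinset_iff]
    constructor
    · -- clique
      intro a ha b hb hab
      simp only [Finset.coe_image, Finset.coe_univ, Set.image_univ, Set.mem_range] at ha hb
      have haV : a ∈ G'.verts := by
        rw [← verts_eq_image G G' e]
        simp only [Finset.coe_image, Finset.coe_univ, Set.image_univ]
        exact ha
      have hbV : b ∈ G'.verts := by
        rw [← verts_eq_image G G' e]
        simp only [Finset.coe_image, Finset.coe_univ, Set.image_univ]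
        exact hb
      exact G'.adj_sub ((subgraph_adj_iff_s8 G G' e).2 ⟨haV, hbV, hab⟩)
    · -- card
      rw [Finset.card_image_of_injective _ ?_, Finset.card_univ, Fintype.card_fin]
      intro i j hij
      exact e.toEquiv.injective (Subtype.ext hij)
  set F : {G' : G.Subgraph // Nonempty (cycleGraph 3 ≃g G'.coe)} →
      {t : Finset V // t ∈ G.cliqueFinset 3} :=
    fun p => ⟨(hF p).choose, (hF p).choose_spec.1⟩ with hFdef
  have hFverts : ∀ p, (↑((F p) : Finset V) : Set V) = p.1.verts := fun p => (hF p).choose_spec.2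
  have hinj : Function.Injective F := by
    rintro ⟨G1, ⟨e1⟩⟩ ⟨G2, ⟨e2⟩⟩ he
    have hv : G1.verts = G2.verts := by
      rw [← hFverts ⟨G1, ⟨e1⟩⟩, ← hFverts ⟨G2, ⟨e2⟩⟩, he]
    apply Subtype.ext
    apply SimpleGraph.Subgraph.ext hv
    ext a b
    rw [subgraph_adj_iff_s8 G G1 e1, subgraph_adj_iff_s8 G G2 e2, hv]
  have hsurj : Function.Surjective F := by
    rintro ⟨t, ht⟩
    rw [SimpleGraph.mem_cliqueFinset_iff] at ht
    have hcard : t.card = 3 := ht.2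
    set G' : G.Subgraph :=
      { verts := ↑t
        Adj := fun a b => a ∈ t ∧ b ∈ t ∧ G.Adj a b
        adj_sub := fun h => h.2.2
        edge_vert := fun h => h.1
        symm := ⟨fun a b h => ⟨h.2.1, h.1, h.2.2.symm⟩⟩ } with hG'
    have hvG' : G'.verts = ↑t := rfl
    have hiso : Nonempty (cycleGraph 3 ≃g G'.coe) := by
      have e0 : Fin 3 ≃ {x // x ∈ t} := (t.equivFin.trans (finCongr hcard)).symm
      have e1 : {x // x ∈ t} ≃ G'.verts := Equiv.subtypeEquivRight (fun a => by
        rw [hvG']; exact Iff.rfl)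
      refine ⟨⟨e0.trans e1, ?_⟩⟩
      intro i j
      rw [SimpleGraph.Subgraph.coe_adj, cg3_adj]
      have hmem : ∀ i : Fin 3, (((e0.trans e1) i : G'.verts) : V) ∈ t := by
        intro i
        exact Finset.mem_coe.1 (((e0.trans e1) i).2)
      constructor
      · rintro ⟨-, -, hadj⟩
        intro hij
        rw [hij] at hadj
        exact G.irrefl hadj
      · intro hij
        have hne : (((e0.trans e1) i : G'.verts) : V) ≠ (((e0.trans e1) j : G'.verts) : V) := by
          intro h
          exact hij ((e0.trans e1).injective (Subtype.ext h))
        exact ⟨hmem i, hmem j, ht.1 (hmem i) (hmem j) hne⟩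
    refine ⟨⟨G', hiso⟩, ?_⟩
    apply Subtype.ext
    apply Finset.coe_injective
    rw [hFverts ⟨G', hiso⟩, hvG']
  have := Nat.card_eq_of_bijective F ⟨hinj, hsurj⟩
  rw [this]
  exact Nat.card_eq_finsetCard _
end CopyCount


theorem stmt8 (l n : ℕ) (hl : 2 ≤ l) (G : SimpleGraph (Fin n))
    (hfree : CycleFree G (2 * l)) :
    3 * _root_.copyCount (cycleGraph 3) G ≤ (2 * l - 3) *
      sSup {m | ∃ H : SimpleGraph (Fin n), CycleFree H (2 * l) ∧ m = Nat.card H.edgeSet} := by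
  classical
  letI : DecidableRel G.Adj := Classical.decRel _
  have h1 : _root_.copyCount (cycleGraph 3) G = (G.cliqueFinset 3).card := by
    unfold _root_.copyCount
    exact copyCount_eq_cliques G
  have h2 := triangle_bound hl G hfree
  have h3 : 3 * (G.cliqueFinset 3).card ≤ (2 * l - 3) * G.edgeFinset.card := by
    have hh : 2 * (3 * (G.cliqueFinset 3).card) ≤ 2 * ((2 * l - 3) * G.edgeFinset.card) := by
      calc 2 * (3 * (G.cliqueFinset 3).card) = 6 * (G.cliqueFinset 3).card := by ring
        _ ≤ (2 * l - 3) * (2 * G.edgeFinset.card) := h2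
        _ = 2 * ((2 * l - 3) * G.edgeFinset.card) := by ring
    omega
  have hedge : G.edgeFinset.card = Nat.card G.edgeSet := by
    rw [Nat.card_coe_set_eq, Set.ncard_eq_toFinset_card']
    exact congrArg Finset.card (by ext e; simp)
  have hmem : Nat.card G.edgeSet ∈
      {m | ∃ H : SimpleGraph (Fin n), CycleFree H (2 * l) ∧ m = Nat.card H.edgeSet} :=
    ⟨G, hfree, rfl⟩
  have hbdd : BddAbove
      {m | ∃ H : SimpleGraph (Fin n), CycleFree H (2 * l) ∧ m = Nat.card H.edgeSet} := by
    refine ⟨Nat.card (Sym2 (Fin n)), ?_⟩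
    rintro m ⟨H, -, rfl⟩
    exact Nat.card_le_card_of_injective
      (Subtype.val : H.edgeSet → Sym2 (Fin n)) Subtype.val_injective
  have hsup := le_csSup hbdd hmem
  calc 3 * _root_.copyCount (cycleGraph 3) G = 3 * (G.cliqueFinset 3).card := by rw [h1]
    _ ≤ (2 * l - 3) * G.edgeFinset.card := h3
    _ = (2 * l - 3) * Nat.card G.edgeSet := by rw [hedge]
    _ ≤ (2 * l - 3) * sSup {m | ∃ H : SimpleGraph (Fin n), CycleFree H (2 * l) ∧
          m = Nat.card H.edgeSet} := Nat.mul_le_mul_left _ hsup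
end

section
/- Let ℓ ≥ 2, let G be an n-vertex graph, and let X, Y ⊆ V(G) be disjoint sets such that the bipartite graph between X and Y contains no cycle of length 2ℓ. Suppose ℓ = 2 and d > n^{1/2}. Then the set Y' of vertices in Y having at least d neighbours in X satisfies |Y'| ≤ 2n/(d − n^{1/2}). -/
open SimpleGraph

theorem stmt9 {V : Type*} [Fintype V] (n : ℕ) (hn : Fintype.card V = n)
    (G : SimpleGraph V) (X Y : Set V) (hXY : Disjoint X Y)
    (hC4 : ¬ ∃ x₁ x₂ y₁ y₂, x₁ ∈ X ∧ x₂ ∈ X ∧ y₁ ∈ Y ∧ y₂ ∈ Y ∧ x₁ ≠ x₂ ∧ y₁ ≠ y₂ ∧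
      G.Adj x₁ y₁ ∧ G.Adj x₁ y₂ ∧ G.Adj x₂ y₁ ∧ G.Adj x₂ y₂)
    (d : ℝ) (hd : Real.sqrt n < d) :
    (({y ∈ Y | d ≤ ((nbhdIn G y X).ncard : ℝ)}).ncard : ℝ) ≤
      2 * n / (d - Real.sqrt n) := by
  classical
  set s := Real.sqrt n with hs_def
  have hs0 : 0 ≤ s := Real.sqrt_nonneg _
  have hss : s * s = (n : ℝ) := Real.mul_self_sqrt (by positivity)
  set Xf : Finset V := Finset.univ.filter (· ∈ X) with hXf
  set Yp : Finset V := Finset.univ.filter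
    (fun y => y ∈ Y ∧ d ≤ ((nbhdIn G y X).ncard : ℝ)) with hYpdef
  have hYset : {y ∈ Y | d ≤ ((nbhdIn G y X).ncard : ℝ)} = ↑Yp := by
    ext y; simp [hYpdef]
  rw [hYset, Set.ncard_coe_finset]
  set m := Yp.card with hm
  set f : V → ℕ := fun x => (Yp.filter (fun y => G.Adj x y)).card with hf
  set e := ∑ x ∈ Xf, f x with he
  -- degree of y into X as a finset card
  have hnb : ∀ y : V, (nbhdIn G y X).ncard = (Xf.filter (fun x => G.Adj x y)).card := by
    intro y
    have : nbhdIn G y X = ↑(Xf.filter (fun x => G.Adj x y)) := by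
      ext x
      simp [nbhdIn, hXf, adj_comm]
    rw [this, Set.ncard_coe_finset]
  -- double counting edges
  have hswap : e = ∑ y ∈ Yp, (Xf.filter (fun x => G.Adj x y)).card := by
    rw [he, hf]
    simp_rw [Finset.card_filter]
    exact Finset.sum_comm
  -- lower bound on e
  have hdm : d * m ≤ (e : ℝ) := by
    rw [hswap]
    push_cast
    calc d * m = ∑ _y ∈ Yp, d := by rw [Finset.sum_const, hm]; ring
    _ ≤ ∑ y ∈ Yp, ((Xf.filter (fun x => G.Adj x y)).card : ℝ) := by
        apply Finset.sum_le_sum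
        intro y hy
        rw [hYpdef] at hy
        simp only [Finset.mem_filter, Finset.mem_univ, true_and] at hy
        rw [← hnb y]
        exact hy.2
  -- pair sets
  set P : V → Finset (V × V) := fun x =>
    ((Yp.filter (fun y => G.Adj x y)) ×ˢ (Yp.filter (fun y => G.Adj x y))).filter
      (fun p => p.1 ≠ p.2) with hP
  have hPx : ∀ x, f x * f x ≤ (P x).card + f x := by
    intro x
    set A := Yp.filter (fun y => G.Adj x y) with hA
    have h1 : (A ×ˢ A).card = f x * f x := by rw [Finset.card_product]
    have h2 : ((A ×ˢ A).filter (fun p => p.1 = p.2)).card ≤ f x := by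
      apply Finset.card_le_card_of_injOn Prod.fst
      · intro p hp
        simp only [Finset.mem_coe, Finset.mem_filter, Finset.mem_product] at hp
        exact hp.1.1
      · intro p hp q hq h
        simp only [Finset.coe_filter, Set.mem_setOf_eq, Finset.mem_product] at hp hq
        have : p.2 = q.2 := by rw [← hp.2, ← hq.2, h]
        exact Prod.ext h this
    have h3 := Finset.card_filter_add_card_filter_not
      (s := A ×ˢ A) (p := fun p => p.1 = p.2)
    rw [h1] at h3
    have hPA : (P x).card = ((A ×ˢ A).filter (fun a => ¬a.1 = a.2)).card := rfl
    omega
  -- disjointness via C4-freeness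
  have hdisj : ∀ x₁ ∈ Xf, ∀ x₂ ∈ Xf, x₁ ≠ x₂ → Disjoint (P x₁) (P x₂) := by
    intro x₁ hx₁ x₂ hx₂ hne
    rw [Finset.disjoint_left]
    intro p hp1 hp2
    simp only [hP, Finset.mem_filter, Finset.mem_product, hYpdef, Finset.mem_univ,
      true_and] at hp1 hp2
    rw [hXf] at hx₁ hx₂
    simp only [Finset.mem_filter, Finset.mem_univ, true_and] at hx₁ hx₂
    refine hC4 ⟨x₁, x₂, p.1, p.2, ?_⟩
    tauto
  have hsumP : ∑ x ∈ Xf, (P x).card ≤ m * m := by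
    rw [← Finset.card_biUnion hdisj]
    calc (Xf.biUnion P).card ≤ (Yp ×ˢ Yp).card := by
          apply Finset.card_le_card
          intro p hp
          simp only [Finset.mem_biUnion] at hp
          obtain ⟨x, _, hpx⟩ := hp
          simp only [hP, Finset.mem_filter, Finset.mem_product] at hpx
          exact Finset.mem_product.mpr ⟨hpx.1.1.1, hpx.1.2.1⟩
      _ = m * m := by rw [Finset.card_product]
  have hsq : ∑ x ∈ Xf, f x * f x ≤ m * m + e := by
    calc ∑ x ∈ Xf, f x * f x ≤ ∑ x ∈ Xf, ((P x).card + f x) :=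
          Finset.sum_le_sum fun x _ => hPx x
      _ = (∑ x ∈ Xf, (P x).card) + e := by rw [Finset.sum_add_distrib]
      _ ≤ m * m + e := by omega
  -- Cauchy–Schwarz
  have hXcard : (Xf.card : ℝ) ≤ n := by
    have := Finset.card_le_univ Xf
    rw [hn] at this
    exact_mod_cast this
  have hcs : ((e : ℝ)) ^ 2 ≤ (n : ℝ) * ((m : ℝ) * m + e) := by
    have h1 : ((e : ℝ)) ^ 2 ≤ (Xf.card : ℝ) * ∑ x ∈ Xf, ((f x : ℝ)) ^ 2 := by
      rw [he]
      push_cast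
      exact sq_sum_le_card_mul_sum_sq
    have h2 : ∑ x ∈ Xf, ((f x : ℝ)) ^ 2 ≤ (m : ℝ) * m + e := by
      have h3 : ((∑ x ∈ Xf, f x * f x : ℕ) : ℝ) ≤ ((m * m + e : ℕ) : ℝ) := by
        exact_mod_cast hsq
      push_cast at h3
      calc ∑ x ∈ Xf, ((f x : ℝ)) ^ 2 = ∑ x ∈ Xf, ((f x : ℝ) * f x) := by
            simp [sq]
        _ ≤ (m : ℝ) * m + e := h3
    have h4 : (0:ℝ) ≤ ∑ x ∈ Xf, ((f x : ℝ)) ^ 2 :=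
      Finset.sum_nonneg fun x _ => sq_nonneg _
    calc ((e:ℝ))^2 ≤ (Xf.card : ℝ) * ∑ x ∈ Xf, ((f x : ℝ)) ^ 2 := h1
      _ ≤ (n : ℝ) * ∑ x ∈ Xf, ((f x : ℝ)) ^ 2 := by
          apply mul_le_mul_of_nonneg_right hXcard h4
      _ ≤ (n : ℝ) * ((m : ℝ) * m + e) := by
          apply mul_le_mul_of_nonneg_left h2 (by positivity)
  -- real arithmetic finish
  have hE0 : (0:ℝ) ≤ (e : ℝ) := Nat.cast_nonneg _
  have hM0 : (0:ℝ) ≤ (m : ℝ) := Nat.cast_nonneg _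
  have hn0 : (0:ℝ) ≤ (n : ℝ) := Nat.cast_nonneg _
  have hEle : (e : ℝ) ≤ n + s * m := by
    by_contra h
    push_neg at h
    have hsm : 0 ≤ s * m := mul_nonneg hs0 hM0
    nlinarith [mul_nonneg hsm hE0, mul_le_mul_of_nonneg_left (le_of_lt h) hsm]
  have hds : 0 < d - s := by linarith
  rw [le_div_iff₀ hds]
  nlinarith
end
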